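/- arXiv:2010.10582 — 5 statements merged into one kernel-verified Lean document; each statement's English description precedes it below -/
import Mathlib

section
/- Let G be a Coxeter diagram with a crystallographic Cartan matrix A and associated root system Φ. Fix elastic data (x, L_x, R_x) and let st_n denote the n-stretching operation on diagrams, Cartan matrices, root systems, and integer-valued vertex functions (replacing vertex x by a path x_0,...,x_n of unlabeled edges, with the function value at x repeated along the path). Then for every root α ∈ Φ, the stretched function st_n(α) is a root of the stretched root system st_n(Φ). -/
open Finset

section Core

variable {V : Type*} [Fintype V] [DecidableEq V]

/-- The simple root at vertex `v`, viewed as an integer-valued function on vertices. -/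
def simpleRoot (v : V) : V → ℤ := fun y => if y = v then 1 else 0

/-- The simple reflection at vertex `v` for the Cartan matrix `A`, acting on
integer-valued vertex functions. -/
def sRef (A : V → V → ℤ) (v : V) (α : V → ℤ) : V → ℤ :=
  fun y => if y = v then α v - ∑ z, A v z * α z else α y

/-- The root system associated to `A`: the closure of the simple roots under all
simple reflections. -/
inductive IsRoot (A : V → V → ℤ) : (V → ℤ) → Prop
  | simple (v : V) : IsRoot A (simpleRoot v)
  | reflect (v : V) {α : V → ℤ} : IsRoot A α → IsRoot A (sRef A v α)

/-- A positive root: a root all of whose coefficients are nonnegative. -/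
def IsPosRoot (A : V → V → ℤ) (α : V → ℤ) : Prop :=
  IsRoot A α ∧ ∀ v, 0 ≤ α v

/-- Cover relation of the root poset of Björner–Brenti: `γ = s_v β` with
`s_v β - β` a positive multiple of the simple root at `v`. -/
def Covers (A : V → V → ℤ) (β γ : V → ℤ) : Prop :=
  ∃ v, γ = sRef A v β ∧ β v < γ v

/-- The order relation of the root poset. -/
def RootLe (A : V → V → ℤ) : (V → ℤ) → (V → ℤ) → Prop :=
  Relation.ReflTransGen (Covers A)

/-- `α` admits an expression of length `k` (counting the starting simple root)
as simple reflections applied to a simple root. -/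
def HasExpr (A : V → V → ℤ) (α : V → ℤ) (k : ℕ) : Prop :=
  ∃ (v : V) (w : List V), w.length + 1 = k ∧ α = w.foldr (sRef A) (simpleRoot v)

/-- The depth of a positive root: the minimal length of an expression for it,
counting the starting simple root. -/
noncomputable def depth (A : V → V → ℤ) (α : V → ℤ) : ℕ := sInf {k | HasExpr A α k}

/-- `A` is a crystallographic Cartan matrix for a Coxeter diagram. -/
structure IsCartan (A : V → V → ℤ) : Prop where
  diag : ∀ v, A v v = 2
  offdiag : ∀ v w, v ≠ w → A v w ≤ 0
  symm_zero : ∀ v w, A v w = 0 → A w v = 0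

/-- Elastic data at the vertex `x`: a partition `L ⊔ R` of the neighbors of `x`. -/
structure IsElastic (A : V → V → ℤ) (x : V) (L R : Finset V) : Prop where
  disj : Disjoint L R
  union : ∀ y, y ∈ L ∪ R ↔ y ≠ x ∧ A x y ≠ 0

/-- The vertex set of the `n`-stretched diagram: `x` is replaced by the
path `x_0, …, x_n`, all other vertices kept. -/
abbrev StV (V : Type*) [DecidableEq V] (x : V) (n : ℕ) := {y : V // y ≠ x} ⊕ Fin (n + 1)

/-- The `n`-stretched Cartan matrix. -/
def stA (A : V → V → ℤ) (x : V) (L R : Finset V) (n : ℕ) :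
    StV V x n → StV V x n → ℤ := fun v w =>
  match v, w with
  | Sum.inl y, Sum.inl z => A y.1 z.1
  | Sum.inl y, Sum.inr i =>
      if (i = 0 ∧ y.1 ∈ L) ∨ (i = Fin.last n ∧ y.1 ∈ R) then A y.1 x else 0
  | Sum.inr i, Sum.inl y =>
      if (i = 0 ∧ y.1 ∈ L) ∨ (i = Fin.last n ∧ y.1 ∈ R) then A x y.1 else 0
  | Sum.inr i, Sum.inr j =>
      if i = j then 2 else if (i : ℕ) + 1 = (j : ℕ) ∨ (j : ℕ) + 1 = (i : ℕ) then -1 else 0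

/-- The `n`-stretch of an integer-valued vertex function: the value at `x` is
repeated along the stretched path. -/
def stRoot (x : V) (n : ℕ) (α : V → ℤ) : StV V x n → ℤ := fun v =>
  match v with
  | Sum.inl y => α y.1
  | Sum.inr _ => α x

end Core
section Aux

variable {V : Type*} [Fintype V] [DecidableEq V]

/-- A function on the stretched vertex set given by `g` on old vertices and `f` on the path. -/
def pathFun (x : V) (n : ℕ) (g : V → ℤ) (f : ℕ → ℤ) : StV V x n → ℤ
  | Sum.inl y => g y.1
  | Sum.inr i => f i.1

/-- Intermediate state of the ascending sweep. -/
def Pf (c sl a : ℤ) (n k : ℕ) : ℕ → ℤ := fun i => if i ≤ k then (if i = n then c else -sl) else a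

/-- Intermediate state of the descending sweep. -/
def Df (c sl : ℤ) (k : ℕ) : ℕ → ℤ := fun i => if k ≤ i then c else -sl

/-- Intermediate state of the sweep building the long path root. -/
def Ef (k : ℕ) : ℕ → ℤ := fun i => if i ≤ k then 1 else 0

lemma sum_sub_of_mem (x : V) (S : Finset V) (hS : ∀ y ∈ S, y ≠ x) (h : V → ℤ) :
    (∑ y : {y : V // y ≠ x}, if y.1 ∈ S then h y.1 else 0) = ∑ y ∈ S, h y := by
  rw [← Finset.sum_subtype (Finset.univ.erase x) (p := fun y => y ≠ x)
      (fun a => by simp) (fun y => if y ∈ S then h y else 0)]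
  rw [Finset.sum_ite_mem, Finset.inter_eq_right.mpr
      (fun y hy => Finset.mem_erase.mpr ⟨hS y hy, Finset.mem_univ y⟩)]

lemma sum_if_pred (n : ℕ) (f : ℕ → ℤ) (k : Fin (n+1)) :
    (∑ j : Fin (n+1), (if (j:ℕ)+1 = (k:ℕ) then (-1:ℤ) else 0) * f (j:ℕ))
      = if 0 < (k:ℕ) then -f ((k:ℕ)-1) else 0 := by
  have hk := k.isLt
  split
  · next h =>
    rw [Finset.sum_eq_single (⟨(k:ℕ)-1, by omega⟩ : Fin (n+1))]
    · show (if ((k:ℕ)-1)+1 = (k:ℕ) then (-1:ℤ) else 0) * f ((k:ℕ)-1) = -f ((k:ℕ)-1)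
      rw [if_pos (by omega)]; ring
    · intro b _ hb
      have hc : ¬((b:ℕ)+1 = (k:ℕ)) := fun hc => hb (Fin.ext (show (b:ℕ) = (k:ℕ)-1 by omega))
      rw [if_neg hc, zero_mul]
    · simp
  · next h =>
    apply Finset.sum_eq_zero
    intro j _
    rw [if_neg (by omega), zero_mul]

lemma sum_if_succ (n : ℕ) (f : ℕ → ℤ) (k : Fin (n+1)) :
    (∑ j : Fin (n+1), (if (k:ℕ)+1 = (j:ℕ) then (-1:ℤ) else 0) * f (j:ℕ))
      = if (k:ℕ) < n then -f ((k:ℕ)+1) else 0 := by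
  have hk := k.isLt
  split
  · next h =>
    rw [Finset.sum_eq_single (⟨(k:ℕ)+1, by omega⟩ : Fin (n+1))]
    · show (if (k:ℕ)+1 = (k:ℕ)+1 then (-1:ℤ) else 0) * f ((k:ℕ)+1) = -f ((k:ℕ)+1)
      rw [if_pos rfl]; ring
    · intro b _ hb
      have hc : ¬((k:ℕ)+1 = (b:ℕ)) := fun hc => hb (Fin.ext (show (b:ℕ) = (k:ℕ)+1 by omega))
      rw [if_neg hc, zero_mul]
    · simp
  · next h =>
    apply Finset.sum_eq_zero
    intro j _
    have hj := j.isLt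
    rw [if_neg (by omega), zero_mul]

lemma stA_sum_inr (A : V → V → ℤ) (x : V) (L R : Finset V) (hE : IsElastic A x L R)
    (n : ℕ) (g : V → ℤ) (f : ℕ → ℤ) (k : Fin (n+1)) :
    (∑ w, stA A x L R n (Sum.inr k) w * pathFun x n g f w)
      = ((if (k:ℕ) = 0 then ∑ y ∈ L, A x y * g y else 0)
      + (if (k:ℕ) = n then ∑ y ∈ R, A x y * g y else 0))
      + (2 * f (k:ℕ)
      + ((if 0 < (k:ℕ) then -f ((k:ℕ)-1) else 0)
      + (if (k:ℕ) < n then -f ((k:ℕ)+1) else 0))) := by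
  have hL : ∀ y ∈ L, y ≠ x := fun y hy => ((hE.union y).mp (Finset.mem_union_left _ hy)).1
  have hR : ∀ y ∈ R, y ≠ x := fun y hy => ((hE.union y).mp (Finset.mem_union_right _ hy)).1
  have hd : ∀ y : V, y ∈ L → y ∈ R → False :=
    fun y h1 h2 => (Finset.disjoint_left.mp hE.disj h1) h2
  have hk0 : (k = 0) ↔ ((k:ℕ) = 0) := by rw [Fin.ext_iff]; simp
  have hkl : (k = Fin.last n) ↔ ((k:ℕ) = n) := by rw [Fin.ext_iff]; simp
  rw [Fintype.sum_sum_type]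
  have h1 : (∑ y : {y : V // y ≠ x}, stA A x L R n (Sum.inr k) (Sum.inl y) * pathFun x n g f (Sum.inl y))
      = (if (k:ℕ) = 0 then ∑ y ∈ L, A x y * g y else 0)
      + (if (k:ℕ) = n then ∑ y ∈ R, A x y * g y else 0) := by
    have key : ∀ y : {y : V // y ≠ x}, stA A x L R n (Sum.inr k) (Sum.inl y) * pathFun x n g f (Sum.inl y)
        = (if (k:ℕ) = 0 then (if y.1 ∈ L then A x y.1 * g y.1 else 0) else 0)
        + (if (k:ℕ) = n then (if y.1 ∈ R then A x y.1 * g y.1 else 0) else 0) := by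
      intro y
      show (if (k = 0 ∧ y.1 ∈ L) ∨ (k = Fin.last n ∧ y.1 ∈ R) then A x y.1 else 0) * g y.1 = _
      by_cases e1 : y.1 ∈ L
      · by_cases e2 : y.1 ∈ R
        · exact (hd y.1 e1 e2).elim
        · by_cases e3 : (k:ℕ) = 0 <;> by_cases e4 : (k:ℕ) = n <;>
            simp [e1, e2, e3, e4, hk0, hkl]
      · by_cases e2 : y.1 ∈ R <;> by_cases e3 : (k:ℕ) = 0 <;> by_cases e4 : (k:ℕ) = n <;>
          simp [e1, e2, e3, e4, hk0, hkl]
    rw [Finset.sum_congr rfl (fun y _ => key y), Finset.sum_add_distrib]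
    congr 1
    · by_cases e3 : (k:ℕ) = 0
      · simp only [if_pos e3]
        exact sum_sub_of_mem x L hL (fun y => A x y * g y)
      · simp only [if_neg e3, Finset.sum_const_zero]
    · by_cases e4 : (k:ℕ) = n
      · simp only [if_pos e4]
        exact sum_sub_of_mem x R hR (fun y => A x y * g y)
      · simp only [if_neg e4, Finset.sum_const_zero]
  have h2 : (∑ j : Fin (n+1), stA A x L R n (Sum.inr k) (Sum.inr j) * pathFun x n g f (Sum.inr j))
      = 2 * f (k:ℕ)
      + ((if 0 < (k:ℕ) then -f ((k:ℕ)-1) else 0)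
      + (if (k:ℕ) < n then -f ((k:ℕ)+1) else 0)) := by
    have key : ∀ j : Fin (n+1), stA A x L R n (Sum.inr k) (Sum.inr j)
        = (if j = k then 2 else 0)
        + ((if (j:ℕ)+1 = (k:ℕ) then -1 else 0) + (if (k:ℕ)+1 = (j:ℕ) then -1 else 0)) := by
      intro j
      show (if k = j then 2 else if (k:ℕ)+1 = (j:ℕ) ∨ (j:ℕ)+1 = (k:ℕ) then -1 else 0) = _
      simp only [Fin.ext_iff]
      split_ifs <;> omega
    calc (∑ j : Fin (n+1), stA A x L R n (Sum.inr k) (Sum.inr j) * pathFun x n g f (Sum.inr j))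
        = ∑ j : Fin (n+1), ((if j = k then 2 * f (j:ℕ) else 0)
            + ((if (j:ℕ)+1 = (k:ℕ) then (-1:ℤ) else 0) * f (j:ℕ)
            + (if (k:ℕ)+1 = (j:ℕ) then (-1:ℤ) else 0) * f (j:ℕ))) := by
          refine Finset.sum_congr rfl (fun j _ => ?_)
          rw [key j]
          show (_ + _) * f (j:ℕ) = _
          rw [add_mul, add_mul, ite_mul, zero_mul]
      _ = _ := by
          rw [Finset.sum_add_distrib, Finset.sum_add_distrib,
            Finset.sum_ite_eq' Finset.univ k (fun j => 2 * f (j:ℕ)), if_pos (Finset.mem_univ k),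
            sum_if_pred, sum_if_succ]
  rw [h1, h2]

lemma sRef_path (A : V → V → ℤ) (x : V) (L R : Finset V) (hE : IsElastic A x L R)
    (n : ℕ) (g : V → ℤ) (f : ℕ → ℤ) (k : Fin (n+1)) :
    sRef (stA A x L R n) (Sum.inr k) (pathFun x n g f)
      = pathFun x n g (fun i => if i = (k:ℕ) then
          f (k:ℕ) - (((if (k:ℕ) = 0 then ∑ y ∈ L, A x y * g y else 0)
            + (if (k:ℕ) = n then ∑ y ∈ R, A x y * g y else 0))
            + (2 * f (k:ℕ)
            + ((if 0 < (k:ℕ) then -f ((k:ℕ)-1) else 0)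
            + (if (k:ℕ) < n then -f ((k:ℕ)+1) else 0))))
          else f i) := by
  funext w
  cases w with
  | inl y => simp [sRef, pathFun]
  | inr j =>
    by_cases h : j = k
    · subst h
      show (if (Sum.inr j : StV V x n) = Sum.inr j then _ else _) = _
      rw [if_pos rfl, stA_sum_inr A x L R hE n g f j]
      show _ = (if (j:ℕ) = (j:ℕ) then _ else _)
      rw [if_pos rfl]
      rfl
    · have hne : (j:ℕ) ≠ (k:ℕ) := fun hc => h (Fin.ext hc)
      show (if (Sum.inr j : StV V x n) = Sum.inr k then _ else _) = _
      rw [if_neg (by simp [h])]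
      show pathFun x n g f (Sum.inr j) = (if (j:ℕ) = (k:ℕ) then _ else _)
      rw [if_neg hne]
      rfl

lemma sum_A_x (A : V → V → ℤ) (hA : IsCartan A) (x : V) (L R : Finset V)
    (hE : IsElastic A x L R) (g : V → ℤ) :
    (∑ z, A x z * g z) = 2 * g x + (∑ y ∈ L, A x y * g y) + (∑ y ∈ R, A x y * g y) := by
  have h1 : (∑ z, A x z * g z) = A x x * g x + ∑ z ∈ Finset.univ.erase x, A x z * g z :=
    (Finset.add_sum_erase _ _ (Finset.mem_univ x)).symm
  have h2 : (∑ z ∈ Finset.univ.erase x, A x z * g z) = ∑ z ∈ L ∪ R, A x z * g z := by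
    refine (Finset.sum_subset ?_ ?_).symm
    · intro z hz
      exact Finset.mem_erase.mpr ⟨((hE.union z).mp hz).1, Finset.mem_univ z⟩
    · intro z hz hz2
      have hz0 : A x z = 0 := by
        by_contra hne
        exact hz2 ((hE.union z).mpr ⟨(Finset.mem_erase.mp hz).1, hne⟩)
      rw [hz0, zero_mul]
  rw [h1, h2, Finset.sum_union hE.disj, hA.diag]
  ring

end Aux
section Chains

variable {V : Type*} [Fintype V] [DecidableEq V]

lemma pathFun_const (x : V) (n : ℕ) (g : V → ℤ) :
    stRoot x n g = pathFun x n g (fun _ => g x) := by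
  funext w; cases w <;> rfl

lemma chainP0 (A : V → V → ℤ) (x : V) (L R : Finset V) (hE : IsElastic A x L R)
    (n : ℕ) (g : V → ℤ) (a sl sr c : ℤ)
    (hsl : (∑ y ∈ L, A x y * g y) = sl) (hsr : (∑ y ∈ R, A x y * g y) = sr)
    (ha : g x = a) (hc : c = -a - sl - sr) :
    sRef (stA A x L R n) (Sum.inr ⟨0, Nat.succ_pos n⟩) (pathFun x n g (fun _ => a))
      = pathFun x n g (Pf c sl a n 0) := by
  rw [sRef_path A x L R hE n g _ ⟨0, Nat.succ_pos n⟩]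
  funext w
  cases w with
  | inl y => rfl
  | inr j =>
    have hj := j.isLt
    show (if (j:ℕ) = 0 then _ else _) = Pf c sl a n 0 (j:ℕ)
    rw [hsl, hsr]
    have hv : ((⟨0, Nat.succ_pos n⟩ : Fin (n+1)) : ℕ) = 0 := rfl
    simp only [hv, Pf]
    by_cases hjk : (j:ℕ) = 0
    · rw [if_pos hjk, hjk]
      split_ifs <;> omega
    · rw [if_neg hjk]
      split_ifs <;> omega

lemma chainPstep (A : V → V → ℤ) (x : V) (L R : Finset V) (hE : IsElastic A x L R)
    (n : ℕ) (g : V → ℤ) (a sl sr c : ℤ)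
    (hsl : (∑ y ∈ L, A x y * g y) = sl) (hsr : (∑ y ∈ R, A x y * g y) = sr)
    (ha : g x = a) (hc : c = -a - sl - sr) (k : ℕ) (hk : k < n) :
    sRef (stA A x L R n) (Sum.inr ⟨k+1, by omega⟩) (pathFun x n g (Pf c sl a n k))
      = pathFun x n g (Pf c sl a n (k+1)) := by
  rw [sRef_path A x L R hE n g _ ⟨k+1, by omega⟩]
  funext w
  cases w with
  | inl y => rfl
  | inr j =>
    have hj := j.isLt
    show (if (j:ℕ) = k+1 then _ else _) = Pf c sl a n (k+1) (j:ℕ)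
    rw [hsl, hsr]
    have hv : ((⟨k+1, by omega⟩ : Fin (n+1)) : ℕ) = k+1 := rfl
    simp only [hv, Pf, Nat.add_sub_cancel]
    by_cases hjk : (j:ℕ) = k+1
    · rw [if_pos hjk, hjk]
      rw [if_neg (show ¬(k+1 ≤ k) by omega), if_neg (show ¬(k+1 = 0) by omega),
          if_pos (show 0 < k+1 by omega), if_pos (le_refl k), if_neg (Nat.ne_of_lt hk),
          if_neg (show ¬(k+1+1 ≤ k) by omega), if_pos (le_refl (k+1))]
      by_cases hn : k+1 = n
      · rw [if_pos hn, if_pos hn, if_neg (show ¬(k+1 < n) by omega)]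
        omega
      · rw [if_neg hn, if_neg hn, if_pos (show k+1 < n by omega)]
        omega
    · rw [if_neg hjk]
      by_cases hh : (j:ℕ) ≤ k
      · rw [if_pos hh, if_pos (show (j:ℕ) ≤ k+1 by omega)]
      · rw [if_neg hh, if_neg (show ¬((j:ℕ) ≤ k+1) by omega)]

lemma chainPD (x : V) (n : ℕ) (g : V → ℤ) (a sl c : ℤ) :
    pathFun x n g (Pf c sl a n n) = pathFun x n g (Df c sl n) := by
  funext w
  cases w with
  | inl y => rfl
  | inr j =>
    have hj := j.isLt
    show Pf c sl a n n (j:ℕ) = Df c sl n (j:ℕ)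
    simp only [Pf, Df]
    split_ifs <;> omega

lemma chainDstep (A : V → V → ℤ) (x : V) (L R : Finset V) (hE : IsElastic A x L R)
    (n : ℕ) (g : V → ℤ) (a sl sr c : ℤ)
    (hsl : (∑ y ∈ L, A x y * g y) = sl) (hsr : (∑ y ∈ R, A x y * g y) = sr)
    (ha : g x = a) (hc : c = -a - sl - sr) (k : ℕ) (hk : k < n) :
    sRef (stA A x L R n) (Sum.inr ⟨k, by omega⟩) (pathFun x n g (Df c sl (k+1)))
      = pathFun x n g (Df c sl k) := by
  rw [sRef_path A x L R hE n g _ ⟨k, by omega⟩]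
  funext w
  cases w with
  | inl y => rfl
  | inr j =>
    have hj := j.isLt
    show (if (j:ℕ) = k then _ else _) = Df c sl k (j:ℕ)
    rw [hsl, hsr]
    have hv : ((⟨k, by omega⟩ : Fin (n+1)) : ℕ) = k := rfl
    simp only [hv, Df]
    by_cases hjk : (j:ℕ) = k
    · rw [if_pos hjk, hjk]
      split_ifs <;> omega
    · rw [if_neg hjk]
      split_ifs <;> omega

lemma chainD0 (A : V → V → ℤ) (hA : IsCartan A) (x : V) (L R : Finset V)
    (hE : IsElastic A x L R) (n : ℕ) (g : V → ℤ) (a sl sr c : ℤ)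
    (hsl : (∑ y ∈ L, A x y * g y) = sl) (hsr : (∑ y ∈ R, A x y * g y) = sr)
    (ha : g x = a) (hc : c = -a - sl - sr) :
    pathFun x n g (Df c sl 0) = stRoot x n (sRef A x g) := by
  funext w
  cases w with
  | inl y =>
    show g y.1 = sRef A x g y.1
    rw [sRef, if_neg y.2]
  | inr j =>
    show Df c sl 0 (j:ℕ) = sRef A x g x
    rw [sRef, if_pos rfl, sum_A_x A hA x L R hE g, hsl, hsr, ha]
    simp only [Df]
    rw [if_pos (Nat.zero_le _)]
    omega

lemma chainE0 (x : V) (n : ℕ) :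
    simpleRoot (Sum.inr ⟨0, Nat.succ_pos n⟩ : StV V x n)
      = pathFun x n (fun _ => 0) (Ef 0) := by
  funext w
  cases w with
  | inl y =>
    show (if (Sum.inl y : StV V x n) = Sum.inr ⟨0, Nat.succ_pos n⟩ then (1:ℤ) else 0) = 0
    rw [if_neg (by simp)]
  | inr j =>
    show (if (Sum.inr j : StV V x n) = Sum.inr ⟨0, Nat.succ_pos n⟩ then (1:ℤ) else 0) = Ef 0 (j:ℕ)
    simp only [Ef, Sum.inr.injEq, Fin.ext_iff]
    split_ifs <;> omega

lemma chainEstep (A : V → V → ℤ) (x : V) (L R : Finset V) (hE : IsElastic A x L R)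
    (n : ℕ) (k : ℕ) (hk : k < n) :
    sRef (stA A x L R n) (Sum.inr ⟨k+1, by omega⟩) (pathFun x n (fun _ => 0) (Ef k))
      = pathFun x n (fun _ => 0) (Ef (k+1)) := by
  rw [sRef_path A x L R hE n (fun _ => 0) _ ⟨k+1, by omega⟩]
  funext w
  cases w with
  | inl y => rfl
  | inr j =>
    have hj := j.isLt
    show (if (j:ℕ) = k+1 then _ else _) = Ef (k+1) (j:ℕ)
    have hv : ((⟨k+1, by omega⟩ : Fin (n+1)) : ℕ) = k+1 := rfl
    simp only [hv, Ef, mul_zero, Finset.sum_const_zero, Nat.add_sub_cancel]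
    by_cases hjk : (j:ℕ) = k+1
    · rw [if_pos hjk, hjk]
      split_ifs <;> omega
    · rw [if_neg hjk]
      split_ifs <;> omega

lemma chainEend (x : V) (n : ℕ) :
    pathFun x n (fun _ => (0:ℤ)) (Ef n) = stRoot x n (simpleRoot x) := by
  funext w
  cases w with
  | inl y =>
    show (0:ℤ) = simpleRoot x y.1
    rw [simpleRoot]
    simp [y.2]
  | inr j =>
    have hj := j.isLt
    have hjn : (j:ℕ) ≤ n := by omega
    show Ef n (j:ℕ) = simpleRoot x x
    simp [Ef, simpleRoot, hjn]

lemma stretch_simple_x (A : V → V → ℤ) (x : V) (L R : Finset V)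
    (hE : IsElastic A x L R) (n : ℕ) :
    IsRoot (stA A x L R n) (stRoot x n (simpleRoot x)) := by
  have step : ∀ k, k ≤ n → IsRoot (stA A x L R n) (pathFun x n (fun _ => (0:ℤ)) (Ef k)) := by
    intro k
    induction k with
    | zero =>
      intro _
      rw [← chainE0 x n]
      exact IsRoot.simple _
    | succ k IH =>
      intro hk
      rw [← chainEstep A x L R hE n k (by omega)]
      exact IsRoot.reflect _ (IH (by omega))
  rw [← chainEend x n]
  exact step n le_rfl

lemma stretch_sRef_x (A : V → V → ℤ) (hA : IsCartan A) (x : V) (L R : Finset V)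
    (hE : IsElastic A x L R) (n : ℕ) (g : V → ℤ)
    (h : IsRoot (stA A x L R n) (stRoot x n g)) :
    IsRoot (stA A x L R n) (stRoot x n (sRef A x g)) := by
  set sl := ∑ y ∈ L, A x y * g y with hsl
  set sr := ∑ y ∈ R, A x y * g y with hsr
  set a := g x with ha
  set c := -a - sl - sr with hc
  have hP : ∀ k, k ≤ n → IsRoot (stA A x L R n) (pathFun x n g (Pf c sl a n k)) := by
    intro k
    induction k with
    | zero =>
      intro _
      rw [← chainP0 A x L R hE n g a sl sr c hsl.symm hsr.symm ha.symm hc]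
      refine IsRoot.reflect _ ?_
      have hh := h
      rw [pathFun_const x n g] at hh
      exact hh
    | succ k IH =>
      intro hk
      rw [← chainPstep A x L R hE n g a sl sr c hsl.symm hsr.symm ha.symm hc k (by omega)]
      exact IsRoot.reflect _ (IH (by omega))
  have hD : ∀ m, IsRoot (stA A x L R n) (pathFun x n g (Df c sl (n - m))) := by
    intro m
    induction m with
    | zero =>
      rw [Nat.sub_zero, ← chainPD x n g a sl c]
      exact hP n le_rfl
    | succ m IH =>
      by_cases hm : n ≤ m
      · rw [show n - (m+1) = n - m by omega]
        exact IH
      · have h1 : n - (m+1) < n := by omega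
        have h2 : n - (m+1) + 1 = n - m := by omega
        have := chainDstep A x L R hE n g a sl sr c hsl.symm hsr.symm ha.symm hc (n - (m+1)) h1
        rw [h2] at this
        rw [← this]
        exact IsRoot.reflect _ IH
  have := hD n
  rw [Nat.sub_self] at this
  rwa [chainD0 A hA x L R hE n g a sl sr c hsl.symm hsr.symm ha.symm hc] at this

lemma stretch_sRef_ne (A : V → V → ℤ) (hA : IsCartan A) (x : V) (L R : Finset V)
    (hE : IsElastic A x L R) (n : ℕ) (v : V) (hv : v ≠ x) (g : V → ℤ) :
    stRoot x n (sRef A v g) = sRef (stA A x L R n) (Sum.inl ⟨v, hv⟩) (stRoot x n g) := by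
  have hd : ∀ y : V, y ∈ L → y ∈ R → False :=
    fun y h1 h2 => (Finset.disjoint_left.mp hE.disj h1) h2
  funext w
  cases w with
  | inr j =>
    show sRef A v g x = (if (Sum.inr j : StV V x n) = Sum.inl ⟨v, hv⟩ then _ else stRoot x n g (Sum.inr j))
    rw [if_neg (by simp), sRef, if_neg (Ne.symm hv)]
    rfl
  | inl y =>
    by_cases h : y.1 = v
    · have hy : y = ⟨v, hv⟩ := Subtype.ext h
      subst hy
      show sRef A v g v = (if (Sum.inl (⟨v, hv⟩ : {y : V // y ≠ x}) : StV V x n) = Sum.inl ⟨v, hv⟩ then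
        stRoot x n g (Sum.inl ⟨v, hv⟩) - ∑ w, stA A x L R n (Sum.inl ⟨v, hv⟩) w * stRoot x n g w
        else _)
      rw [if_pos rfl, sRef, if_pos rfl]
      have hsum : (∑ w, stA A x L R n (Sum.inl ⟨v, hv⟩) w * stRoot x n g w) = ∑ z, A v z * g z := by
        rw [Fintype.sum_sum_type]
        have h1 : (∑ y' : {y : V // y ≠ x}, stA A x L R n (Sum.inl ⟨v, hv⟩) (Sum.inl y') * stRoot x n g (Sum.inl y'))
            = ∑ z ∈ Finset.univ.erase x, A v z * g z := by
          rw [Finset.sum_subtype (Finset.univ.erase x) (p := fun y => y ≠ x)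
            (fun a => by simp) (fun z => A v z * g z)]
          rfl
        have h2 : (∑ i : Fin (n+1), stA A x L R n (Sum.inl ⟨v, hv⟩) (Sum.inr i) * stRoot x n g (Sum.inr i))
            = A v x * g x := by
          have hterm : ∀ i : Fin (n+1), stA A x L R n (Sum.inl ⟨v, hv⟩) (Sum.inr i) * stRoot x n g (Sum.inr i)
              = (if (i = 0 ∧ v ∈ L) ∨ (i = Fin.last n ∧ v ∈ R) then A v x else 0) * g x := fun i => rfl
          rw [Finset.sum_congr rfl (fun i _ => hterm i)]
          by_cases hL : v ∈ L
          · have hR : v ∉ R := fun hR => hd v hL hR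
            have : ∀ i : Fin (n+1), ((i = 0 ∧ v ∈ L) ∨ (i = Fin.last n ∧ v ∈ R)) ↔ i = 0 := by
              intro i; simp [hL, hR]
            simp only [this]
            rw [show (∑ i : Fin (n+1), (if i = 0 then A v x else 0) * g x)
                = ∑ i : Fin (n+1), (if i = (0 : Fin (n+1)) then A v x * g x else 0) from
              Finset.sum_congr rfl (fun i _ => by split_ifs <;> simp)]
            rw [Finset.sum_ite_eq' Finset.univ (0 : Fin (n+1)) (fun _ => A v x * g x)]
            simp
          · by_cases hR : v ∈ R
            · have : ∀ i : Fin (n+1), ((i = 0 ∧ v ∈ L) ∨ (i = Fin.last n ∧ v ∈ R)) ↔ i = Fin.last n := by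
                intro i; simp [hL, hR]
              simp only [this]
              rw [show (∑ i : Fin (n+1), (if i = Fin.last n then A v x else 0) * g x)
                  = ∑ i : Fin (n+1), (if i = Fin.last n then A v x * g x else 0) from
                Finset.sum_congr rfl (fun i _ => by split_ifs <;> simp)]
              rw [Finset.sum_ite_eq' Finset.univ (Fin.last n) (fun _ => A v x * g x)]
              simp
            · have hAxv : A x v = 0 := by
                by_contra hne
                have : v ∈ L ∪ R := (hE.union v).mpr ⟨hv, hne⟩
                rcases Finset.mem_union.mp this with h' | h'
                · exact hL h'
                · exact hR h'
              have hAvx : A v x = 0 := hA.symm_zero x v hAxv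
              rw [hAvx]
              simp
        rw [h1, h2, Finset.sum_erase_add Finset.univ (fun z => A v z * g z) (Finset.mem_univ x)]
      rw [hsum]
      rfl
    · show sRef A v g y.1 = (if (Sum.inl y : StV V x n) = Sum.inl ⟨v, hv⟩ then _ else stRoot x n g (Sum.inl y))
      rw [if_neg (by simp [Subtype.ext_iff, h]), sRef, if_neg h]
      rfl

end Chains

/-- stretching a root of `Φ` gives a root of the stretched root system. -/
theorem stretch_of_root {V : Type*} [Fintype V] [DecidableEq V]
    (A : V → V → ℤ) (hA : IsCartan A) (x : V) (L R : Finset V)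
    (hE : IsElastic A x L R) (n : ℕ) (α : V → ℤ) (hα : IsRoot A α) :
    IsRoot (stA A x L R n) (stRoot x n α) := by
  induction hα with
  | simple v =>
    by_cases hv : v = x
    · rw [hv]
      exact stretch_simple_x A x L R hE n
    · have h : stRoot x n (simpleRoot v) = simpleRoot (Sum.inl ⟨v, hv⟩ : StV V x n) := by
        funext w
        cases w with
        | inl y =>
          show (if y.1 = v then (1:ℤ) else 0)
            = (if (Sum.inl y : StV V x n) = Sum.inl ⟨v, hv⟩ then 1 else 0)
          simp [Subtype.ext_iff]
        | inr j =>
          show (if x = v then (1:ℤ) else 0)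
            = (if (Sum.inr j : StV V x n) = Sum.inl ⟨v, hv⟩ then 1 else 0)
          rw [if_neg (Ne.symm hv), if_neg (by simp)]
      rw [h]
      exact IsRoot.simple _
  | @reflect v β hβ ih =>
    by_cases hv : v = x
    · rw [hv]
      exact stretch_sRef_x A hA x L R hE n β ih
    · rw [stretch_sRef_ne A hA x L R hE n v hv β]
      exact IsRoot.reflect _ ih
end

section
/- In the root poset of st_n(Φ), for any root α of Φ we have the identity st_n(s_x(α)) = s_{x_0} s_{x_1} ⋯ s_{x_n} s_{x_{n-1}} ⋯ s_{x_1} s_{x_0}(st_n(α)) = s_{x_n} s_{x_{n-1}} ⋯ s_{x_0} s_{x_1} ⋯ s_{x_{n-1}} s_{x_n}(st_n(α)). -/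
open Finset

open Fin.NatCast

set_option linter.unusedSectionVars false
set_option maxHeartbeats 1000000

section Aux

variable {V : Type*} [Fintype V] [DecidableEq V]

def cS (A : V → V → ℤ) (x : V) (α : V → ℤ) (S : Finset V) : ℤ :=
  ∑ y : {y : V // y ≠ x}, if y.1 ∈ S then A x y.1 * α y.1 else 0

def st8 (x : V) (n : ℕ) (α : V → ℤ) (g : ℕ → ℤ) : StV V x n → ℤ := fun v =>
  match v with
  | Sum.inl y => α y.1
  | Sum.inr i => g i.1

lemma st8_congr (x : V) (n : ℕ) (α : V → ℤ) {g g' : ℕ → ℤ}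
    (h : ∀ m, m ≤ n → g m = g' m) : st8 x n α g = st8 x n α g' := by
  funext v
  cases v with
  | inl y => rfl
  | inr i => exact h i.1 (by omega)

lemma sum_fin_eq {n : ℕ} (m : ℕ) (f : Fin (n+1) → ℤ) :
    ∑ j : Fin (n+1), (if (j : ℕ) = m then f j else 0)
      = if h : m < n + 1 then f ⟨m, h⟩ else 0 := by
  split_ifs with h
  · rw [Finset.sum_eq_single (⟨m, h⟩ : Fin (n+1))]
    · simp
    · intro j _ hj
      rw [if_neg]
      simpa [Fin.ext_iff] using hj
    · simp
  · refine Finset.sum_eq_zero fun j _ => if_neg ?_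
    have := j.isLt; omega

end Aux

set_option linter.unusedSectionVars false

section Aux2
variable {V : Type*} [Fintype V] [DecidableEq V]

lemma sum_ite_const {β : Type*} [Fintype β] (c : Prop) [Decidable c] (f : β → ℤ) :
    ∑ y : β, (if c then f y else 0) = if c then ∑ y : β, f y else 0 := by
  split_ifs <;> simp

lemma rowsum (A : V → V → ℤ) (x : V) (L R : Finset V) (hLR : Disjoint L R) (n : ℕ)
    (α : V → ℤ) (g : ℕ → ℤ) (i : Fin (n+1)) :
    ∑ z, stA A x L R n (Sum.inr i) z * st8 x n α g z
      = (if (i : ℕ) = 0 then cS A x α L else 0) + (if (i : ℕ) = n then cS A x α R else 0)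
        + 2 * g i - (if (i : ℕ) + 1 ≤ n then g ((i : ℕ) + 1) else 0)
        - (if 1 ≤ (i : ℕ) then g ((i : ℕ) - 1) else 0) := by
  rw [Fintype.sum_sum_type]
  have hi0 : (i = 0) ↔ ((i : ℕ) = 0) := by rw [Fin.ext_iff]; simp
  have hil : (i = Fin.last n) ↔ ((i : ℕ) = n) := by rw [Fin.ext_iff]; simp
  have h1 : ∑ y : {y : V // y ≠ x}, stA A x L R n (Sum.inr i) (Sum.inl y) * st8 x n α g (Sum.inl y)
      = (if (i : ℕ) = 0 then cS A x α L else 0) + (if (i : ℕ) = n then cS A x α R else 0) := by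
    have key : ∀ y : {y : V // y ≠ x},
        stA A x L R n (Sum.inr i) (Sum.inl y) * st8 x n α g (Sum.inl y)
          = (if (i : ℕ) = 0 then (if y.1 ∈ L then A x y.1 * α y.1 else 0) else 0)
            + (if (i : ℕ) = n then (if y.1 ∈ R then A x y.1 * α y.1 else 0) else 0) := by
      intro y
      by_cases hL : y.1 ∈ L <;> by_cases hR : y.1 ∈ R
      · exact absurd hR (Finset.disjoint_left.mp hLR hL)
      all_goals
        simp only [stA, st8, hi0, hil, hL, hR, and_true, and_false, false_or, or_false,
          or_self, if_false]
      all_goals split_ifs <;> first | ring1 | (exfalso; omega)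
    rw [Finset.sum_congr rfl fun y _ => key y, Finset.sum_add_distrib,
      sum_ite_const, sum_ite_const]
    rfl
  have h2 : ∑ j : Fin (n+1), stA A x L R n (Sum.inr i) (Sum.inr j) * st8 x n α g (Sum.inr j)
      = 2 * g i - (if (i : ℕ) + 1 ≤ n then g ((i : ℕ) + 1) else 0)
        - (if 1 ≤ (i : ℕ) then g ((i : ℕ) - 1) else 0) := by
    have key : ∀ j : Fin (n+1), stA A x L R n (Sum.inr i) (Sum.inr j) * st8 x n α g (Sum.inr j)
        = ((if (j : ℕ) = (i : ℕ) then 2 * g (j : ℕ) else 0)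
          + (if (j : ℕ) = (i : ℕ) + 1 then -g (j : ℕ) else 0))
          + (if (j : ℕ) + 1 = (i : ℕ) then -g (j : ℕ) else 0) := by
      intro j
      have hij : (i = j) ↔ ((i : ℕ) = (j : ℕ)) := Fin.ext_iff
      simp only [stA, st8, hij]
      split_ifs <;> first | ring1 | (exfalso; omega)
    rw [Finset.sum_congr rfl fun j _ => key j]
    rw [Finset.sum_add_distrib, Finset.sum_add_distrib]
    have e1 : ∑ j : Fin (n+1), (if (j : ℕ) = (i : ℕ) then 2 * g (j : ℕ) else 0) = 2 * g (i : ℕ) := by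
      rw [sum_fin_eq]
      simp [i.isLt]
    have e2 : ∑ j : Fin (n+1), (if (j : ℕ) = (i : ℕ) + 1 then -g (j : ℕ) else 0)
        = -(if (i : ℕ) + 1 ≤ n then g ((i : ℕ) + 1) else 0) := by
      rw [sum_fin_eq]
      split_ifs <;> first | (exfalso; omega) | simp
    have e3 : ∑ j : Fin (n+1), (if (j : ℕ) + 1 = (i : ℕ) then -g (j : ℕ) else 0)
        = -(if 1 ≤ (i : ℕ) then g ((i : ℕ) - 1) else 0) := by
      have key3 : ∀ j : Fin (n+1), (if (j : ℕ) + 1 = (i : ℕ) then -g (j : ℕ) else 0)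
          = (if (j : ℕ) = (i : ℕ) - 1 then (if 1 ≤ (i : ℕ) then -g (j : ℕ) else 0) else 0) := by
        intro j
        split_ifs <;> first | rfl | (exfalso; omega)
      rw [Finset.sum_congr rfl fun j _ => key3 j, sum_fin_eq]
      have := i.isLt
      split_ifs <;> first | (exfalso; omega) | simp
    rw [e1, e2, e3]
    ring
  rw [h1, h2]
  ring
end Aux2

section Aux3
variable {V : Type*} [Fintype V] [DecidableEq V]

lemma sRef_st8 (A : V → V → ℤ) (x : V) (L R : Finset V) (hLR : Disjoint L R) (n : ℕ)
    (α : V → ℤ) (g : ℕ → ℤ) (i : Fin (n+1)) :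
    sRef (stA A x L R n) (Sum.inr i) (st8 x n α g)
      = st8 x n α (fun m => if m = (i : ℕ) then
          g (i : ℕ) - ((if (i : ℕ) = 0 then cS A x α L else 0)
            + (if (i : ℕ) = n then cS A x α R else 0)
            + 2 * g (i : ℕ) - (if (i : ℕ) + 1 ≤ n then g ((i : ℕ) + 1) else 0)
            - (if 1 ≤ (i : ℕ) then g ((i : ℕ) - 1) else 0))
          else g m) := by
  funext v
  rw [sRef, rowsum A x L R hLR n α g i]
  cases v with
  | inl y => simp [st8]
  | inr j =>
    by_cases h : j = i
    · subst h
      simp [st8]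
    · have : (j : ℕ) ≠ (i : ℕ) := fun hh => h (Fin.ext hh)
      simp [st8, h, this]
end Aux3

section Aux4
variable {V : Type*} [Fintype V] [DecidableEq V]

lemma sweep_up (A : V → V → ℤ) (x : V) (L R : Finset V) (hLR : Disjoint L R) (n : ℕ)
    (α : V → ℤ) :
    ∀ k, k ≤ n →
      List.foldr (sRef (stA A x L R n)) (st8 x n α (fun _ => α x))
        (((List.range k).reverse).map (fun m : ℕ => (Sum.inr ((Nat.cast m : Fin (n+1))) : StV V x n)))
      = st8 x n α (fun m => if m < k then -(cS A x α L) else α x) := by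
  intro k
  induction k with
  | zero => intro _; simp
  | succ k ih =>
    intro hk
    rw [List.range_succ, List.reverse_append]
    simp only [List.reverse_singleton, List.singleton_append, List.map_cons, List.foldr_cons]
    rw [ih (by omega), sRef_st8 A x L R hLR n α _ ((k : Fin (n+1)))]
    have hkv : (((k : Fin (n+1))) : ℕ) = k := Fin.val_cast_of_lt (by omega)
    rw [hkv]
    apply st8_congr
    intro m hm
    split_ifs <;> first | ring1 | (exfalso; omega)
end Aux4

section Aux5
variable {V : Type*} [Fintype V] [DecidableEq V]

lemma sweep_down (A : V → V → ℤ) (x : V) (L R : Finset V) (hLR : Disjoint L R) (n : ℕ)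
    (α : V → ℤ) :
    ∀ d, d ≤ n + 1 → 1 ≤ d →
      List.foldr (sRef (stA A x L R n))
          (st8 x n α (fun m => if m < n then -(cS A x α L) else α x))
          ((List.range' (n+1-d) d).map
            (fun m : ℕ => (Sum.inr ((Nat.cast m : Fin (n+1))) : StV V x n)))
      = st8 x n α (fun m => if n+1-d ≤ m then (-(α x) - cS A x α L - cS A x α R)
          else -(cS A x α L)) := by
  intro d
  induction d with
  | zero => omega
  | succ d ih =>
    intro hd _
    rw [List.range'_succ, List.map_cons, List.foldr_cons]
    rcases Nat.eq_zero_or_pos d with h0 | h1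
    · subst h0
      simp only [List.range', List.map_nil, List.foldr_nil]
      rw [sRef_st8 A x L R hLR n α _ ((Nat.cast (n+1-1) : Fin (n+1)))]
      have hkv : ((Nat.cast (n+1-1) : Fin (n+1)) : ℕ) = n := by
        rw [Fin.val_cast_of_lt (by omega)]
        omega
      apply st8_congr
      intro m hm
      simp only [hkv]
      split_ifs <;> first | ring1 | (exfalso; omega)
    · have hrec : n + 1 - (d+1) + 1 = n + 1 - d := by omega
      have hrw : List.range' (n+1-(d+1)+1) d = List.range' (n+1-d) d := by rw [hrec]
      rw [hrw, ih (by omega) h1]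
      rw [sRef_st8 A x L R hLR n α _ ((Nat.cast (n+1-(d+1)) : Fin (n+1)))]
      have hkv : ((Nat.cast (n+1-(d+1)) : Fin (n+1)) : ℕ) = n + 1 - (d+1) := by
        rw [Fin.val_cast_of_lt (by omega)]
      apply st8_congr
      intro m hm
      simp only [hkv]
      split_ifs <;> first | ring1 | (exfalso; omega)
end Aux5

section Aux6
variable {V : Type*} [Fintype V] [DecidableEq V]

lemma sum_A_eq (A : V → V → ℤ) (hA : IsCartan A) (x : V) (L R : Finset V)
    (hE : IsElastic A x L R) (α : V → ℤ) :
    ∑ z, A x z * α z = 2 * α x + cS A x α L + cS A x α R := by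
  rw [← Finset.add_sum_erase (Finset.univ : Finset V) (fun z => A x z * α z) (Finset.mem_univ x)]
  have hsub : ∑ z ∈ (Finset.univ : Finset V).erase x, A x z * α z
      = ∑ y : {y : V // y ≠ x}, A x y.1 * α y.1 := by
    apply Finset.sum_subtype
    intro y
    simp
  rw [hsub, hA.diag x]
  have : ∑ y : {y : V // y ≠ x}, A x y.1 * α y.1 = cS A x α L + cS A x α R := by
    rw [cS, cS, ← Finset.sum_add_distrib]
    refine Finset.sum_congr rfl fun y _ => ?_
    by_cases hL : y.1 ∈ L <;> by_cases hR : y.1 ∈ R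
    · exact absurd hR (Finset.disjoint_left.mp hE.disj hL)
    · simp [hL, hR]
    · simp [hL, hR]
    · have hy : y.1 ∉ L ∪ R := by simp [hL, hR]
      have := hE.union y.1
      have hA0 : A x y.1 = 0 := by
        by_contra hne
        exact hy (this.mpr ⟨y.2, hne⟩)
      simp [hL, hR, hA0]
  rw [this]
  ring

lemma finRange_eq (n : ℕ) :
    List.finRange (n+1) = (List.range (n+1)).map (fun m : ℕ => (Nat.cast m : Fin (n+1))) := by
  apply List.ext_getElem
  · simp
  · intro i h1 h2
    simp only [List.getElem_map, List.getElem_range, List.getElem_finRange, Fin.ext_iff, Fin.cast_mk]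
    simp only [List.length_finRange] at h1
    rw [Fin.val_cast_of_lt h1]

lemma main_word1 (A : V → V → ℤ) (hA : IsCartan A) (x : V) (L R : Finset V)
    (hE : IsElastic A x L R) (n : ℕ) (α : V → ℤ) :
    stRoot x n (sRef A x α) =
      (((List.finRange (n+1)).map Sum.inr ++
        ((List.finRange (n+1)).reverse.tail).map Sum.inr : List (StV V x n)).foldr
          (sRef (stA A x L R n)) (stRoot x n α)) := by
  have hβ : (stRoot x n α : StV V x n → ℤ) = st8 x n α (fun _ => α x) := by
    funext v; cases v <;> rfl
  rw [List.foldr_append, hβ]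
  have hrt : (List.finRange (n+1)).reverse.tail
      = ((List.range n).reverse).map (fun m : ℕ => (Nat.cast m : Fin (n+1))) := by
    rw [finRange_eq, ← List.map_reverse, List.range_succ, List.reverse_append]
    simp
  rw [hrt, List.map_map]
  have h1 : (List.map (Sum.inr ∘ fun m : ℕ => (Nat.cast m : Fin (n+1))) (List.range n).reverse
      : List (StV V x n))
      = (List.range n).reverse.map (fun m : ℕ => (Sum.inr ((Nat.cast m : Fin (n+1))) : StV V x n)) := rfl
  rw [h1, sweep_up A x L R hE.disj n α n le_rfl]
  have hfr : (List.finRange (n+1)) = (List.range' 0 (n+1)).map (fun m : ℕ => (Nat.cast m : Fin (n+1))) := by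
    rw [finRange_eq, List.range_eq_range']
  rw [hfr, List.map_map]
  have h2 : (List.map (Sum.inr ∘ fun m : ℕ => (Nat.cast m : Fin (n+1))) (List.range' 0 (n+1))
      : List (StV V x n))
      = (List.range' (n+1-(n+1)) (n+1)).map (fun m : ℕ => (Sum.inr ((Nat.cast m : Fin (n+1))) : StV V x n)) := by
    norm_num
  rw [h2, sweep_down A x L R hE.disj n α (n+1) le_rfl (by omega)]
  funext v
  cases v with
  | inl y => simp [stRoot, st8, sRef, y.2]
  | inr i =>
    show (sRef A x α) x = _
    rw [sRef, if_pos rfl, sum_A_eq A hA x L R hE α]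
    simp only [st8]
    rw [if_pos (by omega)]
    ring
end Aux6

section Aux7
variable {V : Type*} [Fintype V] [DecidableEq V]

lemma stA_rev (A : V → V → ℤ) (x : V) (L R : Finset V) (n : ℕ) (v w : StV V x n) :
    stA A x R L n (Sum.map id Fin.rev v) (Sum.map id Fin.rev w) = stA A x L R n v w := by
  have h0 : ∀ i : Fin (n+1), (Fin.rev i = 0) ↔ (i = Fin.last n) := by
    intro i
    rw [Fin.ext_iff, Fin.ext_iff]
    have := i.isLt
    simp only [Fin.val_rev, Fin.val_zero, Fin.val_last]
    omega
  have hl : ∀ i : Fin (n+1), (Fin.rev i = Fin.last n) ↔ (i = 0) := by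
    intro i
    rw [Fin.ext_iff, Fin.ext_iff]
    have := i.isLt
    simp only [Fin.val_rev, Fin.val_zero, Fin.val_last]
    omega
  cases v with
  | inl y =>
    cases w with
    | inl z => rfl
    | inr j =>
      simp only [stA, Sum.map, id]
      exact if_congr (by rw [h0 j, hl j]; tauto) rfl rfl
  | inr i =>
    cases w with
    | inl z =>
      simp only [stA, Sum.map, id]
      exact if_congr (by rw [h0 i, hl i]; tauto) rfl rfl
    | inr j =>
      simp only [stA, Sum.map, id]
      have hb1 := i.isLt
      have hb2 := j.isLt
      have h1 : (Fin.rev i = Fin.rev j) ↔ (i = j) := Fin.rev_inj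
      have h2 : ((Fin.rev i : ℕ) + 1 = (Fin.rev j : ℕ) ∨ (Fin.rev j : ℕ) + 1 = (Fin.rev i : ℕ))
          ↔ ((i : ℕ) + 1 = (j : ℕ) ∨ (j : ℕ) + 1 = (i : ℕ)) := by
        simp only [Fin.val_rev]
        omega
      exact if_congr h1 rfl (if_congr h2 rfl rfl)

lemma sRef_conj (A : V → V → ℤ) (x : V) (L R : Finset V) (n : ℕ)
    (a : StV V x n) (γ : StV V x n → ℤ) :
    sRef (stA A x L R n) a (fun v => γ (Sum.map id Fin.rev v))
      = fun v => sRef (stA A x R L n) (Sum.map id Fin.rev a) γ (Sum.map id Fin.rev v) := by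
  have hinj : Function.Injective
      (Sum.map (id : {y : V // y ≠ x} → {y : V // y ≠ x}) (Fin.rev : Fin (n+1) → Fin (n+1))) :=
    Sum.map_injective.mpr ⟨fun _ _ h => h, fun _ _ h => Fin.rev_inj.mp h⟩
  funext w
  rw [sRef, sRef]
  have hcond : (w = a) ↔ (Sum.map id Fin.rev w = Sum.map id Fin.rev a) :=
    ⟨fun h => by rw [h], fun h => hinj h⟩
  have hsum : ∑ z, stA A x L R n a z * γ (Sum.map id Fin.rev z)
      = ∑ z, stA A x R L n (Sum.map id Fin.rev a) z * γ z := by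
    rw [← Equiv.sum_comp (Equiv.sumCongr (Equiv.refl {y : V // y ≠ x}) (Fin.revPerm))
      (fun z => stA A x R L n (Sum.map id Fin.rev a) z * γ z)]
    refine Finset.sum_congr rfl fun z _ => ?_
    have hz : (Equiv.sumCongr (Equiv.refl {y : V // y ≠ x}) (Fin.revPerm)) z
        = Sum.map id Fin.rev z := by cases z <;> rfl
    rw [hz, stA_rev]
  rw [hsum]
  split_ifs with hc1 hc2 hc2
  · rfl
  · exact absurd (hcond.mp hc1) hc2
  · exact absurd (hcond.mpr hc2) hc1
  · rfl

lemma foldr_conj (A : V → V → ℤ) (x : V) (L R : Finset V) (n : ℕ)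
    (l : List (StV V x n)) (γ : StV V x n → ℤ) :
    List.foldr (sRef (stA A x L R n)) (fun v => γ (Sum.map id Fin.rev v)) l
      = fun v => List.foldr (sRef (stA A x R L n)) γ (l.map (Sum.map id Fin.rev))
          (Sum.map id Fin.rev v) := by
  induction l with
  | nil => rfl
  | cons a t ih =>
    rw [List.foldr_cons, ih, sRef_conj, List.map_cons, List.foldr_cons]

lemma map_rev_finRange (n : ℕ) :
    (List.finRange (n+1)).map Fin.rev = (List.finRange (n+1)).reverse := by
  apply List.ext_getElem
  · simp
  · intro i h1 h2
    rw [List.getElem_reverse]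
    simp only [List.getElem_map, List.getElem_finRange, List.length_reverse,
      List.length_finRange, Fin.ext_iff, Fin.val_rev, Fin.cast_mk]
    simp only [List.length_map, List.length_finRange] at h1
    omega
end Aux7


/-- the stretch of `s_x α` is obtained from the stretch of `α` by
applying `s_{x_0} s_{x_1} ⋯ s_{x_n} s_{x_{n-1}} ⋯ s_{x_0}`, or equivalently
`s_{x_n} s_{x_{n-1}} ⋯ s_{x_0} s_{x_1} ⋯ s_{x_n}`. -/
theorem stretch_reflection_words {V : Type*} [Fintype V] [DecidableEq V]
    (A : V → V → ℤ) (hA : IsCartan A) (x : V) (L R : Finset V)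
    (hE : IsElastic A x L R) (n : ℕ) (α : V → ℤ) (hα : IsRoot A α) :
    stRoot x n (sRef A x α) =
      (((List.finRange (n+1)).map Sum.inr ++
        ((List.finRange (n+1)).reverse.tail).map Sum.inr : List (StV V x n)).foldr
          (sRef (stA A x L R n)) (stRoot x n α)) ∧
    stRoot x n (sRef A x α) =
      (((List.finRange (n+1)).reverse.map Sum.inr ++
        ((List.finRange (n+1)).tail).map Sum.inr : List (StV V x n)).foldr
          (sRef (stA A x L R n)) (stRoot x n α)) := by
  constructor
  · exact main_word1 A hA x L R hE n α
  · have hE' : IsElastic A x R L :=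
      ⟨hE.disj.symm, fun y => by rw [Finset.union_comm]; exact hE.union y⟩
    have h1 := main_word1 A hA x R L hE' n α
    have hγ : (stRoot x n α : StV V x n → ℤ)
        = fun v => stRoot x n α (Sum.map id Fin.rev v) := by
      funext v; cases v <;> rfl
    rw [hγ, foldr_conj]
    have hlist : ((((List.finRange (n+1)).reverse.map Sum.inr
          ++ ((List.finRange (n+1)).tail).map Sum.inr) : List (StV V x n)).map
            (Sum.map id Fin.rev))
        = (((List.finRange (n+1)).map Sum.inr
          ++ ((List.finRange (n+1)).reverse.tail).map Sum.inr) : List (StV V x n)) := by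
      rw [List.map_append, List.map_map, List.map_map]
      have e1 : ((Sum.map (id : {y : V // y ≠ x} → {y : V // y ≠ x}) Fin.rev)
          ∘ (Sum.inr : Fin (n+1) → StV V x n)) = Sum.inr ∘ Fin.rev := rfl
      rw [e1]
      have e2 : ∀ l : List (Fin (n+1)),
          l.map ((Sum.inr : Fin (n+1) → StV V x n) ∘ Fin.rev)
            = (l.map Fin.rev).map Sum.inr := by
        intro l; rw [List.map_map]
      rw [e2, e2, List.map_reverse, map_rev_finRange, List.reverse_reverse]
      have e3 : (List.finRange (n+1)).tail.map Fin.rev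
          = ((List.finRange (n+1)).map Fin.rev).tail := by
        rw [List.map_tail]
      rw [e3, map_rev_finRange]
    rw [hlist, ← h1]
    funext v; cases v <;> rfl
end

section
/- For a symbol alphabet, define a 'pattern' to be an expression a_1^{e_1} ⋯ a_k^{e_k} where no two consecutive a_i are equal and each exponent e_i is either a fixed positive integer m_i (matching exactly m_i copies) or '≥ m_i' (matching at least m_i copies), with the '≥' exponents occurring on a consecutive block of indices. Then the intersection of the languages defined by two such patterns is either empty, a single word, or the language of another such pattern. -/
/-- A pattern `a_1^{e_1} ⋯ a_k^{e_k}`: a list of blocks `(aᵢ, mᵢ, bᵢ)`, where `bᵢ = true`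
means the exponent is `≥ mᵢ` and `bᵢ = false` means exactly `mᵢ`; no two consecutive
symbols are equal, each `mᵢ` is positive, and the `≥` exponents occur on a consecutive
block of indices. -/
structure Pattern (α : Type*) where
  blocks : List (α × ℕ × Bool)
  pos : ∀ b ∈ blocks, 0 < b.2.1
  consec_ne : blocks.Chain' (fun b c => b.1 ≠ c.1)
  geq_consecutive : ∃ r s : ℕ, ∀ i (h : i < blocks.length),
    (blocks.get ⟨i, h⟩).2.2 = true ↔ r ≤ i ∧ i < s

/-- A word matches a pattern if it is the concatenation of a block of copies of `a₁`,
then of `a₂`, etc., where the number of copies of `aᵢ` is exactly `mᵢ` (exact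
exponent) or at least `mᵢ` (`≥` exponent). -/
def Pattern.Matches {α : Type*} (p : Pattern α) (w : List α) : Prop :=
  ∃ counts : List ℕ, counts.length = p.blocks.length ∧
    (∀ i (h : i < p.blocks.length),
      if (p.blocks.get ⟨i, h⟩).2.2 = true then
        (p.blocks.get ⟨i, h⟩).2.1 ≤ counts.getD i 0
      else counts.getD i 0 = (p.blocks.get ⟨i, h⟩).2.1) ∧
    w = (p.blocks.zip counts).flatMap fun bc => List.replicate bc.2 bc.1.1

namespace PatternInter
variable {α : Type*}

def flat (l : List (α × ℕ)) : List α := l.flatMap fun sc => List.replicate sc.2 sc.1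

lemma flat_nil : flat ([] : List (α × ℕ)) = [] := rfl

lemma flat_cons (a : α) (n : ℕ) (t : List (α × ℕ)) :
    flat ((a, n) :: t) = List.replicate n a ++ flat t := rfl

lemma repl_aux (a : α) : ∀ m n (u v : List α), u.head? ≠ some a → v.head? ≠ some a →
    List.replicate m a ++ u = List.replicate n a ++ v → m = n ∧ u = v := by
  intro m
  induction m with
  | zero =>
    intro n u v hu hv h
    cases n with
    | zero => simpa using h
    | succ n =>
      exfalso
      rw [List.replicate_succ] at h
      simp at h
      apply hu
      rw [h]
      rfl
  | succ m ih =>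
    intro n u v hu hv h
    cases n with
    | zero =>
      exfalso
      rw [List.replicate_succ] at h
      simp at h
      apply hv
      rw [← h]
      rfl
    | succ n =>
      rw [List.replicate_succ, List.replicate_succ] at h
      simp only [List.cons_append, List.cons.injEq] at h
      obtain ⟨he, hrest⟩ := ih n u v hu hv h.2
      exact ⟨by omega, hrest⟩

lemma flat_head?_ne (a : α) (t : List (α × ℕ)) (hpos : ∀ x ∈ t, 0 < x.2)
    (hne : ∀ x, t.head? = some x → x.1 ≠ a) : (flat t).head? ≠ some a := by
  cases t with
  | nil => simp [flat_nil]
  | cons c t' =>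
    obtain ⟨c1, k⟩ := c
    have hk : 0 < k := hpos _ List.mem_cons_self
    obtain ⟨k', rfl⟩ := Nat.exists_eq_succ_of_ne_zero hk.ne'
    rw [flat_cons, List.replicate_succ]
    simp only [List.cons_append, List.head?_cons, Option.some.injEq]
    intro h
    exact hne (c1, k' + 1) rfl (Option.some.inj h)

lemma flat_uniq : ∀ (l₁ l₂ : List (α × ℕ)),
    (∀ x ∈ l₁, 0 < x.2) → (∀ x ∈ l₂, 0 < x.2) →
    l₁.Chain' (fun b c => b.1 ≠ c.1) → l₂.Chain' (fun b c => b.1 ≠ c.1) →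
    flat l₁ = flat l₂ → l₁ = l₂ := by
  intro l₁
  induction l₁ with
  | nil =>
    intro l₂ _ h2 _ _ hf
    cases l₂ with
    | nil => rfl
    | cons b t =>
      exfalso
      obtain ⟨b1, n⟩ := b
      have hn : 0 < n := h2 _ List.mem_cons_self
      obtain ⟨n', rfl⟩ := Nat.exists_eq_succ_of_ne_zero hn.ne'
      rw [flat_nil, flat_cons, List.replicate_succ] at hf
      simp at hf
  | cons a t ih =>
    intro l₂ h1 h2 hc1 hc2 hf
    cases l₂ with
    | nil =>
      exfalso
      obtain ⟨a1, m⟩ := a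
      have hm : 0 < m := h1 _ List.mem_cons_self
      obtain ⟨m', rfl⟩ := Nat.exists_eq_succ_of_ne_zero hm.ne'
      rw [flat_nil, flat_cons, List.replicate_succ] at hf
      simp at hf
    | cons b t₂ =>
      obtain ⟨a1, m⟩ := a
      obtain ⟨b1, n⟩ := b
      have hm : 0 < m := h1 _ List.mem_cons_self
      have hn : 0 < n := h2 _ List.mem_cons_self
      rw [flat_cons, flat_cons] at hf
      have hab : a1 = b1 := by
        obtain ⟨m', rfl⟩ := Nat.exists_eq_succ_of_ne_zero hm.ne'
        obtain ⟨n', rfl⟩ := Nat.exists_eq_succ_of_ne_zero hn.ne'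
        rw [List.replicate_succ, List.replicate_succ] at hf
        simpa using congrArg List.head? hf
      subst hab
      have ht1 : (flat t).head? ≠ some a1 := by
        apply flat_head?_ne _ _ (fun x hx => h1 x (List.mem_cons_of_mem _ hx))
        intro x hx
        cases t with
        | nil => simp at hx
        | cons c t' =>
          simp only [List.head?_cons, Option.some.injEq] at hx
          subst hx
          exact fun h => (List.isChain_cons_cons.mp hc1).1 h.symm
      have ht2 : (flat t₂).head? ≠ some a1 := by
        apply flat_head?_ne _ _ (fun x hx => h2 x (List.mem_cons_of_mem _ hx))
        intro x hx
        cases t₂ with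
        | nil => simp at hx
        | cons c t' =>
          simp only [List.head?_cons, Option.some.injEq] at hx
          subst hx
          exact fun h => (List.isChain_cons_cons.mp hc2).1 h.symm
      obtain ⟨hmn, hft⟩ := repl_aux a1 m n (flat t) (flat t₂) ht1 ht2 hf
      subst hmn
      have := ih t₂ (fun x hx => h1 x (List.mem_cons_of_mem _ hx))
        (fun x hx => h2 x (List.mem_cons_of_mem _ hx)) hc1.tail hc2.tail hft
      rw [this]

/-- the (symbol, count) list of a pattern with given counts -/
def L (p : Pattern α) (c : List ℕ) : List (α × ℕ) :=
  (p.blocks.zip c).map fun bc => (bc.1.1, bc.2)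

lemma L_length (p : Pattern α) (c : List ℕ) (h : c.length = p.blocks.length) :
    (L p c).length = p.blocks.length := by
  simp [L, h]

lemma L_getElem (p : Pattern α) (c : List ℕ) (i : ℕ) (h1 : i < p.blocks.length)
    (h2 : i < c.length) (h3 : i < (L p c).length) :
    (L p c)[i]'h3 = ((p.blocks.get ⟨i, h1⟩).1, c.get ⟨i, h2⟩) := by
  simp [L]

lemma L_map_fst (p : Pattern α) (c : List ℕ) (h : c.length = p.blocks.length) :
    (L p c).map Prod.fst = p.blocks.map Prod.fst := by
  apply List.ext_getElem
  · simp [L, h]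
  · intro i h1 h2
    simp [L]

lemma L_map_snd (p : Pattern α) (c : List ℕ) (h : c.length = p.blocks.length) :
    (L p c).map Prod.snd = c := by
  apply List.ext_getElem
  · simp [L, h]
  · intro i h1 h2
    simp [L]

lemma flat_L (p : Pattern α) (c : List ℕ) :
    flat (L p c) = (p.blocks.zip c).flatMap fun bc => List.replicate bc.2 bc.1.1 := by
  simp only [flat, L, List.flatMap_map]

/-- the constraint of one block -/
def Cond (b : α × ℕ × Bool) (x : ℕ) : Prop :=
  if b.2.2 = true then b.2.1 ≤ x else x = b.2.1

/-- restated matching -/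
lemma matches_iff (p : Pattern α) (w : List α) :
    p.Matches w ↔ ∃ counts : List ℕ, counts.length = p.blocks.length ∧
      (∀ i (h : i < p.blocks.length), Cond (p.blocks[i]) (counts.getD i 0)) ∧
      w = flat (L p counts) := by
  unfold Pattern.Matches
  refine exists_congr fun c => and_congr_right fun hlen => and_congr ?_ ?_
  · unfold Cond
    constructor <;> · intro h i hi; simpa using h i hi
  · rw [flat_L]

lemma counts_pos (p : Pattern α) (c : List ℕ) (hlen : c.length = p.blocks.length)
    (hcond : ∀ i (h : i < p.blocks.length), Cond (p.blocks[i]) (c.getD i 0)) :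
    ∀ i, i < p.blocks.length → 0 < c.getD i 0 := by
  intro i h
  have hpos := p.pos _ (List.getElem_mem h)
  have := hcond i h
  unfold Cond at this
  split at this <;> omega

lemma L_pos (p : Pattern α) (c : List ℕ) (hlen : c.length = p.blocks.length)
    (hpos : ∀ i, i < p.blocks.length → 0 < c.getD i 0) :
    ∀ x ∈ L p c, 0 < x.2 := by
  intro x hx
  rw [List.mem_iff_getElem] at hx
  obtain ⟨i, hi, rfl⟩ := hx
  have hi2 : i < p.blocks.length := by rw [L_length p c hlen] at hi; exact hi
  have hi3 : i < c.length := by omega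
  rw [L_getElem p c i hi2 hi3 hi]
  have := hpos i hi2
  rwa [List.getD_eq_getElem c 0 hi3] at this

lemma L_chain (p : Pattern α) (c : List ℕ) (hlen : c.length = p.blocks.length) :
    (L p c).Chain' (fun b c => b.1 ≠ c.1) := by
  have h1 : (p.blocks.map Prod.fst).Chain' Ne := (List.isChain_map _).mpr p.consec_ne
  rw [← L_map_fst p c hlen] at h1
  exact (List.isChain_map _).mp h1

/-- uniqueness of the decomposition -/
lemma uniq (p q : Pattern α) (cp cq : List ℕ)
    (hlp : cp.length = p.blocks.length) (hlq : cq.length = q.blocks.length)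
    (hposp : ∀ i, i < p.blocks.length → 0 < cp.getD i 0)
    (hposq : ∀ i, i < q.blocks.length → 0 < cq.getD i 0)
    (h : flat (L p cp) = flat (L q cq)) :
    p.blocks.map Prod.fst = q.blocks.map Prod.fst ∧ cp = cq := by
  have key := flat_uniq (L p cp) (L q cq) (L_pos p cp hlp hposp) (L_pos q cq hlq hposq)
    (L_chain p cp hlp) (L_chain q cq hlq) h
  constructor
  · rw [← L_map_fst p cp hlp, ← L_map_fst q cq hlq, key]
  · rw [← L_map_snd p cp hlp, ← L_map_snd q cq hlq, key]

lemma L_congr (p r : Pattern α) (hfst : p.blocks.map Prod.fst = r.blocks.map Prod.fst)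
    (c : List ℕ) : L p c = L r c := by
  have hlen : r.blocks.length = p.blocks.length := by
    have := congrArg List.length hfst; simpa using this.symm
  apply List.ext_getElem
  · simp [L, hlen]
  · intro i h1 h2
    simp only [L, List.getElem_map, List.getElem_zip]
    have hi : i < p.blocks.length := by simp [L] at h1; omega
    have hfi := congrArg (fun l => l.getD i p.blocks[i].1) hfst
    beta_reduce at hfi
    rw [List.getD_eq_getElem _ _ (by simpa using hi), List.getD_eq_getElem _ _ (by simp; omega)] at hfi
    simp only [List.getElem_map] at hfi
    simp [hfi]

/-- if the blockwise constraints of `r` are the conjunctions of those of `p` and `q`,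
and all three have the same symbols, then the language of `r` is the intersection -/
lemma inter_eq (p q r : Pattern α)
    (hfp : r.blocks.map Prod.fst = p.blocks.map Prod.fst)
    (hfq : r.blocks.map Prod.fst = q.blocks.map Prod.fst)
    (hlp : p.blocks.length = r.blocks.length)
    (hlq : q.blocks.length = r.blocks.length)
    (hiff : ∀ i (hi : i < r.blocks.length) (x : ℕ),
      Cond (r.blocks[i]) x ↔
        Cond (p.blocks[i]'(by omega)) x ∧ Cond (q.blocks[i]'(by omega)) x) :
    {w | p.Matches w} ∩ {w | q.Matches w} = {w | r.Matches w} := by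
  ext w
  simp only [Set.mem_inter_iff, Set.mem_setOf_eq]
  rw [matches_iff, matches_iff, matches_iff]
  constructor
  · rintro ⟨⟨c, hlc, hc, hwc⟩, ⟨d, hld, hd, hwd⟩⟩
    obtain ⟨-, hcd⟩ := uniq p q c d hlc hld (counts_pos p c hlc hc)
      (counts_pos q d hld hd) (hwc.symm.trans hwd)
    subst hcd
    refine ⟨c, by omega, fun i hi => ?_, ?_⟩
    · exact (hiff i hi _).mpr ⟨hc i (by omega), hd i (by omega)⟩
    · rw [hwc, L_congr p r (hfp.symm)]
  · rintro ⟨c, hlc, hc, hwc⟩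
    refine ⟨⟨c, by omega, fun i hi => ((hiff i (by omega) _).mp (hc i (by omega))).1, ?_⟩,
      ⟨c, by omega, fun i hi => ((hiff i (by omega) _).mp (hc i (by omega))).2, ?_⟩⟩
    · rw [hwc, L_congr r p hfp]
    · rw [hwc, L_congr r q hfq]


end PatternInter

/-- the intersection of the languages of two patterns is empty, a
single word, or the language of another pattern. -/
theorem pattern_inter {α : Type*} (p q : Pattern α) :
    ({w | p.Matches w} ∩ {w | q.Matches w} = ∅) ∨
    (∃ w, {w | p.Matches w} ∩ {w | q.Matches w} = {w}) ∨
    (∃ r : Pattern α, {w | p.Matches w} ∩ {w | q.Matches w} = {w | r.Matches w}) := by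
  open PatternInter in
  classical
  rcases Set.eq_empty_or_nonempty ({w | p.Matches w} ∩ {w | q.Matches w}) with he | hne
  · left; exact he
  right; right
  obtain ⟨w₀, hp₀, hq₀⟩ := hne
  obtain ⟨c₀, hl₀, hcp₀, hw₀⟩ := (matches_iff p w₀).mp hp₀
  obtain ⟨d₀, hl₀', hcq₀, hw₀'⟩ := (matches_iff q w₀).mp hq₀
  obtain ⟨hfst, hcd⟩ := uniq p q c₀ d₀ hl₀ hl₀' (counts_pos p c₀ hl₀ hcp₀)
    (counts_pos q d₀ hl₀' hcq₀) (hw₀.symm.trans hw₀')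
  subst hcd
  have hk : q.blocks.length = p.blocks.length := by
    have := congrArg List.length hfst; simpa using this.symm
  -- the combined pattern's blocks
  set comb : (α × ℕ × Bool) → (α × ℕ × Bool) → (α × ℕ × Bool) := fun x y =>
    (x.1, (if x.2.2 then (if y.2.2 then max x.2.1 y.2.1 else y.2.1) else x.2.1),
      x.2.2 && y.2.2) with hcomb
  set rb : List (α × ℕ × Bool) := List.zipWith comb p.blocks q.blocks with hrb
  have hrlen : rb.length = p.blocks.length := by simp [hrb, hk]
  have hrget : ∀ i (h : i < p.blocks.length),
      rb[i]'(by omega) = comb (p.blocks[i]'h) (q.blocks[i]'(by omega)) := by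
    intro i h
    simp [hrb]
  -- same symbols as p
  have hrfst : rb.map Prod.fst = p.blocks.map Prod.fst := by
    apply List.ext_getElem
    · simp [hrlen]
    · intro i h1 h2
      have hi : i < p.blocks.length := by simpa [hrlen] using h1
      simp only [List.getElem_map]
      rw [hrget i hi]
  -- the three structure fields
  have hpos : ∀ b ∈ rb, 0 < b.2.1 := by
    intro b hb
    rw [List.mem_iff_getElem] at hb
    obtain ⟨i, hi, rfl⟩ := hb
    have h : i < p.blocks.length := by omega
    rw [hrget i h]
    have hp1 := p.pos _ (List.getElem_mem h)
    have hq1 := q.pos _ (List.getElem_mem (show i < q.blocks.length by omega))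
    simp only [hcomb]
    split <;> [skip; omega]
    split <;> omega
  have hchain : rb.Chain' (fun b c => b.1 ≠ c.1) := by
    have h1 : (p.blocks.map Prod.fst).Chain' Ne := (List.isChain_map _).mpr p.consec_ne
    rw [← hrfst] at h1
    exact (List.isChain_map _).mp h1
  have hgeq : ∃ r s : ℕ, ∀ i (h : i < rb.length),
      (rb.get ⟨i, h⟩).2.2 = true ↔ r ≤ i ∧ i < s := by
    obtain ⟨rp, sp, hp⟩ := p.geq_consecutive
    obtain ⟨rq, sq, hq⟩ := q.geq_consecutive
    refine ⟨max rp rq, min sp sq, fun i h => ?_⟩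
    have hip : i < p.blocks.length := by omega
    have hiq : i < q.blocks.length := by omega
    have h1 := hp i hip
    have h2 := hq i hiq
    simp only [List.get_eq_getElem] at h1 h2 ⊢
    rw [hrget i hip]
    simp only [hcomb, Bool.and_eq_true]
    rw [h1, h2]
    omega
  refine ⟨⟨rb, hpos, hchain, hgeq⟩, ?_⟩
  apply inter_eq p q ⟨rb, hpos, hchain, hgeq⟩ hrfst (hrfst.trans hfst)
    (show p.blocks.length = rb.length by omega) (show q.blocks.length = rb.length by omega)
  intro i hi x
  have hi2 : i < rb.length := hi
  have h : i < p.blocks.length := by omega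
  have h1 := hcp₀ i h
  have h2 := hcq₀ i (by omega)
  have hq1 := q.pos _ (List.getElem_mem (show i < q.blocks.length by omega))
  show Cond (rb[i]'hi) x ↔ _
  rw [hrget i h]
  unfold Cond at h1 h2 ⊢
  simp only [hcomb]
  rcases hb1 : (p.blocks[i]'h).2.2 <;>
    rcases hb2 : (q.blocks[i]'(show i < q.blocks.length by omega)).2.2 <;>
    simp only [hb1, hb2] at h1 h2 ⊢ <;> simp only [Bool.and_self, Bool.and_true,
      Bool.and_false, Bool.true_and, Bool.false_and, if_true, if_false] at h1 h2 ⊢ <;>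
    simp at h1 h2 ⊢ <;> omega
end

section
/- The directed graph P of stretching classes constructed from a positive root α is finite and acyclic. -/
open Finset

section Classes

variable {V : Type*} [Fintype V] [DecidableEq V]

/-- A stretching class: an integer-valued function on `st_m(G)` together with a
marked (asterisked) interval `[a, a+len)` of vertices on the stretched path. -/
structure SClass (V : Type*) [DecidableEq V] (x : V) where
  m : ℕ
  base : StV V x m → ℤ
  a : ℕ
  len : ℕ

/-- Validity of a stretching class: at least one asterisk, the marked interval lies
on the stretched path, and no two adjacent asterisked values are equal. -/
def SClass.Valid {x : V} (c : SClass V x) : Prop :=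
  1 ≤ c.len ∧ c.a + c.len ≤ c.m + 1 ∧
  ∀ i : ℕ, c.a ≤ i → i + 1 < c.a + c.len →
    ∀ (h1 : i < c.m + 1) (h2 : i + 1 < c.m + 1),
      c.base (Sum.inr ⟨i, h1⟩) ≠ c.base (Sum.inr ⟨i + 1, h2⟩)

/-- The list of values of a function on the stretched path `x_0, …, x_n`. -/
def pathList {x : V} {n : ℕ} (β : StV V x n → ℤ) : List ℤ :=
  (List.finRange (n + 1)).map fun i => β (Sum.inr i)

/-- Membership of a function on `st_n(G)` in a stretching class: it agrees with the
class off the stretched path and before/after the marked interval, and assumes the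
asterisked values in order, each repeated a positive number of times. -/
def MemClass {x : V} (c : SClass V x) (n : ℕ) (β : StV V x n → ℤ) : Prop :=
  (∀ y : {y : V // y ≠ x}, β (Sum.inl y) = c.base (Sum.inl y)) ∧
  ∃ counts : List ℕ, counts.length = c.len ∧ (∀ k ∈ counts, 0 < k) ∧
    pathList β = (pathList c.base).take c.a ++
      ((((pathList c.base).drop c.a).take c.len).zip counts).flatMap
        (fun vk => List.replicate vk.2 vk.1) ++
      (pathList c.base).drop (c.a + c.len)

/-- Value of a class on the stretched path, by natural-number index. -/
def pv {x : V} (c : SClass V x) (i : ℕ) : ℤ :=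
  if h : i < c.m + 1 then c.base (Sum.inr ⟨i, h⟩) else 0

/-- Value of a class at a vertex off the stretched path. -/
def offv {x : V} (c : SClass V x) (y : V) : ℤ :=
  if h : y = x then 0 else c.base (Sum.inl ⟨y, h⟩)

/-- The weighted left sum of a stretching class. -/
def wLeft (A : V → V → ℤ) {x : V} (L : Finset V) (c : SClass V x) : ℤ :=
  if c.a = 0 then ∑ y ∈ L, (-(A x y)) * offv c y else pv c (c.a - 1)

/-- The weighted right sum of a stretching class. -/
def wRight (A : V → V → ℤ) {x : V} (R : Finset V) (c : SClass V x) : ℤ :=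
  if c.a + c.len - 1 = c.m then ∑ y ∈ R, (-(A x y)) * offv c y
  else pv c (c.a + c.len)

/-- Reflecting a stretching class at a vertex (ignoring asterisks). -/
def reflC (A : V → V → ℤ) (x : V) (L R : Finset V) (c : SClass V x)
    (v : StV V x c.m) : SClass V x :=
  ⟨c.m, sRef (stA A x L R c.m) v c.base, c.a, c.len⟩

/-- Insert the value `s` at position `p` of the stretched path (lengthening the
path by one and extending the marked interval by one). -/
def insAt {x : V} (c : SClass V x) (p : ℕ) (s : ℤ) : SClass V x where
  m := c.m + 1
  base := fun v =>
    match v with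
    | Sum.inl y => c.base (Sum.inl y)
    | Sum.inr j =>
        if (j : ℕ) < p then c.base (Sum.inr ⟨min (j : ℕ) c.m, by omega⟩)
        else if (j : ℕ) = p then s
        else c.base (Sum.inr ⟨min ((j : ℕ) - 1) c.m, by omega⟩)
  a := c.a
  len := c.len + 1

/-- A vertex of a stretching class is marked (asterisked). -/
def Marked {x : V} (c : SClass V x) (v : StV V x c.m) : Prop :=
  ∃ i : Fin (c.m + 1), v = Sum.inr i ∧ c.a ≤ (i : ℕ) ∧ (i : ℕ) < c.a + c.len

/-- All coefficients of a stretching class are nonnegative. -/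
def NonnegC {x : V} (c : SClass V x) : Prop := ∀ v, 0 ≤ c.base v

/-- The arrow relation of the graph `P` of stretching classes: one of the four
operations (reflection at a non-asterisked vertex decreasing the coefficient,
reflection at an internal asterisked vertex decreasing the coefficient, insertion of
the weighted left/right sum as new endpoint when smaller than the endpoint
coefficient, reflection at an endpoint decreasing the coefficient with possible
removal of its asterisk), with operations producing negative coefficients
disallowed. -/
def Step (A : V → V → ℤ) (x : V) (L R : Finset V) (c c' : SClass V x) : Prop :=
  c.Valid ∧ c'.Valid ∧ NonnegC c' ∧
  ( (∃ v, ¬ Marked c v ∧ sRef (stA A x L R c.m) v c.base v < c.base v ∧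
      c' = reflC A x L R c v)
  ∨ (∃ i : Fin (c.m + 1), c.a < (i : ℕ) ∧ (i : ℕ) + 1 < c.a + c.len ∧
      sRef (stA A x L R c.m) (Sum.inr i) c.base (Sum.inr i) < c.base (Sum.inr i) ∧
      c' = reflC A x L R c (Sum.inr i))
  ∨ (wLeft A L c < pv c c.a ∧ c' = insAt c c.a (wLeft A L c))
  ∨ (wRight A R c < pv c (c.a + c.len - 1) ∧
      c' = insAt c (c.a + c.len) (wRight A R c))
  ∨ (∃ i : Fin (c.m + 1), (i : ℕ) = c.a ∧ 2 ≤ c.len ∧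
      sRef (stA A x L R c.m) (Sum.inr i) c.base (Sum.inr i) < c.base (Sum.inr i) ∧
      (let d := reflC A x L R c (Sum.inr i)
       c' = if pv d (c.a + 1) ≤ pv d c.a then { d with a := c.a + 1, len := c.len - 1 }
            else d))
  ∨ (∃ i : Fin (c.m + 1), (i : ℕ) = c.a + c.len - 1 ∧ 2 ≤ c.len ∧
      sRef (stA A x L R c.m) (Sum.inr i) c.base (Sum.inr i) < c.base (Sum.inr i) ∧
      (let d := reflC A x L R c (Sum.inr i)
       c' = if pv d (c.a + c.len - 2) ≤ pv d (c.a + c.len - 1) then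
              { d with len := c.len - 1 }
            else d)) )

/-- The stretching class `α*` consisting of the stretches of `α`. -/
def alphaStar (x : V) (α : V → ℤ) : SClass V x := ⟨0, stRoot x 0 α, 0, 1⟩

/-- The vertex set of the graph `P` constructed from `α`: all stretching classes
reachable from `α*`. -/
def Reach (A : V → V → ℤ) (x : V) (L R : Finset V) (α : V → ℤ) :
    Set (SClass V x) :=
  {c | Relation.ReflTransGen (Step A x L R) (alphaStar x α) c}

end Classes

set_option linter.unusedSectionVars false

section ProofDefs

variable {V : Type*} [Fintype V] [DecidableEq V]
variable (A : V → V → ℤ) (x : V) (L R : Finset V)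

/-- Weighted-sums component of the measure. -/
def Wc (c : SClass V x) : ℤ := wLeft A L c + wRight A R c

/-- Endpoint component of the measure. -/
def Ec {x : V} (c : SClass V x) : ℤ := pv c c.a + pv c (c.a + c.len - 1)

/-- Total-sum component of the measure. -/
def Sc {x : V} (c : SClass V x) : ℤ := ∑ v, c.base v

/-- The lexicographic measure. -/
def mu (c : SClass V x) : ℕ ×ₗ ℕ ×ₗ ℕ :=
  toLex ((Wc A x L R c).toNat, toLex ((Ec c).toNat, (Sc c).toNat))

end ProofDefs

section ProofLemmas

variable {V : Type*} [Fintype V] [DecidableEq V]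
variable {A : V → V → ℤ} {x : V} {L R : Finset V}

lemma pv_mk (m : ℕ) (β : StV V x m → ℤ) (a l i : ℕ) :
    pv (⟨m, β, a, l⟩ : SClass V x) i = if h : i < m + 1 then β (Sum.inr ⟨i, h⟩) else 0 := rfl

lemma pv_nonneg {c : SClass V x} (h : NonnegC c) (i : ℕ) : 0 ≤ pv c i := by
  unfold pv; split
  · exact h _
  · exact le_refl 0

lemma offv_nonneg {c : SClass V x} (h : NonnegC c) (y : V) : 0 ≤ offv c y := by
  unfold offv; split
  · exact le_refl 0
  · exact h _

lemma wt_nonneg (hA : IsCartan A) (hE : IsElastic A x L R) {y : V} (hy : y ∈ L ∪ R) :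
    0 ≤ -A x y := by
  have h1 := (hE.union y).1 hy
  have h2 := hA.offdiag x y (fun h => h1.1 h.symm)
  omega

lemma wLeft_nonneg (hA : IsCartan A) (hE : IsElastic A x L R) {c : SClass V x}
    (h : NonnegC c) : 0 ≤ wLeft A L c := by
  unfold wLeft; split
  · exact Finset.sum_nonneg fun y hy =>
      mul_nonneg (wt_nonneg hA hE (Finset.mem_union_left _ hy)) (offv_nonneg h y)
  · exact pv_nonneg h _

lemma wRight_nonneg (hA : IsCartan A) (hE : IsElastic A x L R) {c : SClass V x}
    (h : NonnegC c) : 0 ≤ wRight A R c := by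
  unfold wRight; split
  · exact Finset.sum_nonneg fun y hy =>
      mul_nonneg (wt_nonneg hA hE (Finset.mem_union_right _ hy)) (offv_nonneg h y)
  · exact pv_nonneg h _

lemma Sc_nonneg {c : SClass V x} (h : NonnegC c) : 0 ≤ Sc c :=
  Finset.sum_nonneg fun v _ => h v

end ProofLemmas
section Mono

variable {V : Type*} [Fintype V] [DecidableEq V]
variable {A : V → V → ℤ} {x : V} {L R : Finset V}

lemma pv_le (c : SClass V x) (β' : StV V x c.m → ℤ) (hle : ∀ v, β' v ≤ c.base v) (i : ℕ) :
    pv (⟨c.m, β', c.a, c.len⟩ : SClass V x) i ≤ pv c i := by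
  unfold pv; dsimp only; split
  · exact hle _
  · exact le_refl 0

lemma offv_le (c : SClass V x) (β' : StV V x c.m → ℤ) (hle : ∀ v, β' v ≤ c.base v) (y : V) :
    offv (⟨c.m, β', c.a, c.len⟩ : SClass V x) y ≤ offv c y := by
  unfold offv; dsimp only; split
  · exact le_refl 0
  · exact hle _

lemma wLeft_le (hA : IsCartan A) (hE : IsElastic A x L R) (c : SClass V x)
    (β' : StV V x c.m → ℤ) (hle : ∀ v, β' v ≤ c.base v) :
    wLeft A L (⟨c.m, β', c.a, c.len⟩ : SClass V x) ≤ wLeft A L c := by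
  unfold wLeft; dsimp only; split
  · exact Finset.sum_le_sum fun y hy =>
      mul_le_mul_of_nonneg_left (offv_le c β' hle y)
        (wt_nonneg hA hE (Finset.mem_union_left _ hy))
  · exact pv_le c β' hle _

lemma wRight_le (hA : IsCartan A) (hE : IsElastic A x L R) (c : SClass V x)
    (β' : StV V x c.m → ℤ) (hle : ∀ v, β' v ≤ c.base v) :
    wRight A R (⟨c.m, β', c.a, c.len⟩ : SClass V x) ≤ wRight A R c := by
  unfold wRight; dsimp only; split
  · exact Finset.sum_le_sum fun y hy =>
      mul_le_mul_of_nonneg_left (offv_le c β' hle y)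
        (wt_nonneg hA hE (Finset.mem_union_right _ hy))
  · exact pv_le c β' hle _

lemma mu_lt_of_pointwise (hA : IsCartan A) (hE : IsElastic A x L R) (c : SClass V x)
    (β' : StV V x c.m → ℤ) (hle : ∀ v, β' v ≤ c.base v)
    (v₀ : StV V x c.m) (hlt : β' v₀ < c.base v₀)
    (hnn : NonnegC (⟨c.m, β', c.a, c.len⟩ : SClass V x)) :
    mu A x L R (⟨c.m, β', c.a, c.len⟩ : SClass V x) < mu A x L R c := by
  have hW : Wc A x L R (⟨c.m, β', c.a, c.len⟩ : SClass V x) ≤ Wc A x L R c :=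
    add_le_add (wLeft_le hA hE c β' hle) (wRight_le hA hE c β' hle)
  have hE2 : Ec (⟨c.m, β', c.a, c.len⟩ : SClass V x) ≤ Ec c :=
    add_le_add (pv_le c β' hle _) (pv_le c β' hle _)
  have hS : Sc (⟨c.m, β', c.a, c.len⟩ : SClass V x) < Sc c := by
    refine Finset.sum_lt_sum (fun v _ => hle v) ⟨v₀, Finset.mem_univ _, hlt⟩
  have hS0 : 0 ≤ Sc (⟨c.m, β', c.a, c.len⟩ : SClass V x) := Sc_nonneg hnn
  unfold mu
  rw [Prod.Lex.lt_iff]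
  simp only [ofLex_toLex]
  rcases lt_or_eq_of_le (Int.toNat_le_toNat hW) with h | h
  · exact Or.inl h
  · refine Or.inr ⟨h, ?_⟩
    rw [Prod.Lex.lt_iff]
    simp only [ofLex_toLex]
    omega

end Mono
section ReflIns

variable {V : Type*} [Fintype V] [DecidableEq V]
variable {A : V → V → ℤ} {x : V} {L R : Finset V}

lemma reflC_def (c : SClass V x) (v : StV V x c.m) :
    reflC A x L R c v = ⟨c.m, sRef (stA A x L R c.m) v c.base, c.a, c.len⟩ := rfl

lemma sRef_apply_ne {W : Type*} [Fintype W] [DecidableEq W] (B : W → W → ℤ)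
    (v : W) (β : W → ℤ) {w : W} (h : w ≠ v) : sRef B v β w = β w := by
  unfold sRef; rw [if_neg h]

lemma sRef_le (c : SClass V x) (v : StV V x c.m)
    (hlt : sRef (stA A x L R c.m) v c.base v < c.base v) :
    ∀ w, sRef (stA A x L R c.m) v c.base w ≤ c.base w := by
  intro w
  by_cases h : w = v
  · subst h; exact le_of_lt hlt
  · rw [sRef_apply_ne _ _ _ h]

lemma pv_reflC_ne (c : SClass V x) (i : Fin (c.m + 1)) {j : ℕ} (hj : j ≠ (i : ℕ)) :
    pv (reflC A x L R c (Sum.inr i)) j = pv c j := by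
  unfold pv reflC; dsimp only; split
  · apply sRef_apply_ne
    intro h
    exact hj (by injection h with h'; exact congrArg Fin.val h' ▸ rfl)
  · rfl

lemma pv_reflC_eq (c : SClass V x) (i : Fin (c.m + 1)) :
    pv (reflC A x L R c (Sum.inr i)) (i : ℕ) =
      sRef (stA A x L R c.m) (Sum.inr i) c.base (Sum.inr i) := by
  unfold pv reflC; dsimp only
  rw [dif_pos i.isLt]

lemma offv_reflC (c : SClass V x) (i : Fin (c.m + 1)) (y : V) :
    offv (reflC A x L R c (Sum.inr i)) y = offv c y := by
  unfold offv reflC; dsimp only; split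
  · rfl
  · apply sRef_apply_ne
    simp

-- insAt lemmas
lemma insAt_m (c : SClass V x) (p : ℕ) (s : ℤ) : (insAt c p s).m = c.m + 1 := rfl
lemma insAt_a (c : SClass V x) (p : ℕ) (s : ℤ) : (insAt c p s).a = c.a := rfl
lemma insAt_len (c : SClass V x) (p : ℕ) (s : ℤ) : (insAt c p s).len = c.len + 1 := rfl

lemma offv_insAt (c : SClass V x) (p : ℕ) (s : ℤ) (y : V) :
    offv (insAt c p s) y = offv c y := rfl

lemma pv_insAt (c : SClass V x) (p : ℕ) (s : ℤ) (hp : p ≤ c.m + 1) (j : ℕ) :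
    pv (insAt c p s) j =
      if j < p then pv c j else if j = p then s else pv c (j - 1) := by
  unfold pv insAt; dsimp only
  by_cases h2 : j < c.m + 1 + 1
  · rw [dif_pos h2]
    by_cases hjp : j < p
    · simp only [if_pos hjp, dif_pos (show j < c.m + 1 by omega)]
      congr! 1
      · simp only [Sum.inr.injEq, Fin.mk.injEq]
        omega
    · by_cases hje : j = p
      · simp only [if_neg hjp, if_pos hje]
      · simp only [if_neg hjp, if_neg hje, dif_pos (show j - 1 < c.m + 1 by omega)]
        congr! 1
        · simp only [Sum.inr.injEq, Fin.mk.injEq]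
          omega
  · rw [dif_neg h2]
    rw [if_neg (by omega : ¬ j < p), if_neg (by omega : j ≠ p),
      dif_neg (by omega : ¬ (j - 1 < c.m + 1))]

end ReflIns
section Rows

variable {V : Type*} [Fintype V] [DecidableEq V]
variable {A : V → V → ℤ} {x : V} {L R : Finset V}

lemma stA_co {m : ℕ} (i j : Fin (m + 1)) :
    stA A x L R m (Sum.inr i) (Sum.inr j)
      = if i = j then 2
        else if (i : ℕ) + 1 = (j : ℕ) ∨ (j : ℕ) + 1 = (i : ℕ) then -1 else 0 := rfl

/-- Generic evaluation of the on-path part of a row sum, interior vertex. -/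
lemma row_inr_mid {m : ℕ} (β : StV V x m → ℤ) {i : ℕ} (h0 : 0 < i) (hm : i < m)
    (hi : i < m + 1) :
    ∑ j : Fin (m + 1), stA A x L R m (Sum.inr ⟨i, hi⟩) (Sum.inr j) * β (Sum.inr j)
      = 2 * β (Sum.inr ⟨i, hi⟩) - β (Sum.inr ⟨i - 1, by omega⟩)
        - β (Sum.inr ⟨i + 1, by omega⟩) := by
  have hsub : ({⟨i - 1, by omega⟩, ⟨i, hi⟩, ⟨i + 1, by omega⟩} : Finset (Fin (m+1))) ⊆
      Finset.univ := Finset.subset_univ _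
  rw [← Finset.sum_subset hsub (fun j _ hj => ?_)]
  · rw [Finset.sum_insert (by
        simp only [Finset.mem_insert, Finset.mem_singleton, Fin.mk.injEq]; omega),
      Finset.sum_insert (by simp only [Finset.mem_singleton, Fin.mk.injEq]; omega),
      Finset.sum_singleton]
    rw [stA_co, stA_co, stA_co]
    simp only [Fin.mk.injEq, Fin.val_mk]
    rw [if_neg (show ¬ i = i - 1 by omega),
      if_pos (show i + 1 = i - 1 ∨ i - 1 + 1 = i from Or.inr (by omega)),
      if_pos trivial, if_neg (show ¬ i = i + 1 by omega),
      if_pos (show True ∨ i + 1 + 1 = i from Or.inl trivial)]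
    ring
  · simp only [Finset.mem_insert, Finset.mem_singleton, Fin.ext_iff, Fin.val_mk] at hj
    push_neg at hj
    rw [stA_co, if_neg (fun h => hj.2.1 (by rw [← h])),
      if_neg (by simp only [Fin.val_mk]; omega), zero_mul]

/-- Generic evaluation of the on-path part of a row sum, left endpoint `0 < m`. -/
lemma row_inr_left {m : ℕ} (β : StV V x m → ℤ) (hm : 0 < m) (hi : 0 < m + 1) :
    ∑ j : Fin (m + 1), stA A x L R m (Sum.inr ⟨0, hi⟩) (Sum.inr j) * β (Sum.inr j)
      = 2 * β (Sum.inr ⟨0, hi⟩) - β (Sum.inr ⟨1, by omega⟩) := by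
  have hsub : ({⟨0, hi⟩, ⟨1, by omega⟩} : Finset (Fin (m+1))) ⊆ Finset.univ :=
    Finset.subset_univ _
  rw [← Finset.sum_subset hsub (fun j _ hj => ?_)]
  · rw [Finset.sum_insert (by simp only [Finset.mem_singleton, Fin.mk.injEq]; omega),
      Finset.sum_singleton]
    rw [stA_co, stA_co]
    simp only [Fin.mk.injEq, Fin.val_mk]
    rw [if_pos trivial, if_neg (show ¬ (0:ℕ) = 1 by omega),
      if_pos (show True ∨ 1 + 1 = 0 from Or.inl trivial)]
    ring
  · simp only [Finset.mem_insert, Finset.mem_singleton, Fin.ext_iff, Fin.val_mk] at hj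
    push_neg at hj
    rw [stA_co, if_neg (fun h => hj.1 (by rw [← h])),
      if_neg (by simp only [Fin.val_mk]; omega), zero_mul]

/-- Generic evaluation of the on-path part of a row sum, right endpoint `0 < m`. -/
lemma row_inr_right {m : ℕ} (β : StV V x m → ℤ) (hm : 0 < m) (hi : m < m + 1) :
    ∑ j : Fin (m + 1), stA A x L R m (Sum.inr ⟨m, hi⟩) (Sum.inr j) * β (Sum.inr j)
      = 2 * β (Sum.inr ⟨m, hi⟩) - β (Sum.inr ⟨m - 1, by omega⟩) := by
  have hsub : ({⟨m - 1, by omega⟩, ⟨m, hi⟩} : Finset (Fin (m+1))) ⊆ Finset.univ :=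
    Finset.subset_univ _
  rw [← Finset.sum_subset hsub (fun j _ hj => ?_)]
  · rw [Finset.sum_insert (by simp only [Finset.mem_singleton, Fin.mk.injEq]; omega),
      Finset.sum_singleton]
    rw [stA_co, stA_co]
    simp only [Fin.mk.injEq, Fin.val_mk]
    rw [if_neg (show ¬ m = m - 1 by omega),
      if_pos (show m + 1 = m - 1 ∨ m - 1 + 1 = m from Or.inr (by omega)), if_pos trivial]
    ring
  · simp only [Finset.mem_insert, Finset.mem_singleton, Fin.ext_iff, Fin.val_mk] at hj
    push_neg at hj
    rw [stA_co, if_neg (fun h => hj.2 (by rw [← h])),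
      if_neg (by simp only [Fin.val_mk]; omega), zero_mul]

/-- The off-path part of a row sum at an interior vertex vanishes. -/
lemma row_inl_mid {m : ℕ} (β : StV V x m → ℤ) {i : ℕ} (h0 : 0 < i) (hm : i < m)
    (hi : i < m + 1) :
    ∑ y : {y : V // y ≠ x}, stA A x L R m (Sum.inr ⟨i, hi⟩) (Sum.inl y) * β (Sum.inl y)
      = 0 := by
  refine Finset.sum_eq_zero fun y _ => ?_
  show (if ((⟨i, hi⟩ : Fin (m+1)) = 0 ∧ y.1 ∈ L) ∨ ((⟨i, hi⟩ : Fin (m+1)) = Fin.last m ∧ y.1 ∈ R)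
      then A x y.1 else 0) * β (Sum.inl y) = 0
  rw [if_neg, zero_mul]
  rintro (⟨h, -⟩ | ⟨h, -⟩)
  · have := congrArg Fin.val h; simp at this; omega
  · have := congrArg Fin.val h; simp [Fin.last] at this; omega

/-- The off-path part of a row sum at the left endpoint. -/
lemma row_inl_left {m : ℕ} (β : StV V x m → ℤ) (hm : 0 < m) (hi : 0 < m + 1) :
    ∑ y : {y : V // y ≠ x}, stA A x L R m (Sum.inr ⟨0, hi⟩) (Sum.inl y) * β (Sum.inl y)
      = ∑ y : {y : V // y ≠ x}, (if y.1 ∈ L then A x y.1 else 0) * β (Sum.inl y) := by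
  refine Finset.sum_congr rfl fun y _ => ?_
  show (if ((⟨0, hi⟩ : Fin (m+1)) = 0 ∧ y.1 ∈ L) ∨ ((⟨0, hi⟩ : Fin (m+1)) = Fin.last m ∧ y.1 ∈ R)
      then A x y.1 else 0) * β (Sum.inl y) = _
  congr 1
  refine if_congr ?_ rfl rfl
  constructor
  · rintro (⟨-, h⟩ | ⟨h, -⟩)
    · exact h
    · exact absurd (congrArg Fin.val h) (by simp [Fin.last]; omega)
  · exact fun h => Or.inl ⟨Fin.ext (by simp), h⟩

/-- The off-path part of a row sum at the right endpoint. -/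
lemma row_inl_right {m : ℕ} (β : StV V x m → ℤ) (hm : 0 < m) (hi : m < m + 1) :
    ∑ y : {y : V // y ≠ x}, stA A x L R m (Sum.inr ⟨m, hi⟩) (Sum.inl y) * β (Sum.inl y)
      = ∑ y : {y : V // y ≠ x}, (if y.1 ∈ R then A x y.1 else 0) * β (Sum.inl y) := by
  refine Finset.sum_congr rfl fun y _ => ?_
  show (if ((⟨m, hi⟩ : Fin (m+1)) = 0 ∧ y.1 ∈ L) ∨ ((⟨m, hi⟩ : Fin (m+1)) = Fin.last m ∧ y.1 ∈ R)
      then A x y.1 else 0) * β (Sum.inl y) = _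
  congr 1
  refine if_congr ?_ rfl rfl
  constructor
  · rintro (⟨h, -⟩ | ⟨-, h⟩)
    · exact absurd (congrArg Fin.val h) (by simp; omega)
    · exact h
  · exact fun h => Or.inr ⟨Fin.ext (by simp [Fin.last]), h⟩

/-- Conversion between the subtype sum and the Finset sum over `L` (or `R`). -/
lemma subtype_sum (hE : IsElastic A x L R) {S0 : Finset V} (hS : ∀ y ∈ S0, y ∈ L ∪ R)
    (c : SClass V x) :
    ∑ y : {y : V // y ≠ x}, (if y.1 ∈ S0 then A x y.1 else 0) * c.base (Sum.inl y)
      = ∑ y ∈ S0, A x y * offv c y := by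
  have hne : ∀ y ∈ S0, y ≠ x := fun y hy => ((hE.union y).1 (hS y hy)).1
  have step1 : ∀ y : {y : V // y ≠ x},
      (if y.1 ∈ S0 then A x y.1 else 0) * c.base (Sum.inl y)
        = if y.1 ∈ S0 then A x y.1 * offv c y.1 else 0 := by
    intro y
    by_cases h : y.1 ∈ S0
    · rw [if_pos h, if_pos h]
      unfold offv
      rw [dif_neg y.2]
    · rw [if_neg h, if_neg h, zero_mul]
  rw [Finset.sum_congr rfl fun y _ => step1 y]
  rw [← Finset.sum_subtype (Finset.univ.filter (· ≠ x))
    (by intro y; simp) (fun y => if y ∈ S0 then A x y * offv c y else 0)]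
  have hzero : ∀ y ∈ Finset.univ, (if y ∈ S0 then A x y * offv c y else 0) ≠ 0 → y ≠ x := by
    intro y _ hy hx
    exact hy (if_neg fun h => hne y h hx)
  rw [Finset.sum_filter_of_ne hzero, Finset.sum_ite_mem, Finset.univ_inter]

end Rows
section NewVal

variable {V : Type*} [Fintype V] [DecidableEq V]
variable {A : V → V → ℤ} {x : V} {L R : Finset V}

lemma row_split {m : ℕ} (β : StV V x m → ℤ) (i : Fin (m + 1)) :
    ∑ z, stA A x L R m (Sum.inr i) z * β z
      = (∑ y : {y : V // y ≠ x}, stA A x L R m (Sum.inr i) (Sum.inl y) * β (Sum.inl y))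
        + ∑ j : Fin (m + 1), stA A x L R m (Sum.inr i) (Sum.inr j) * β (Sum.inr j) :=
  Fintype.sum_sum_type _

lemma pv_eq (c : SClass V x) {i : ℕ} (hi : i < c.m + 1) :
    pv c i = c.base (Sum.inr ⟨i, hi⟩) := dif_pos hi

lemma wsum_neg (c : SClass V x) (S0 : Finset V) :
    ∑ y ∈ S0, (-A x y) * offv c y = -∑ y ∈ S0, A x y * offv c y := by
  simp [neg_mul]

lemma newval_mid (c : SClass V x) {i : ℕ} (h0 : 0 < i) (hm : i < c.m) (hi : i < c.m + 1) :
    sRef (stA A x L R c.m) (Sum.inr ⟨i, hi⟩) c.base (Sum.inr ⟨i, hi⟩)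
      = pv c (i - 1) + pv c (i + 1) - pv c i := by
  unfold sRef
  rw [if_pos rfl, row_split, row_inl_mid _ h0 hm, row_inr_mid _ h0 hm,
    pv_eq c (show i - 1 < c.m + 1 by omega), pv_eq c (show i + 1 < c.m + 1 by omega),
    pv_eq c hi]
  ring

lemma newval_left (hE : IsElastic A x L R) (c : SClass V x) (hm : 0 < c.m)
    (hi : 0 < c.m + 1) :
    sRef (stA A x L R c.m) (Sum.inr ⟨0, hi⟩) c.base (Sum.inr ⟨0, hi⟩)
      = pv c 1 - pv c 0 - ∑ y ∈ L, A x y * offv c y := by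
  unfold sRef
  rw [if_pos rfl, row_split, row_inl_left _ hm,
    subtype_sum hE (fun y hy => Finset.mem_union_left _ hy), row_inr_left _ hm,
    pv_eq c (show 1 < c.m + 1 by omega), pv_eq c hi]
  ring

lemma newval_right (hE : IsElastic A x L R) (c : SClass V x) (hm : 0 < c.m)
    (hi : c.m < c.m + 1) :
    sRef (stA A x L R c.m) (Sum.inr ⟨c.m, hi⟩) c.base (Sum.inr ⟨c.m, hi⟩)
      = pv c (c.m - 1) - pv c c.m - ∑ y ∈ R, A x y * offv c y := by
  unfold sRef
  rw [if_pos rfl, row_split, row_inl_right _ hm,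
    subtype_sum hE (fun y hy => Finset.mem_union_right _ hy), row_inr_right _ hm,
    pv_eq c (show c.m - 1 < c.m + 1 by omega), pv_eq c hi]
  ring

lemma mu_lt_of_W {c c' : SClass V x} (hW : Wc A x L R c' < Wc A x L R c)
    (h0 : 0 ≤ Wc A x L R c') : mu A x L R c' < mu A x L R c := by
  unfold mu
  rw [Prod.Lex.lt_iff]
  left
  simp only [ofLex_toLex]
  omega

lemma mu_lt_of_E {c c' : SClass V x} (hW : Wc A x L R c' = Wc A x L R c)
    (hEc : Ec c' < Ec c) (h0 : 0 ≤ Ec c') : mu A x L R c' < mu A x L R c := by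
  unfold mu
  rw [Prod.Lex.lt_iff]
  right
  refine ⟨by rw [hW]; rfl, ?_⟩
  rw [Prod.Lex.lt_iff]
  left
  simp only [ofLex_toLex]
  omega

end NewVal
section InsOps

variable {V : Type*} [Fintype V] [DecidableEq V]
variable {A : V → V → ℤ} {x : V} {L R : Finset V}

lemma wLeft_insAt_left (c : SClass V x) (s : ℤ) (hp : c.a ≤ c.m + 1) :
    wLeft A L (insAt c c.a s) = wLeft A L c := by
  unfold wLeft
  rw [insAt_a]
  by_cases ha : c.a = 0
  · rw [if_pos ha, if_pos ha]
    simp only [offv_insAt]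
  · rw [if_neg ha, if_neg ha, pv_insAt c c.a s hp, if_pos (by omega)]

lemma wRight_insAt_left (c : SClass V x) (s : ℤ) (h1 : 1 ≤ c.len)
    (h2 : c.a + c.len ≤ c.m + 1) :
    wRight A R (insAt c c.a s) = wRight A R c := by
  unfold wRight
  rw [insAt_a, insAt_len, insAt_m]
  by_cases hc : c.a + c.len - 1 = c.m
  · rw [if_pos (by omega), if_pos hc]
    simp only [offv_insAt]
  · rw [if_neg (by omega), if_neg hc, pv_insAt c c.a s (by omega),
      if_neg (by omega), if_neg (by omega)]
    exact congrArg (pv c) (by omega)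

lemma Ec_insAt_left (c : SClass V x) (s : ℤ) (h1 : 1 ≤ c.len) (h2 : c.a + c.len ≤ c.m + 1) :
    Ec (insAt c c.a s) = s + pv c (c.a + c.len - 1) := by
  unfold Ec
  simp only [insAt_a, insAt_len]
  rw [pv_insAt c c.a s (by omega), pv_insAt c c.a s (by omega)]
  rw [if_neg (by omega), if_pos rfl, if_neg (by omega), if_neg (by omega)]
  exact congrArg (fun t => s + pv c t) (by omega)

lemma wLeft_insAt_right (c : SClass V x) (s : ℤ) (h1 : 1 ≤ c.len)
    (h2 : c.a + c.len ≤ c.m + 1) :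
    wLeft A L (insAt c (c.a + c.len) s) = wLeft A L c := by
  unfold wLeft
  rw [insAt_a]
  by_cases ha : c.a = 0
  · rw [if_pos ha, if_pos ha]
    simp only [offv_insAt]
  · rw [if_neg ha, if_neg ha, pv_insAt c _ s (by omega), if_pos (by omega)]

lemma wRight_insAt_right (c : SClass V x) (s : ℤ) (h1 : 1 ≤ c.len)
    (h2 : c.a + c.len ≤ c.m + 1) :
    wRight A R (insAt c (c.a + c.len) s) = wRight A R c := by
  unfold wRight
  rw [insAt_a, insAt_len, insAt_m]
  by_cases hc : c.a + c.len - 1 = c.m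
  · rw [if_pos (by omega), if_pos hc]
    simp only [offv_insAt]
  · rw [if_neg (by omega), if_neg hc, pv_insAt c _ s (by omega),
      if_neg (by omega), if_neg (by omega)]
    exact congrArg (pv c) (by omega)

lemma Ec_insAt_right (c : SClass V x) (s : ℤ) (h1 : 1 ≤ c.len)
    (h2 : c.a + c.len ≤ c.m + 1) :
    Ec (insAt c (c.a + c.len) s) = pv c c.a + s := by
  unfold Ec
  simp only [insAt_a, insAt_len]
  rw [pv_insAt c _ s (by omega), pv_insAt c _ s (by omega)]
  rw [if_pos (by omega), if_neg (by omega), if_pos (by omega)]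

lemma mu_insL (c : SClass V x) (h1 : 1 ≤ c.len) (h2 : c.a + c.len ≤ c.m + 1)
    (hlt : wLeft A L c < pv c c.a)
    (hnn : NonnegC (insAt c c.a (wLeft A L c))) :
    mu A x L R (insAt c c.a (wLeft A L c)) < mu A x L R c := by
  refine mu_lt_of_E ?_ ?_ ?_
  · unfold Wc
    rw [wLeft_insAt_left c _ (by omega), wRight_insAt_left c _ h1 h2]
  · rw [Ec_insAt_left c _ h1 h2]
    unfold Ec
    omega
  · exact add_nonneg (pv_nonneg hnn _) (pv_nonneg hnn _)

lemma mu_insR (c : SClass V x) (h1 : 1 ≤ c.len) (h2 : c.a + c.len ≤ c.m + 1)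
    (hlt : wRight A R c < pv c (c.a + c.len - 1))
    (hnn : NonnegC (insAt c (c.a + c.len) (wRight A R c))) :
    mu A x L R (insAt c (c.a + c.len) (wRight A R c)) < mu A x L R c := by
  refine mu_lt_of_E ?_ ?_ ?_
  · unfold Wc
    rw [wLeft_insAt_right c _ h1 h2, wRight_insAt_right c _ h1 h2]
  · rw [Ec_insAt_right c _ h1 h2]
    unfold Ec
    omega
  · exact add_nonneg (pv_nonneg hnn _) (pv_nonneg hnn _)

end InsOps
section RemOps

variable {V : Type*} [Fintype V] [DecidableEq V]
variable {A : V → V → ℤ} {x : V} {L R : Finset V}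

lemma pv_mk_eq_reflC (c : SClass V x) (v : StV V x c.m) (a' l' : ℕ) (j : ℕ) :
    pv (⟨c.m, sRef (stA A x L R c.m) v c.base, a', l'⟩ : SClass V x) j
      = pv (reflC A x L R c v) j := rfl

lemma offv_mk_eq_reflC (c : SClass V x) (v : StV V x c.m) (a' l' : ℕ) (y : V) :
    offv (⟨c.m, sRef (stA A x L R c.m) v c.base, a', l'⟩ : SClass V x) y
      = offv (reflC A x L R c v) y := rfl

lemma mu_remL (hA : IsCartan A) (hE : IsElastic A x L R) (c : SClass V x)
    (h1 : 2 ≤ c.len) (h2 : c.a + c.len ≤ c.m + 1)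
    (i : Fin (c.m + 1)) (hia : (i : ℕ) = c.a)
    (hdec : sRef (stA A x L R c.m) (Sum.inr i) c.base (Sum.inr i) < c.base (Sum.inr i))
    (hcond : pv (reflC A x L R c (Sum.inr i)) (c.a + 1) ≤ pv (reflC A x L R c (Sum.inr i)) c.a)
    (hnn : NonnegC (⟨c.m, sRef (stA A x L R c.m) (Sum.inr i) c.base, c.a + 1,
      c.len - 1⟩ : SClass V x)) :
    mu A x L R (⟨c.m, sRef (stA A x L R c.m) (Sum.inr i) c.base, c.a + 1,
      c.len - 1⟩ : SClass V x) < mu A x L R c := by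
  obtain ⟨iv, hlt⟩ := i
  have hia' : iv = c.a := hia
  subst hia'
  have hm0 : c.a < c.m := by omega
  have hnewv : pv (reflC A x L R c (Sum.inr ⟨c.a, hlt⟩)) c.a
      = sRef (stA A x L R c.m) (Sum.inr ⟨c.a, hlt⟩) c.base (Sum.inr ⟨c.a, hlt⟩) :=
    pv_reflC_eq c ⟨c.a, hlt⟩
  have hppv : pv c c.a = c.base (Sum.inr ⟨c.a, hlt⟩) := pv_eq c hlt
  have hd1 : pv (reflC A x L R c (Sum.inr ⟨c.a, hlt⟩)) (c.a + 1) = pv c (c.a + 1) :=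
    pv_reflC_ne c ⟨c.a, hlt⟩ (show c.a + 1 ≠ c.a by omega)
  have e1 : wLeft A L (⟨c.m, sRef (stA A x L R c.m) (Sum.inr ⟨c.a, hlt⟩) c.base, c.a + 1,
      c.len - 1⟩ : SClass V x) = pv (reflC A x L R c (Sum.inr ⟨c.a, hlt⟩)) c.a := by
    unfold wLeft
    dsimp only
    rw [if_neg (show ¬ c.a + 1 = 0 by omega)]
    rfl
  have e2 : wRight A R (⟨c.m, sRef (stA A x L R c.m) (Sum.inr ⟨c.a, hlt⟩) c.base, c.a + 1,
      c.len - 1⟩ : SClass V x) = wRight A R c := by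
    unfold wRight
    dsimp only
    by_cases hc : c.a + c.len - 1 = c.m
    · rw [if_pos (show c.a + 1 + (c.len - 1) - 1 = c.m by omega), if_pos hc]
      refine Finset.sum_congr rfl fun y _ => ?_
      rw [offv_mk_eq_reflC, offv_reflC]
    · rw [if_neg (show ¬ (c.a + 1 + (c.len - 1) - 1 = c.m) by omega), if_neg hc,
        show c.a + 1 + (c.len - 1) = c.a + c.len by omega, pv_mk_eq_reflC,
        pv_reflC_ne c ⟨c.a, hlt⟩ (show c.a + c.len ≠ c.a by omega)]
  have hform : sRef (stA A x L R c.m) (Sum.inr ⟨c.a, hlt⟩) c.base (Sum.inr ⟨c.a, hlt⟩)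
      = wLeft A L c + pv c (c.a + 1) - pv c c.a := by
    by_cases ha0 : c.a = 0
    · have hidx : (⟨c.a, hlt⟩ : Fin (c.m + 1)) = ⟨0, by omega⟩ := Fin.ext ha0
      rw [hidx, newval_left hE c (by omega) (by omega)]
      unfold wLeft
      rw [if_pos ha0, wsum_neg, ha0]
      ring
    · rw [newval_mid c (by omega) hm0 hlt]
      unfold wLeft
      rw [if_neg ha0]
  refine mu_lt_of_W ?_ ?_
  · show wLeft A L _ + wRight A R _ < wLeft A L c + wRight A R c
    rw [e1, e2, hnewv, hform]
    have hc1 : pv c (c.a + 1) ≤ sRef (stA A x L R c.m) (Sum.inr ⟨c.a, hlt⟩) c.base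
        (Sum.inr ⟨c.a, hlt⟩) := by
      rw [← hd1, ← hnewv] at *
      exact hcond
    rw [hform] at hc1 hdec
    rw [← hppv] at hdec
    linarith
  · exact add_nonneg (wLeft_nonneg hA hE hnn) (wRight_nonneg hA hE hnn)

lemma mu_remR (hA : IsCartan A) (hE : IsElastic A x L R) (c : SClass V x)
    (h1 : 2 ≤ c.len) (h2 : c.a + c.len ≤ c.m + 1)
    (i : Fin (c.m + 1)) (hia : (i : ℕ) = c.a + c.len - 1)
    (hdec : sRef (stA A x L R c.m) (Sum.inr i) c.base (Sum.inr i) < c.base (Sum.inr i))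
    (hcond : pv (reflC A x L R c (Sum.inr i)) (c.a + c.len - 2)
      ≤ pv (reflC A x L R c (Sum.inr i)) (c.a + c.len - 1))
    (hnn : NonnegC (⟨c.m, sRef (stA A x L R c.m) (Sum.inr i) c.base, c.a,
      c.len - 1⟩ : SClass V x)) :
    mu A x L R (⟨c.m, sRef (stA A x L R c.m) (Sum.inr i) c.base, c.a,
      c.len - 1⟩ : SClass V x) < mu A x L R c := by
  obtain ⟨iv, hlt⟩ := i
  have hia' : iv = c.a + c.len - 1 := hia
  subst hia'
  have hb1 : 1 ≤ c.a + c.len - 1 := by omega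
  have hbm : c.a + c.len - 1 ≤ c.m := by omega
  have hnewv : pv (reflC A x L R c (Sum.inr ⟨c.a + c.len - 1, hlt⟩)) (c.a + c.len - 1)
      = sRef (stA A x L R c.m) (Sum.inr ⟨c.a + c.len - 1, hlt⟩) c.base
        (Sum.inr ⟨c.a + c.len - 1, hlt⟩) :=
    pv_reflC_eq c ⟨c.a + c.len - 1, hlt⟩
  have hppv : pv c (c.a + c.len - 1) = c.base (Sum.inr ⟨c.a + c.len - 1, hlt⟩) := pv_eq c hlt
  have hd1 : pv (reflC A x L R c (Sum.inr ⟨c.a + c.len - 1, hlt⟩)) (c.a + c.len - 2)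
      = pv c (c.a + c.len - 2) :=
    pv_reflC_ne c ⟨c.a + c.len - 1, hlt⟩ (show c.a + c.len - 2 ≠ c.a + c.len - 1 by omega)
  have e1 : wLeft A L (⟨c.m, sRef (stA A x L R c.m) (Sum.inr ⟨c.a + c.len - 1, hlt⟩) c.base,
      c.a, c.len - 1⟩ : SClass V x) = wLeft A L c := by
    unfold wLeft
    dsimp only
    by_cases ha0 : c.a = 0
    · rw [if_pos ha0, if_pos ha0]
      refine Finset.sum_congr rfl fun y _ => ?_
      rw [offv_mk_eq_reflC, offv_reflC]
    · rw [if_neg ha0, if_neg ha0, pv_mk_eq_reflC,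
        pv_reflC_ne c ⟨c.a + c.len - 1, hlt⟩ (show c.a - 1 ≠ c.a + c.len - 1 by omega)]
  have e2 : wRight A R (⟨c.m, sRef (stA A x L R c.m) (Sum.inr ⟨c.a + c.len - 1, hlt⟩) c.base,
      c.a, c.len - 1⟩ : SClass V x)
      = pv (reflC A x L R c (Sum.inr ⟨c.a + c.len - 1, hlt⟩)) (c.a + c.len - 1) := by
    unfold wRight
    dsimp only
    rw [if_neg (show ¬ (c.a + (c.len - 1) - 1 = c.m) by omega),
      show c.a + (c.len - 1) = c.a + c.len - 1 by omega, pv_mk_eq_reflC]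
  have hform : sRef (stA A x L R c.m) (Sum.inr ⟨c.a + c.len - 1, hlt⟩) c.base
      (Sum.inr ⟨c.a + c.len - 1, hlt⟩)
      = wRight A R c + pv c (c.a + c.len - 2) - pv c (c.a + c.len - 1) := by
    by_cases hbm' : c.a + c.len - 1 = c.m
    · have hidx : (⟨c.a + c.len - 1, hlt⟩ : Fin (c.m + 1)) = ⟨c.m, by omega⟩ :=
        Fin.ext hbm'
      rw [hidx, newval_right hE c (by omega) (by omega)]
      unfold wRight
      rw [if_pos hbm', wsum_neg, ← hbm']
      have : c.a + c.len - 1 - 1 = c.a + c.len - 2 := by omega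
      rw [this]
      ring
    · rw [newval_mid c (by omega) (by omega) hlt]
      unfold wRight
      rw [if_neg hbm',
        show c.a + c.len - 1 - 1 = c.a + c.len - 2 by omega,
        show c.a + c.len - 1 + 1 = c.a + c.len by omega]
      ring
  refine mu_lt_of_W ?_ ?_
  · show wLeft A L _ + wRight A R _ < wLeft A L c + wRight A R c
    rw [e1, e2, hnewv, hform]
    have hc1 : pv c (c.a + c.len - 2) ≤ sRef (stA A x L R c.m)
        (Sum.inr ⟨c.a + c.len - 1, hlt⟩) c.base (Sum.inr ⟨c.a + c.len - 1, hlt⟩) := by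
      rw [← hd1, ← hnewv] at *
      exact hcond
    rw [hform] at hc1 hdec
    rw [← hppv] at hdec
    linarith
  · exact add_nonneg (wLeft_nonneg hA hE hnn) (wRight_nonneg hA hE hnn)

end RemOps
section Assemble

variable {V : Type*} [Fintype V] [DecidableEq V]
variable {A : V → V → ℤ} {x : V} {L R : Finset V}

lemma step_dec (hA : IsCartan A) (hE : IsElastic A x L R) {c c' : SClass V x}
    (h : Step A x L R c c') : mu A x L R c' < mu A x L R c := by
  obtain ⟨hv, -, hnn', hops⟩ := h
  obtain ⟨hL1, hL2, -⟩ := hv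
  rcases hops with ⟨v, -, hdec, rfl⟩ | ⟨i, -, -, hdec, rfl⟩ | ⟨hlt, rfl⟩ | ⟨hlt, rfl⟩ |
    ⟨i, hia, hlen, hdec, hif⟩ | ⟨i, hia, hlen, hdec, hif⟩
  · exact mu_lt_of_pointwise hA hE c _ (sRef_le c v hdec) v hdec hnn'
  · exact mu_lt_of_pointwise hA hE c _ (sRef_le c (Sum.inr i) hdec) (Sum.inr i) hdec hnn'
  · exact mu_insL c hL1 hL2 hlt hnn'
  · exact mu_insR c hL1 hL2 hlt hnn'
  · dsimp only at hif
    by_cases hc : pv (reflC A x L R c (Sum.inr i)) (c.a + 1)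
        ≤ pv (reflC A x L R c (Sum.inr i)) c.a
    · rw [if_pos hc] at hif
      subst hif
      exact mu_remL hA hE c hlen hL2 i hia hdec hc hnn'
    · rw [if_neg hc] at hif
      subst hif
      exact mu_lt_of_pointwise hA hE c _ (sRef_le c (Sum.inr i) hdec) (Sum.inr i) hdec hnn'
  · dsimp only at hif
    by_cases hc : pv (reflC A x L R c (Sum.inr i)) (c.a + c.len - 2)
        ≤ pv (reflC A x L R c (Sum.inr i)) (c.a + c.len - 1)
    · rw [if_pos hc] at hif
      subst hif
      exact mu_remR hA hE c hlen hL2 i hia hdec hc hnn'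
    · rw [if_neg hc] at hif
      subst hif
      exact mu_lt_of_pointwise hA hE c _ (sRef_le c (Sum.inr i) hdec) (Sum.inr i) hdec hnn'

lemma trans_dec (hA : IsCartan A) (hE : IsElastic A x L R) {c c' : SClass V x}
    (h : Relation.TransGen (Step A x L R) c c') : mu A x L R c' < mu A x L R c := by
  induction h with
  | single h => exact step_dec hA hE h
  | tail _ h ih => exact lt_trans (step_dec hA hE h) ih

end Assemble

section Succ

variable {V : Type*} [Fintype V] [DecidableEq V]
variable (A : V → V → ℤ) (x : V) (L R : Finset V)

/-- The finitely many possible successors of a stretching class. -/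
def succs (c : SClass V x) : Set (SClass V x) :=
  (Set.range fun v : StV V x c.m => reflC A x L R c v) ∪
  ({insAt c c.a (wLeft A L c), insAt c (c.a + c.len) (wRight A R c)} : Set (SClass V x)) ∪
  (Set.range fun i : Fin (c.m + 1) =>
    if pv (reflC A x L R c (Sum.inr i)) (c.a + 1) ≤ pv (reflC A x L R c (Sum.inr i)) c.a
    then { reflC A x L R c (Sum.inr i) with a := c.a + 1, len := c.len - 1 }
    else reflC A x L R c (Sum.inr i)) ∪
  (Set.range fun i : Fin (c.m + 1) =>
    if pv (reflC A x L R c (Sum.inr i)) (c.a + c.len - 2)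
        ≤ pv (reflC A x L R c (Sum.inr i)) (c.a + c.len - 1)
    then { reflC A x L R c (Sum.inr i) with len := c.len - 1 }
    else reflC A x L R c (Sum.inr i))

lemma succs_finite (c : SClass V x) : (succs A x L R c).Finite :=
  ((((Set.finite_range _).union
    ((Set.finite_singleton _).insert _)).union
    (Set.finite_range _)).union (Set.finite_range _))

lemma step_mem {c c' : SClass V x} (h : Step A x L R c c') : c' ∈ succs A x L R c := by
  obtain ⟨-, -, -, hops⟩ := h
  rcases hops with ⟨v, -, -, rfl⟩ | ⟨i, -, -, -, rfl⟩ | ⟨-, rfl⟩ | ⟨-, rfl⟩ |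
    ⟨i, -, -, -, hif⟩ | ⟨i, -, -, -, hif⟩
  · exact Or.inl (Or.inl (Or.inl ⟨v, rfl⟩))
  · exact Or.inl (Or.inl (Or.inl ⟨Sum.inr i, rfl⟩))
  · exact Or.inl (Or.inl (Or.inr (Set.mem_insert _ _)))
  · exact Or.inl (Or.inl (Or.inr (Set.mem_insert_iff.mpr (Or.inr rfl))))
  · dsimp only at hif
    exact Or.inl (Or.inr ⟨i, hif.symm⟩)
  · dsimp only at hif
    exact Or.inr ⟨i, hif.symm⟩

lemma reach_fin (hA : IsCartan A) (hE : IsElastic A x L R) (c : SClass V x) :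
    {b | Relation.ReflTransGen (Step A x L R) c b}.Finite := by
  have main : ∀ n : ℕ ×ₗ ℕ ×ₗ ℕ, ∀ c : SClass V x, mu A x L R c = n →
      {b | Relation.ReflTransGen (Step A x L R) c b}.Finite := by
    intro n
    refine WellFounded.induction (wellFounded_lt)
      (C := fun n => ∀ c : SClass V x, mu A x L R c = n →
        {b | Relation.ReflTransGen (Step A x L R) c b}.Finite) n ?_
    intro n IH c hc
    have hsub : {b | Relation.ReflTransGen (Step A x L R) c b} ⊆
        {c} ∪ ⋃ c' ∈ {c' | Step A x L R c c'},
          {b | Relation.ReflTransGen (Step A x L R) c' b} := by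
      intro b hb
      rcases Relation.ReflTransGen.cases_head hb with rfl | ⟨c', h1, h2⟩
      · exact Or.inl rfl
      · exact Or.inr (Set.mem_biUnion h1 h2)
    refine Set.Finite.subset (Set.Finite.union (Set.finite_singleton c) ?_) hsub
    refine Set.Finite.biUnion
      ((succs_finite A x L R c).subset fun c' hc' => step_mem A x L R hc') ?_
    intro c' hc'
    exact IH (mu A x L R c') (hc ▸ step_dec hA hE hc') c' rfl
  exact main (mu A x L R c) c rfl

end Succ
/-- the graph `P` of stretching classes constructed from a positive
root `α` is finite and acyclic. -/
theorem P_finite_acyclic {V : Type*} [Fintype V] [DecidableEq V]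
    (A : V → V → ℤ) (hA : IsCartan A) (x : V) (L R : Finset V)
    (hE : IsElastic A x L R) (α : V → ℤ) (hα : IsPosRoot A α) :
    (Reach A x L R α).Finite ∧
    ∀ c ∈ Reach A x L R α, ¬ Relation.TransGen (Step A x L R) c c := by
  constructor
  · exact reach_fin A x L R hA hE (alphaStar x α)
  · intro c _ hcyc
    exact absurd (trans_dec hA hE hcyc) (lt_irrefl _)
end

section
/- Let β, β' be positive roots with β = s_i(β') and β - β' a positive multiple of α_i. Then the fractures of β^⊥ consist of α_i^⊥ ∩ β^⊥ together with all subspaces s_i(F') as F' ranges over the fractures of (β')^⊥. -/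
open Finset

section Real

variable {V : Type*} [Fintype V] [DecidableEq V]

/-- A root viewed as a real vector. -/
def toR (α : V → ℤ) : V → ℝ := fun v => (α v : ℝ)

/-- The pairing between a covector `f ∈ V*` and a root `α`. -/
def pairing (f : V → ℝ) (α : V → ℤ) : ℝ := ∑ v, f v * α v

/-- The reflecting hyperplane `α^⊥ ⊂ V*` of a root `α`. -/
def perp (α : V → ℤ) : Set (V → ℝ) := {f | pairing f α = 0}

/-- Two roots are parallel if they span the same line. -/
def RootParallel (γ δ : V → ℤ) : Prop := ∃ t : ℝ, toR γ = t • toR δ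

/-- The set of positive roots of `A`. -/
def PosRoots (A : V → V → ℤ) : Set (V → ℤ) :=
  {γ | IsRoot A γ ∧ ∀ v, 0 ≤ γ v}

/-- `γ` is basic in the collection of positive roots `S` (of a rank 2 subsystem):
its hyperplane bounds the region of the corresponding subarrangement containing the
base region `D`, witnessed by a point of `γ^⊥` pairing positively with every
positive root of `S` not parallel to `γ`. -/
def IsBasicIn (S : Set (V → ℤ)) (γ : V → ℤ) : Prop :=
  γ ∈ S ∧ ∃ f : V → ℝ, pairing f γ = 0 ∧
    ∀ δ ∈ S, ¬ RootParallel δ γ → 0 < pairing f δ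

/-- The set of positive roots of a set of roots. -/
def posPart (S : Set (V → ℤ)) : Set (V → ℤ) := {γ ∈ S | ∀ v, 0 ≤ γ v}

/-- `S` is a rank 2 subsystem of the root system of `A`: the set of roots lying in
a 2-dimensional subspace which they span. -/
def IsRank2 (A : V → V → ℤ) (S : Set (V → ℤ)) : Prop :=
  ∃ U : Submodule ℝ (V → ℝ), Module.finrank ℝ U = 2 ∧
    S = {γ | IsRoot A γ ∧ toR γ ∈ U} ∧
    Submodule.span ℝ (toR '' S) = U

/-- `α, β` are the fundamental roots of a rank 2 subsystem with positive part `S`: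
every positive root of the subsystem is a nonnegative linear combination of them. -/
def FundPair (S : Set (V → ℤ)) (α β : V → ℤ) : Prop :=
  α ∈ S ∧ β ∈ S ∧ ∀ γ ∈ S, ∃ c d : ℝ, 0 ≤ c ∧ 0 ≤ d ∧
    toR γ = c • toR α + d • toR β

/-- The rank 2 subarrangement generated by `γ^⊥` and `δ^⊥`, described by its set of
positive roots: the positive roots in the span of `γ` and `δ`. -/
def rank2Sub (A : V → V → ℤ) (γ δ : V → ℤ) : Set (V → ℤ) :=
  {ρ ∈ PosRoots A | toR ρ ∈ Submodule.span ℝ {toR γ, toR δ}}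

/-- `γ^⊥` cuts `δ^⊥`: in the rank 2 subarrangement they generate, `γ^⊥` is basic
but `δ^⊥` is not. -/
def Cuts (A : V → V → ℤ) (γ δ : V → ℤ) : Prop :=
  IsBasicIn (rank2Sub A γ δ) γ ∧ ¬ IsBasicIn (rank2Sub A γ δ) δ

/-- `F` is a fracture of `δ^⊥`: the intersection of `δ^⊥` with a hyperplane
cutting it. -/
def IsFracture (A : V → V → ℤ) (δ : V → ℤ) (F : Set (V → ℝ)) : Prop :=
  ∃ γ ∈ PosRoots A, Cuts A γ δ ∧ F = perp γ ∩ perp δ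

/-- The contragradient action of the simple reflection `s_i` on `V*`. -/
def coRef (A : V → V → ℤ) (i : V) (f : V → ℝ) : V → ℝ :=
  fun v => f v - (A i v : ℝ) * f i

end Real


namespace FrShard

variable {V : Type*} [Fintype V] [DecidableEq V]

/-- Action of a word (list of vertices) on integer vectors. -/
def act (A : V → V → ℤ) (w : List V) (α : V → ℤ) : V → ℤ := w.foldr (sRef A) α

variable (A : V → V → ℤ)

lemma act_nil (α : V → ℤ) : act A [] α = α := rfl
lemma act_cons (v : V) (w : List V) (α : V → ℤ) :
    act A (v :: w) α = sRef A v (act A w α) := rfl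
lemma act_append (w u : List V) (α : V → ℤ) :
    act A (w ++ u) α = act A w (act A u α) := by
  simp [act, List.foldr_append]

lemma sum_mul_eq_of_eq_off (c : V → ℤ) {α β : V → ℤ} (v : V)
    (h : ∀ z, z ≠ v → β z = α z) :
    ∑ z, c z * β z = ∑ z, c z * α z + c v * (β v - α v) := by
  have h1 : ∑ z, (c z * β z - c z * α z) = c v * (β v - α v) := by
    rw [Finset.sum_eq_single v]
    · ring
    · intro z _ hz; rw [h z hz]; ring
    · intro h; exact absurd (Finset.mem_univ v) h
  have h2 : ∑ z, (c z * β z - c z * α z) =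
      ∑ z, c z * β z - ∑ z, c z * α z := Finset.sum_sub_distrib _ _
  omega

lemma sRef_apply_ne {y v : V} (h : y ≠ v) (α : V → ℤ) : sRef A v α y = α y := by
  simp [sRef, h]

lemma sRef_apply_self (v : V) (α : V → ℤ) :
    sRef A v α v = α v - ∑ z, A v z * α z := by simp [sRef]

lemma sRef_sRef (hA : IsCartan A) (v : V) (α : V → ℤ) :
    sRef A v (sRef A v α) = α := by
  funext y
  by_cases hy : y = v
  · subst hy
    have key : ∑ z, A y z * (sRef A y α) z
        = ∑ z, A y z * α z + A y y * ((sRef A y α) y - α y) :=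
      sum_mul_eq_of_eq_off (A y) y (fun z hz => sRef_apply_ne A hz α)
    rw [sRef_apply_self, sRef_apply_self, key, sRef_apply_self, hA.diag]
    ring
  · rw [sRef_apply_ne A hy, sRef_apply_ne A hy]

lemma act_reverse_act (hA : IsCartan A) (w : List V) (α : V → ℤ) :
    act A w.reverse (act A w α) = α := by
  induction w generalizing α with
  | nil => rfl
  | cons v w ih =>
      have : (v :: w).reverse = w.reverse ++ [v] := by simp
      rw [this, act_cons, act_append]
      have : act A [v] (sRef A v (act A w α)) = act A w α := by
        simp [act, sRef_sRef A hA]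
      rw [this, ih]

lemma sRef_comb (v : V) (c d : ℤ) (x y : V → ℤ) :
    sRef A v (fun u => c * x u + d * y u) =
      fun u => c * sRef A v x u + d * sRef A v y u := by
  funext u
  have hsum : ∑ z, A v z * (c * x z + d * y z)
      = c * ∑ z, A v z * x z + d * ∑ z, A v z * y z := by
    rw [Finset.mul_sum, Finset.mul_sum, ← Finset.sum_add_distrib]
    exact Finset.sum_congr rfl (fun z _ => by ring)
  by_cases hu : u = v
  · subst hu; simp [sRef, hsum]; ring
  · simp only [sRef, if_neg hu]

lemma act_comb (w : List V) (c d : ℤ) (x y : V → ℤ) :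
    act A w (fun u => c * x u + d * y u) =
      fun u => c * act A w x u + d * act A w y u := by
  induction w with
  | nil => rfl
  | cons v w ih => rw [act_cons, ih, sRef_comb, act_cons, act_cons]

/-- Two words represent the same element. -/
def WE (w w' : List V) : Prop := ∀ α, act A w α = act A w' α

lemma WE_refl (w : List V) : WE A w w := fun _ => rfl
lemma WE_symm {w w' : List V} (h : WE A w w') : WE A w' w := fun α => (h α).symm
lemma WE_trans {w w' w'' : List V} (h : WE A w w') (h' : WE A w' w'') :
    WE A w w'' := fun α => (h α).trans (h' α)

lemma WE_append_right {w w' : List V} (h : WE A w w') (u : List V) :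
    WE A (w ++ u) (w' ++ u) := by
  intro α; rw [act_append, act_append, h]

lemma WE_append_left (w : List V) {u u' : List V} (h : WE A u u') :
    WE A (w ++ u) (w ++ u') := by
  intro α; rw [act_append, act_append, h]

/-- Length of the group element represented by a word. -/
noncomputable def wlen (w : List V) : ℕ := sInf {k | ∃ w', w'.length = k ∧ WE A w w'}

lemma wlen_nonempty (w : List V) : w.length ∈ {k | ∃ w', w'.length = k ∧ WE A w w'} :=
  ⟨w, rfl, WE_refl A w⟩

lemma exists_minrep (w : List V) : ∃ w₀, w₀.length = wlen A w ∧ WE A w w₀ :=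
  Nat.sInf_mem ⟨_, wlen_nonempty A w⟩

lemma wlen_le {w w' : List V} (h : WE A w w') : wlen A w ≤ w'.length :=
  Nat.sInf_le ⟨w', rfl, h⟩

lemma wlen_le_length (w : List V) : wlen A w ≤ w.length := wlen_le A (WE_refl A w)

lemma wlen_congr {w w' : List V} (h : WE A w w') : wlen A w = wlen A w' := by
  unfold wlen
  congr 1
  ext k
  exact ⟨fun ⟨u, hu, he⟩ => ⟨u, hu, WE_trans A (WE_symm A h) he⟩,
         fun ⟨u, hu, he⟩ => ⟨u, hu, WE_trans A h he⟩⟩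

lemma wlen_append_le (w u : List V) : wlen A (w ++ u) ≤ wlen A w + u.length := by
  obtain ⟨w₀, hl, he⟩ := exists_minrep A w
  have := wlen_le A (WE_append_right A he u)
  simpa [hl] using this

/-- Matrix of a single simple reflection. -/
def mat1 (v : V) : Matrix V V ℤ :=
  Matrix.of fun p q => if p = v then (if q = v then (1:ℤ) else 0) - A v q
    else if p = q then 1 else 0

lemma sRef_eq_mat1 (v : V) (x : V → ℤ) (p : V) :
    sRef A v x p = ∑ q, mat1 A v p q * x q := by
  by_cases hp : p = v
  · subst hp
    rw [sRef_apply_self]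
    have hterm : ∀ q, mat1 A p p q * x q = (if q = p then x q else 0) - A p q * x q := by
      intro q; by_cases h : q = p <;> simp [mat1, h] <;> ring
    rw [Finset.sum_congr rfl (fun q _ => hterm q), Finset.sum_sub_distrib,
      Finset.sum_ite_eq' Finset.univ p x]
    simp
  · rw [sRef_apply_ne A hp]
    have hterm : ∀ q, mat1 A v p q * x q = if p = q then x q else 0 := by
      intro q
      simp only [mat1, Matrix.of_apply, if_neg hp]
      by_cases h : p = q <;> simp [h]
    rw [Finset.sum_congr rfl (fun q _ => hterm q), Finset.sum_ite_eq Finset.univ p x]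
    simp

/-- Matrix of a word. -/
def matW (w : List V) : Matrix V V ℤ :=
  Matrix.of fun p q => act A w (simpleRoot q) p

lemma matW_nil : matW A [] = 1 := by
  ext p q
  simp [matW, act, simpleRoot, Matrix.one_apply, eq_comm]

lemma matW_cons (v : V) (w : List V) : matW A (v :: w) = mat1 A v * matW A w := by
  ext p q
  rw [Matrix.mul_apply]
  simp only [matW, Matrix.of_apply, act_cons]
  exact sRef_eq_mat1 A v (act A w (simpleRoot q)) p

lemma det_updateRow_one (v : V) (u : V → ℤ) :
    ((1 : Matrix V V ℤ).updateRow v u).det = u v := by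
  have h1 := Matrix.cramer_transpose_apply (1 : Matrix V V ℤ) u v
  rw [Matrix.transpose_one, Matrix.cramer_one] at h1
  rw [← h1]
  simp

lemma det_mat1 (hA : IsCartan A) (v : V) : (mat1 A v).det = -1 := by
  have hm : mat1 A v = (1 : Matrix V V ℤ).updateRow v
      (fun q => (if q = v then (1:ℤ) else 0) - A v q) := by
    ext p q
    by_cases hp : p = v
    · subst hp; simp [mat1, Matrix.updateRow_self]
    · simp [mat1, Matrix.updateRow_ne hp, Matrix.one_apply, hp]
  rw [hm, det_updateRow_one]
  simp [hA.diag v]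

lemma det_matW (hA : IsCartan A) (w : List V) :
    (matW A w).det = (-1) ^ w.length := by
  induction w with
  | nil => simp [matW_nil]
  | cons v w ih =>
      rw [matW_cons, Matrix.det_mul, det_mat1 A hA, ih]
      rw [List.length_cons, pow_succ]
      ring

lemma WE_parity (hA : IsCartan A) {w w' : List V} (h : WE A w w') :
    w.length % 2 = w'.length % 2 := by
  have hm : matW A w = matW A w' := by
    ext p q
    simp only [matW, Matrix.of_apply]
    rw [h]
  have hd : ((-1 : ℤ)) ^ w.length = (-1) ^ w'.length := by
    rw [← det_matW A hA, ← det_matW A hA, hm]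
  rcases Nat.even_or_odd w.length with he | ho <;>
    rcases Nat.even_or_odd w'.length with he' | ho'
  · obtain ⟨k, hk⟩ := he; obtain ⟨k', hk'⟩ := he'; omega
  · rw [he.neg_one_pow, ho'.neg_one_pow] at hd; norm_num at hd
  · rw [ho.neg_one_pow, he'.neg_one_pow] at hd; norm_num at hd
  · obtain ⟨k, hk⟩ := ho; obtain ⟨k', hk'⟩ := ho'; omega

lemma wlen_parity (hA : IsCartan A) (w : List V) : wlen A w % 2 = w.length % 2 := by
  obtain ⟨w₀, hl, he⟩ := exists_minrep A w
  rw [← hl]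
  exact WE_parity A hA (WE_symm A he)


lemma WE_append_cancel (hA : IsCartan A) (w : List V) (s : V) :
    WE A ((w ++ [s]) ++ [s]) w := by
  intro α
  rw [act_append, act_append]
  show act A w (act A [s] (act A [s] α)) = act A w α
  simp only [act, List.foldr_cons, List.foldr_nil]
  rw [sRef_sRef A hA]

lemma wlen_append_single_ne (hA : IsCartan A) (w : List V) (s : V) :
    wlen A (w ++ [s]) ≠ wlen A w := by
  have h1 := wlen_parity A hA (w ++ [s])
  have h2 := wlen_parity A hA w
  rw [List.length_append] at h1
  simp only [List.length_singleton] at h1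
  omega

lemma wlen_step (hA : IsCartan A) (w : List V) (s : V) :
    wlen A (w ++ [s]) = wlen A w + 1 ∨ wlen A (w ++ [s]) + 1 = wlen A w := by
  have h1 : wlen A (w ++ [s]) ≤ wlen A w + 1 := by
    simpa using wlen_append_le A w [s]
  have h2 : wlen A w ≤ wlen A (w ++ [s]) + 1 := by
    have e := wlen_congr A (WE_symm A (WE_append_cancel A hA w s))
    have h3 := wlen_append_le A (w ++ [s]) [s]
    simp only [List.length_singleton] at h3
    omega
  have := wlen_append_single_ne A hA w s
  omega

/-! ### Dihedral machinery -/

/-- Alternating word `[…, y, x, y, x]` of given length (ending with `x`). -/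
def altW (x y : V) : ℕ → List V
  | 0 => []
  | k+1 => (if k % 2 = 0 then x else y) :: altW x y k

lemma altW_mem (x y : V) (k : ℕ) : ∀ v ∈ altW x y k, v = x ∨ v = y := by
  induction k with
  | zero => intro v hv; simp [altW] at hv
  | succ k ih =>
      intro v hv
      rw [altW] at hv
      rcases List.mem_cons.1 hv with h | h
      · by_cases hk : k % 2 = 0 <;> simp [hk] at h <;> [exact Or.inl h; exact Or.inr h]
      · exact ih v h

lemma altW_suffix (x y : V) {k n : ℕ} (h : k ≤ n) :
    ∃ P : List V, altW x y n = P ++ altW x y k ∧ P.length = n - k := by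
  induction n with
  | zero =>
      have : k = 0 := Nat.le_zero.1 h
      exact ⟨[], by simp [this], by simp⟩
  | succ n ih =>
      rcases Nat.lt_or_ge k (n+1) with hlt | hge
      · obtain ⟨P, hP, hl⟩ := ih (by omega)
        refine ⟨(if n % 2 = 0 then x else y) :: P, ?_, ?_⟩
        · rw [altW, hP]; rfl
        · simp [hl]; omega
      · have : k = n + 1 := by omega
        exact ⟨[], by simp [this], by simp [this]⟩

/-- Coefficients of the alternating-word image of `αₛ` (words ending in `t`). -/
def rT (a b : ℤ) : ℕ → ℤ × ℤ
  | 0 => (1, 0)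
  | k+1 =>
      if k % 2 = 0 then ((rT a b k).1, b * (rT a b k).1 - (rT a b k).2)
      else (-(rT a b k).1 + a * (rT a b k).2, (rT a b k).2)

/-- An integer vector supported on `{s, t}`. -/
def pairVec (s t : V) (c d : ℤ) : V → ℤ :=
  fun u => c * simpleRoot s u + d * simpleRoot t u

lemma sum_mul_simpleRoot (g : V → ℤ) (v : V) :
    ∑ z, g z * simpleRoot v z = g v := by
  have : ∀ z, g z * simpleRoot v z = if z = v then g z else 0 := by
    intro z; by_cases h : z = v <;> simp [simpleRoot, h]
  rw [Finset.sum_congr rfl (fun z _ => this z), Finset.sum_ite_eq' Finset.univ v g]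
  simp

lemma sum_mul_pairVec (g : V → ℤ) (s t : V) (c d : ℤ) :
    ∑ z, g z * pairVec s t c d z = c * g s + d * g t := by
  have : ∀ z, g z * pairVec s t c d z
      = c * (g z * simpleRoot s z) + d * (g z * simpleRoot t z) := by
    intro z; simp [pairVec]; ring
  rw [Finset.sum_congr rfl (fun z _ => this z), Finset.sum_add_distrib,
    ← Finset.mul_sum, ← Finset.mul_sum, sum_mul_simpleRoot, sum_mul_simpleRoot]

lemma sRef_pairVec_s (hA : IsCartan A) {s t : V} (hst : s ≠ t) (c d : ℤ) :
    sRef A s (pairVec s t c d) = pairVec s t (-c + (-A s t) * d) d := by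
  funext u
  by_cases hu : u = s
  · subst hu
    rw [sRef_apply_self, sum_mul_pairVec]
    simp [pairVec, simpleRoot, hA.diag, hst, Ne.symm hst]
    ring
  · rw [sRef_apply_ne A hu]
    simp [pairVec, simpleRoot, hu]

lemma sRef_pairVec_t (hA : IsCartan A) {s t : V} (hst : s ≠ t) (c d : ℤ) :
    sRef A t (pairVec s t c d) = pairVec s t c ((-A t s) * c - d) := by
  funext u
  by_cases hu : u = t
  · subst hu
    rw [sRef_apply_self, sum_mul_pairVec]
    simp [pairVec, simpleRoot, hA.diag, hst, Ne.symm hst]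
    ring
  · rw [sRef_apply_ne A hu]
    simp [pairVec, simpleRoot, hu]

lemma act_altW (hA : IsCartan A) {s t : V} (hst : s ≠ t) (k : ℕ) :
    act A (altW t s k) (simpleRoot s)
      = pairVec s t (rT (-A s t) (-A t s) k).1 (rT (-A s t) (-A t s) k).2 := by
  induction k with
  | zero =>
      funext u
      simp [act, altW, rT, pairVec, simpleRoot]
  | succ k ih =>
      rw [altW]
      by_cases hk : k % 2 = 0
      · rw [if_pos hk]
        rw [act_cons, ih, sRef_pairVec_t A hA hst, rT, if_pos hk]
      · rw [if_neg hk]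
        rw [act_cons, ih, sRef_pairVec_s A hA hst, rT, if_neg hk]

lemma rT_nonneg_infinite {a b : ℤ} (ha : 1 ≤ a) (hb : 1 ≤ b) (hab : 4 ≤ a * b) (k : ℕ) :
    0 ≤ (rT a b k).1 ∧ 0 ≤ (rT a b k).2 ∧
    (k % 2 = 0 → 1 ≤ (rT a b k).1 ∧ 2 * (rT a b k).2 ≤ b * (rT a b k).1) ∧
    (k % 2 = 1 → 1 ≤ (rT a b k).2 ∧ 2 * (rT a b k).1 ≤ a * (rT a b k).2) := by
  have helper : ∀ x : ℤ, 1 ≤ 2 * x → 1 ≤ x := fun x h => by omega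
  induction k with
  | zero => refine ⟨by norm_num [rT], by norm_num [rT], fun _ => ⟨by norm_num [rT], ?_⟩, by omega⟩
            norm_num [rT]; linarith
  | succ k ih =>
      obtain ⟨h1, h2, heven, hodd⟩ := ih
      set c := (rT a b k).1 with hc
      set d := (rT a b k).2 with hd
      by_cases hk : k % 2 = 0
      · obtain ⟨hc1, hcd⟩ := heven hk
        have hstep : rT a b (k+1) = (c, b * c - d) := by rw [rT, if_pos hk]
        have ebc : 1 ≤ b * c := by
          have := mul_le_mul hb hc1 zero_le_one (by linarith)
          linarith
        have e6 : 4 * c ≤ a * b * c := by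
          have := mul_le_mul_of_nonneg_right hab h1
          linarith
        have e7 : a * (2 * d) ≤ a * (b * c) := mul_le_mul_of_nonneg_left hcd (by linarith)
        have g1 : 0 ≤ b * c - d := by linarith
        have g2 : 1 ≤ b * c - d := helper _ (by linarith)
        have g3 : 2 * c ≤ a * (b * c - d) := by nlinarith
        rw [hstep]
        exact ⟨h1, g1, by intro h; omega, fun _ => ⟨g2, g3⟩⟩
      · have hk' : k % 2 = 1 := by omega
        obtain ⟨hd1, hdc⟩ := hodd hk'
        have hstep : rT a b (k+1) = (-c + a * d, d) := by rw [rT, if_neg hk]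
        have ead : 1 ≤ a * d := by
          have := mul_le_mul ha hd1 zero_le_one (by linarith)
          linarith
        have e4 : b * (2 * c) ≤ b * (a * d) := mul_le_mul_of_nonneg_left hdc (by linarith)
        have e5 : 4 * d ≤ a * b * d := by
          have := mul_le_mul_of_nonneg_right hab h2
          linarith
        have g1 : 0 ≤ -c + a * d := by linarith
        have g2 : 1 ≤ -c + a * d := helper _ (by linarith)
        have g3 : 2 * d ≤ b * (-c + a * d) := by nlinarith
        rw [hstep]
        exact ⟨g1, h2, fun _ => ⟨g2, g3⟩, by intro h; omega⟩

/-- The two-variable state machine for words in `{s, t}`. -/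
def dstate (s : V) (a b Cs Ct : ℤ) (w : List V) : ℤ × ℤ :=
  w.foldr (fun v pq => if v = s then (-pq.1 - Cs + a * pq.2, pq.2)
    else (pq.1, -pq.2 - Ct + b * pq.1)) (0, 0)

lemma dstate_cons (s : V) (a b Cs Ct : ℤ) (v : V) (w : List V) :
    dstate s a b Cs Ct (v :: w) = if v = s then
      (-(dstate s a b Cs Ct w).1 - Cs + a * (dstate s a b Cs Ct w).2,
        (dstate s a b Cs Ct w).2)
    else ((dstate s a b Cs Ct w).1,
        -(dstate s a b Cs Ct w).2 - Ct + b * (dstate s a b Cs Ct w).1) := rfl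

lemma act_nf (hA : IsCartan A) {s t : V} (hst : s ≠ t) (w : List V)
    (hw : ∀ v ∈ w, v = s ∨ v = t) (α : V → ℤ) :
    act A w α = fun u => α u
      + (dstate s (-A s t) (-A t s) (∑ z, A s z * α z) (∑ z, A t z * α z) w).1 * simpleRoot s u
      + (dstate s (-A s t) (-A t s) (∑ z, A s z * α z) (∑ z, A t z * α z) w).2 * simpleRoot t u := by
  set a := -A s t with hadef
  set b := -A t s with hbdef
  set Cs := ∑ z, A s z * α z with hCs
  set Ct := ∑ z, A t z * α z with hCt
  induction w with
  | nil => funext u; simp [act, dstate]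
  | cons v w ih =>
      have hw' : ∀ v ∈ w, v = s ∨ v = t := fun v hv => hw v (List.mem_cons_of_mem _ hv)
      set p := (dstate s a b Cs Ct w).1 with hp
      set q := (dstate s a b Cs Ct w).2 with hq
      have hsum : ∀ g : V → ℤ, ∑ z, g z * (α z + p * simpleRoot s z + q * simpleRoot t z)
          = (∑ z, g z * α z) + p * g s + q * g t := by
        intro g
        have hterm : ∀ z, g z * (α z + p * simpleRoot s z + q * simpleRoot t z)
            = g z * α z + p * (g z * simpleRoot s z) + q * (g z * simpleRoot t z) := by
          intro z; ring
        rw [Finset.sum_congr rfl (fun z _ => hterm z), Finset.sum_add_distrib,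
          Finset.sum_add_distrib, ← Finset.mul_sum, ← Finset.mul_sum,
          sum_mul_simpleRoot, sum_mul_simpleRoot]
      rw [act_cons, ih hw']
      rcases hw v List.mem_cons_self with hv | hv
      · have hds : dstate s a b Cs Ct (v :: w) = (-p - Cs + a * q, q) := by
          rw [dstate_cons, if_pos hv, ← hp, ← hq]
        rw [hds, hv]
        funext u
        by_cases hu : u = s
        · rw [hu, sRef_apply_self, hsum (A s)]
          have hAa : A s t = -a := by rw [hadef]; ring
          rw [hAa]
          simp only [simpleRoot, eq_self_iff_true, if_true, if_neg hst, hA.diag]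
          ring
        · rw [sRef_apply_ne A hu]
          simp only [simpleRoot, if_neg hu]
          ring
      · have hvs : v ≠ s := by rw [hv]; exact Ne.symm hst
        have hds : dstate s a b Cs Ct (v :: w) = (p, -q - Ct + b * p) := by
          rw [dstate_cons, if_neg hvs, ← hp, ← hq]
        rw [hds, hv]
        funext u
        by_cases hu : u = t
        · rw [hu, sRef_apply_self, hsum (A t)]
          have hAb : A t s = -b := by rw [hbdef]; ring
          rw [hAb]
          simp only [simpleRoot, eq_self_iff_true, if_true, if_neg (Ne.symm hst), hA.diag]
          ring
        · rw [sRef_apply_ne A hu]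
          simp only [simpleRoot, if_neg hu]
          ring

lemma braid_of_dstate (hA : IsCartan A) {s t : V} (hst : s ≠ t) (m : ℕ)
    (h : ∀ Cs Ct : ℤ, dstate s (-A s t) (-A t s) Cs Ct (altW t s m)
      = dstate s (-A s t) (-A t s) Cs Ct (altW s t m)) :
    ∀ α, act A (altW t s m) α = act A (altW s t m) α := by
  intro α
  rw [act_nf A hA hst _ (fun v hv => (altW_mem t s m v hv).symm) α,
    act_nf A hA hst _ (altW_mem s t m) α, h]

lemma altW_one (x y : V) : altW x y 1 = [x] := by simp [altW]

lemma shorten (hA : IsCartan A) {s t : V} (hst : s ≠ t) {m k : ℕ}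
    (hm : 1 ≤ m) (hk : m ≤ k)
    (hbraid : ∀ α, act A (altW t s m) α = act A (altW s t m) α) :
    ∃ z : List V, z.length + 1 ≤ k ∧ WE A (altW t s k ++ [s]) z := by
  obtain ⟨P, hP, hPl⟩ := altW_suffix t s hk
  obtain ⟨Q, hQ, hQl⟩ := altW_suffix s t (show 1 ≤ m from hm)
  rw [altW_one] at hQ
  refine ⟨P ++ Q, by simp [hPl, hQl]; omega, ?_⟩
  intro α
  rw [act_append, hP, act_append]
  show act A P (act A (altW t s m) (act A [s] α)) = act A (P ++ Q) α
  rw [hbraid, hQ, act_append, act_append]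
  have hss : act A [s] (act A [s] α) = α := by
    show sRef A s (act A [] (sRef A s (act A [] α))) = α
    show sRef A s (sRef A s α) = α
    rw [sRef_sRef A hA]
  rw [hss, ← act_append]


lemma dstate_nil (s : V) (a b Cs Ct : ℤ) : dstate s a b Cs Ct [] = (0, 0) := rfl

lemma dihedral_dichotomy (hA : IsCartan A) {s t : V} (hst : s ≠ t) (k : ℕ) :
    (0 ≤ (rT (-A s t) (-A t s) k).1 ∧ 0 ≤ (rT (-A s t) (-A t s) k).2) ∨
    (∃ z : List V, z.length + 1 ≤ k ∧ WE A (altW t s k ++ [s]) z) := by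
  obtain ⟨a, ha'⟩ : ∃ a, -A s t = a := ⟨_, rfl⟩
  obtain ⟨b, hb'⟩ : ∃ b, -A t s = b := ⟨_, rfl⟩
  rw [ha', hb']
  have ha : 0 ≤ a := by have := hA.offdiag s t hst; omega
  have hb : 0 ≤ b := by have := hA.offdiag t s (Ne.symm hst); omega
  have hz1 : a = 0 → b = 0 := by
    intro h; have := hA.symm_zero s t (by omega); omega
  have hz2 : b = 0 → a = 0 := by
    intro h; have := hA.symm_zero t s (by omega); omega
  by_cases hbig : 4 ≤ a * b
  · have ha1 : 1 ≤ a := by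
      by_contra h
      have haz : a = 0 := by omega
      have hbz := hz1 haz
      rw [haz, hbz] at hbig; norm_num at hbig
    have hb1 : 1 ≤ b := by
      by_contra h
      have hbz : b = 0 := by omega
      have haz := hz2 hbz
      rw [haz, hbz] at hbig; norm_num at hbig
    obtain ⟨h1, h2, _, _⟩ := rT_nonneg_infinite ha1 hb1 hbig k
    exact Or.inl ⟨h1, h2⟩
  · have hab4 : a * b < 4 := lt_of_not_ge hbig
    have ha3 : a ≤ 3 := by
      by_cases hbz : b = 0
      · rw [hz2 hbz]; norm_num
      · have hb1 : 1 ≤ b := by omega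
        nlinarith
    have hb3 : b ≤ 3 := by
      by_cases haz : a = 0
      · rw [hz1 haz]; norm_num
      · have ha1 : 1 ≤ a := by omega
        nlinarith
    have braid : ∀ m : ℕ,
        (∀ Cs Ct : ℤ, dstate s a b Cs Ct (altW t s m) = dstate s a b Cs Ct (altW s t m)) →
        m ≤ k → 1 ≤ m →
        (∃ z : List V, z.length + 1 ≤ k ∧ WE A (altW t s k ++ [s]) z) := by
      intro m hbr hmk hm1
      refine shorten A hA hst hm1 hmk (braid_of_dstate A hA hst m ?_)
      intro Cs Ct
      rw [ha', hb']
      exact hbr Cs Ct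
    clear ha' hb'
    interval_cases a <;> interval_cases b
    -- (0, 0), m = 2
    · rcases Nat.lt_or_ge k 2 with hk | hk
      · refine Or.inl ?_
        clear braid hbig
        interval_cases k <;> decide
      · refine Or.inr (braid 2 ?_ hk (by norm_num))
        intro Cs Ct
        show dstate s 0 0 Cs Ct [s, t] = dstate s 0 0 Cs Ct [t, s]
        simp [dstate_cons, dstate_nil, Ne.symm hst, Prod.ext_iff] <;>
          (first | (constructor <;> ring) | ring)
    · exact absurd (hz1 rfl) (by norm_num)
    · exact absurd (hz1 rfl) (by norm_num)
    · exact absurd (hz1 rfl) (by norm_num)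
    · exact absurd (hz2 rfl) (by norm_num)
    -- (1, 1), m = 3
    · rcases Nat.lt_or_ge k 3 with hk | hk
      · refine Or.inl ?_
        clear braid hbig
        interval_cases k <;> decide
      · refine Or.inr (braid 3 ?_ hk (by norm_num))
        intro Cs Ct
        show dstate s 1 1 Cs Ct [t, s, t] = dstate s 1 1 Cs Ct [s, t, s]
        simp [dstate_cons, dstate_nil, Ne.symm hst, Prod.ext_iff] <;>
          (first | (constructor <;> ring) | ring)
    -- (1, 2), m = 4
    · rcases Nat.lt_or_ge k 4 with hk | hk
      · refine Or.inl ?_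
        clear braid hbig
        interval_cases k <;> decide
      · refine Or.inr (braid 4 ?_ hk (by norm_num))
        intro Cs Ct
        show dstate s 1 2 Cs Ct [s, t, s, t] = dstate s 1 2 Cs Ct [t, s, t, s]
        simp [dstate_cons, dstate_nil, Ne.symm hst, Prod.ext_iff] <;>
          (first | (constructor <;> ring) | ring)
    -- (1, 3), m = 6
    · rcases Nat.lt_or_ge k 6 with hk | hk
      · refine Or.inl ?_
        clear braid hbig
        interval_cases k <;> decide
      · refine Or.inr (braid 6 ?_ hk (by norm_num))
        intro Cs Ct
        show dstate s 1 3 Cs Ct [s, t, s, t, s, t] = dstate s 1 3 Cs Ct [t, s, t, s, t, s]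
        simp [dstate_cons, dstate_nil, Ne.symm hst, Prod.ext_iff] <;>
          (first | (constructor <;> ring) | ring)
    · exact absurd (hz2 rfl) (by norm_num)
    -- (2, 1), m = 4
    · rcases Nat.lt_or_ge k 4 with hk | hk
      · refine Or.inl ?_
        clear braid hbig
        interval_cases k <;> decide
      · refine Or.inr (braid 4 ?_ hk (by norm_num))
        intro Cs Ct
        show dstate s 2 1 Cs Ct [s, t, s, t] = dstate s 2 1 Cs Ct [t, s, t, s]
        simp [dstate_cons, dstate_nil, Ne.symm hst, Prod.ext_iff] <;>
          (first | (constructor <;> ring) | ring)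
    · exact absurd hab4 (by norm_num)
    · exact absurd hab4 (by norm_num)
    · exact absurd (hz2 rfl) (by norm_num)
    -- (3, 1), m = 6
    · rcases Nat.lt_or_ge k 6 with hk | hk
      · refine Or.inl ?_
        clear braid hbig
        interval_cases k <;> decide
      · refine Or.inr (braid 6 ?_ hk (by norm_num))
        intro Cs Ct
        show dstate s 3 1 Cs Ct [s, t, s, t, s, t] = dstate s 3 1 Cs Ct [t, s, t, s, t, s]
        simp [dstate_cons, dstate_nil, Ne.symm hst, Prod.ext_iff] <;>
          (first | (constructor <;> ring) | ring)
    · exact absurd hab4 (by norm_num)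
    · exact absurd hab4 (by norm_num)


lemma altW_succ (x y : V) (k : ℕ) :
    altW x y (k+1) = (if k % 2 = 0 then x else y) :: altW x y k := rfl

lemma greedy (hA : IsCartan A) {s t : V} (w₀ : List V) (n : ℕ) :
    ∀ j k, 1 ≤ k → j + k = n →
    wlen A (w₀ ++ (altW t s k).reverse) = j →
    wlen A (w₀ ++ (altW t s (k-1)).reverse) = j + 1 →
    ∃ j' k', 1 ≤ k' ∧ j' + k' = n ∧
      wlen A (w₀ ++ (altW t s k').reverse) = j' ∧
      j' < wlen A ((w₀ ++ (altW t s k').reverse) ++ [s]) ∧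
      j' < wlen A ((w₀ ++ (altW t s k').reverse) ++ [t]) := by
  intro j
  induction j using Nat.strong_induction_on with
  | _ j ih =>
    intro k hk1 hjk hu hprev
    obtain ⟨k₀, rfl⟩ : ∃ k₀, k = k₀ + 1 := ⟨k - 1, by omega⟩
    simp only [Nat.add_sub_cancel] at hprev
    set u := w₀ ++ (altW t s (k₀+1)).reverse with hudef
    have hsucc2 : altW t s (k₀+2) = (if (k₀+1) % 2 = 0 then t else s) :: altW t s (k₀+1) :=
      altW_succ t s (k₀+1)
    have hsucc1 : altW t s (k₀+1) = (if k₀ % 2 = 0 then t else s) :: altW t s k₀ :=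
      altW_succ t s k₀
    have hnext : u ++ [if (k₀+1) % 2 = 0 then t else s]
        = w₀ ++ (altW t s (k₀+2)).reverse := by
      rw [hudef, hsucc2, List.reverse_cons, List.append_assoc]
    have huprev : u = (w₀ ++ (altW t s k₀).reverse) ++ [if k₀ % 2 = 0 then t else s] := by
      rw [hudef, hsucc1, List.reverse_cons, List.append_assoc]
    have hprevWE : WE A (u ++ [if k₀ % 2 = 0 then t else s]) (w₀ ++ (altW t s k₀).reverse) := by
      rw [huprev]
      exact WE_append_cancel A hA _ _
    have hprevlen : wlen A (u ++ [if k₀ % 2 = 0 then t else s]) = j + 1 := by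
      rw [wlen_congr A hprevWE, hprev]
    rcases wlen_step A hA u (if (k₀+1) % 2 = 0 then t else s) with hup | hdown
    · -- terminal
      have hnklen : wlen A (u ++ [if (k₀+1) % 2 = 0 then t else s]) = j + 1 := by
        rw [hup, hu]
      refine ⟨j, k₀+1, hk1, hjk, hu, ?_, ?_⟩
      · rw [← hudef]
        by_cases hpar : k₀ % 2 = 0
        · rw [if_neg (by omega : ¬ (k₀+1) % 2 = 0)] at hnklen; omega
        · rw [if_neg hpar] at hprevlen; omega
      · rw [← hudef]
        by_cases hpar : k₀ % 2 = 0
        · rw [if_pos hpar] at hprevlen; omega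
        · rw [if_pos (by omega : (k₀+1) % 2 = 0)] at hnklen; omega
    · -- descend
      have hjpos : 1 ≤ j := by omega
      refine ih (j-1) (by omega) (k₀+2) (by omega) (by omega) ?_ ?_
      · rw [← hnext]; omega
      · show wlen A (w₀ ++ (altW t s (k₀+1)).reverse) = j - 1 + 1
        rw [← hudef, hu]
        omega

lemma act_simple_nonneg (hA : IsCartan A) :
    ∀ n, ∀ w : List V, wlen A w = n → ∀ s, wlen A w < wlen A (w ++ [s]) →
    ∀ u, 0 ≤ act A w (simpleRoot s) u := by
  intro n
  induction n using Nat.strong_induction_on with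
  | _ n ih =>
    intro w hw s hs u
    obtain ⟨w₀, hl, he⟩ := exists_minrep A w
    have hact : act A w (simpleRoot s) = act A w₀ (simpleRoot s) := he _
    rw [hact]
    have hww₀ : wlen A w = wlen A w₀ := wlen_congr A he
    have hw₀ : wlen A w₀ = n := by omega
    have hs₀ : wlen A w₀ < wlen A (w₀ ++ [s]) := by
      have h2 : wlen A (w ++ [s]) = wlen A (w₀ ++ [s]) :=
        wlen_congr A (WE_append_right A he [s])
      omega
    rcases Nat.eq_zero_or_pos n with hn0 | hn1
    · have hnil : w₀ = [] := List.length_eq_zero_iff.mp (by omega)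
      rw [hnil]
      show 0 ≤ simpleRoot s u
      by_cases h : u = s <;> simp [simpleRoot, h]
    · have hw₀ne : w₀ ≠ [] := by
        intro h; rw [h] at hl; simp at hl; omega
      set t := w₀.getLast hw₀ne with ht
      set w₁ := w₀.dropLast with hw₁def
      have hw₀eq : w₀ = w₁ ++ [t] := (List.dropLast_append_getLast hw₀ne).symm
      have hl1 : w₁.length = n - 1 := by
        rw [hw₁def, List.length_dropLast]; omega
      have hlen1le : wlen A w₁ ≤ n - 1 := le_trans (wlen_le_length A w₁) (by omega)
      have hlen1 : wlen A w₁ = n - 1 := by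
        by_contra hne
        obtain ⟨w₁', hl', he'⟩ := exists_minrep A w₁
        have hWE : WE A w₀ (w₁' ++ [t]) := by
          rw [hw₀eq]; exact WE_append_right A he' [t]
        have hle := wlen_le A hWE
        rw [List.length_append] at hle
        simp only [List.length_singleton] at hle
        omega
      have hst : s ≠ t := by
        intro hst
        have hWE : WE A (w₀ ++ [s]) w₁ := by
          rw [hst, hw₀eq]; exact WE_append_cancel A hA w₁ t
        have h2 := wlen_congr A hWE
        omega
      have hstart : wlen A (w₀ ++ (altW t s 1).reverse) = n - 1 := by
        rw [altW_one]
        have hWE : WE A (w₀ ++ [t]) w₁ := by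
          rw [hw₀eq]; exact WE_append_cancel A hA w₁ t
        show wlen A (w₀ ++ [t]) = n - 1
        rw [wlen_congr A hWE, hlen1]
      have hprev0 : wlen A (w₀ ++ (altW t s (1-1)).reverse) = (n-1) + 1 := by
        show wlen A (w₀ ++ (altW t s 0).reverse) = (n-1)+1
        have : altW t s 0 = [] := rfl
        rw [this, List.reverse_nil, List.append_nil, hw₀]
        omega
      obtain ⟨j', k', hk'1, hjk', hu', hsgt, htgt⟩ :=
        greedy A hA w₀ n (n-1) 1 (le_refl 1) (by omega) hstart hprev0
      set u' := w₀ ++ (altW t s k').reverse with hu'def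
      have hWEw₀ : WE A (u' ++ altW t s k') w₀ := by
        intro α
        rw [hu'def, List.append_assoc, act_append, act_append,
          act_reverse_act A hA (altW t s k') α]
      rcases dihedral_dichotomy A hA hst k' with ⟨hc, hd⟩ | ⟨z, hzlen, hzWE⟩
      · have hformula : act A w₀ (simpleRoot s)
            = act A u' (act A (altW t s k') (simpleRoot s)) := by
          rw [← act_append]; exact (hWEw₀ _).symm
        rw [hformula, act_altW A hA hst k']
        rw [show pairVec s t (rT (-A s t) (-A t s) k').1 (rT (-A s t) (-A t s) k').2
          = (fun u => (rT (-A s t) (-A t s) k').1 * simpleRoot s u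
            + (rT (-A s t) (-A t s) k').2 * simpleRoot t u) from rfl]
        rw [act_comb]
        have hj'n : j' < n := by omega
        have h1 := ih j' hj'n u' hu' s (by omega) u
        have h2 := ih j' hj'n u' hu' t (by omega) u
        exact add_nonneg (mul_nonneg hc h1) (mul_nonneg hd h2)
      · exfalso
        have hWEfin : WE A (w₀ ++ [s]) (u' ++ z) := by
          intro α
          have e1 : act A (w₀ ++ [s]) α = act A w₀ (sRef A s α) := by
            rw [act_append]; rfl
          rw [e1, ← hWEw₀ (sRef A s α), act_append]
          have e2 : act A (altW t s k') (sRef A s α) = act A (altW t s k' ++ [s]) α := by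
            rw [act_append]; rfl
          rw [e2, hzWE α, ← act_append]
        have h3 : wlen A (w₀ ++ [s]) = wlen A (u' ++ z) := wlen_congr A hWEfin
        have h4 := wlen_append_le A u' z
        omega

lemma sRef_simpleRoot_self (hA : IsCartan A) (v : V) :
    sRef A v (simpleRoot v) = fun u => -(simpleRoot v u) := by
  funext y
  by_cases hy : y = v
  · subst hy
    rw [sRef_apply_self, sum_mul_simpleRoot, hA.diag]
    simp [simpleRoot]
  · rw [sRef_apply_ne A hy]
    simp [simpleRoot, hy]

lemma act_neg (w : List V) (x : V → ℤ) :
    act A w (fun u => -(x u)) = fun u => -(act A w x u) := by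
  have e : (fun u => -(x u)) = (fun u => (-1) * x u + 0 * x u) := by funext u; ring
  rw [e, act_comb]
  funext u; ring

lemma isRoot_iff_act (α : V → ℤ) :
    IsRoot A α ↔ ∃ w v, α = act A w (simpleRoot v) := by
  constructor
  · intro h
    induction h with
    | simple v => exact ⟨[], v, rfl⟩
    | reflect v h ih =>
        obtain ⟨w, v', rfl⟩ := ih
        exact ⟨v :: w, v', rfl⟩
  · rintro ⟨w, v, rfl⟩
    induction w with
    | nil => exact IsRoot.simple v
    | cons x w ih => exact IsRoot.reflect x ih

theorem isRoot_nonneg_or_nonpos (hA : IsCartan A) {α : V → ℤ} (h : IsRoot A α) :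
    (∀ v, 0 ≤ α v) ∨ (∀ v, α v ≤ 0) := by
  obtain ⟨w, v, rfl⟩ := (isRoot_iff_act A α).mp h
  rcases wlen_step A hA w v with hup | hdown
  · left
    exact act_simple_nonneg A hA (wlen A w) w rfl v (by omega)
  · right
    obtain ⟨u₀, hl, he⟩ := exists_minrep A (w ++ [v])
    have h1 : WE A (u₀ ++ [v]) ((w ++ [v]) ++ [v]) :=
      WE_append_right A (WE_symm A he) [v]
    have h2 : WE A (u₀ ++ [v]) w := WE_trans A h1 (WE_append_cancel A hA w v)
    have h3 : wlen A (u₀ ++ [v]) = wlen A w := wlen_congr A h2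
    have h4 : wlen A u₀ = wlen A (w ++ [v]) := wlen_congr A (WE_symm A he)
    have h5 := act_simple_nonneg A hA (wlen A u₀) u₀ rfl v (by omega)
    intro y
    have e1 : act A w (simpleRoot v) = act A (w ++ [v]) (sRef A v (simpleRoot v)) := by
      rw [act_append]
      show act A w (simpleRoot v) = act A w (act A [v] (sRef A v (simpleRoot v)))
      have : act A [v] (sRef A v (simpleRoot v)) = simpleRoot v := by
        show sRef A v (sRef A v (simpleRoot v)) = simpleRoot v
        rw [sRef_sRef A hA]
      rw [this]
    rw [e1, he, sRef_simpleRoot_self A hA, act_neg]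
    show -(act A u₀ (simpleRoot v) y) ≤ 0
    have := h5 y
    omega


/-! ### Geometric lemmas -/

lemma sRef_zero (v : V) : sRef A v (0 : V → ℤ) = 0 := by
  funext y
  by_cases hy : y = v
  · subst hy; simp [sRef]
  · simp [sRef, hy]

lemma isRoot_ne_zero (hA : IsCartan A) {α : V → ℤ} (h : IsRoot A α) : α ≠ 0 := by
  induction h with
  | simple v =>
      intro he
      have := congrFun he v
      simp [simpleRoot] at this
  | reflect v h ih =>
      intro he
      apply ih
      have e := congrArg (sRef A v) he
      rw [sRef_sRef A hA, sRef_zero] at e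
      exact e

lemma toR_eq_zero_iff (α : V → ℤ) : toR α = 0 ↔ α = 0 := by
  constructor
  · intro h
    funext v
    have := congrFun h v
    simpa [toR] using this
  · rintro rfl
    funext v; simp [toR]

lemma posRoot_toR_ne (hA : IsCartan A) {γ : V → ℤ} (hγ : γ ∈ PosRoots A) : toR γ ≠ 0 := by
  intro h
  exact isRoot_ne_zero A hA hγ.1 ((toR_eq_zero_iff γ).mp h)

lemma rootParallel_symm {γ δ : V → ℤ} (hγ : toR γ ≠ 0) (h : RootParallel γ δ) :
    RootParallel δ γ := by
  obtain ⟨u, hu⟩ := h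
  have hune : u ≠ 0 := by intro h0; rw [h0, zero_smul] at hu; exact hγ hu
  exact ⟨u⁻¹, by rw [hu, smul_smul, inv_mul_cancel₀ hune, one_smul]⟩

lemma sum_mul_eq_of_eq_offR (c : V → ℝ) {x y : V → ℝ} (v : V)
    (h : ∀ z, z ≠ v → y z = x z) :
    ∑ z, c z * y z = ∑ z, c z * x z + c v * (y v - x v) := by
  have h1 : ∑ z, (c z * y z - c z * x z) = c v * (y v - x v) := by
    rw [Finset.sum_eq_single v]
    · ring
    · intro z _ hz; rw [h z hz]; ring
    · intro h; exact absurd (Finset.mem_univ v) h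
  have h2 : ∑ z, (c z * y z - c z * x z) =
      ∑ z, c z * y z - ∑ z, c z * x z := Finset.sum_sub_distrib _ _
  linarith

lemma cast_sum_eq (i : V) (γ : V → ℤ) :
    ((∑ z, A i z * γ z : ℤ) : ℝ) = ∑ z, (A i z : ℝ) * (γ z : ℝ) := by
  push_cast
  rfl

lemma pairing_coRef (i : V) (f : V → ℝ) (γ : V → ℤ) :
    pairing (coRef A i f) γ = pairing f (sRef A i γ) := by
  have hL : pairing (coRef A i f) γ
      = pairing f γ - f i * ∑ z, (A i z : ℝ) * (γ z : ℝ) := by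
    unfold pairing coRef
    rw [Finset.mul_sum, ← Finset.sum_sub_distrib]
    exact Finset.sum_congr rfl (fun v _ => by ring)
  have hR : pairing f (sRef A i γ)
      = pairing f γ - f i * ∑ z, (A i z : ℝ) * (γ z : ℝ) := by
    unfold pairing
    have key := sum_mul_eq_of_eq_offR f (x := toR γ) (y := toR (sRef A i γ)) i
      (fun z hz => by simp [toR, sRef_apply_ne A hz])
    have e1 : ∑ v, f v * ((sRef A i γ v : ℤ) : ℝ) = ∑ v, f v * toR (sRef A i γ) v := rfl
    have e2 : ∑ v, f v * ((γ v : ℤ) : ℝ) = ∑ v, f v * toR γ v := rfl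
    rw [e1, e2, key]
    have e3 : toR (sRef A i γ) i - toR γ i = -(∑ z, (A i z : ℝ) * (γ z : ℝ)) := by
      simp only [toR, sRef_apply_self]
      push_cast
      ring
    rw [e3]
    ring
  rw [hL, hR]

lemma coRef_coRef (hA : IsCartan A) (i : V) (f : V → ℝ) :
    coRef A i (coRef A i f) = f := by
  funext v
  unfold coRef
  have : (A i i : ℝ) = 2 := by rw [hA.diag]; norm_num
  simp only [this]
  ring

lemma pairing_comb (f : V → ℝ) {β β' σ : V → ℤ} {c : ℤ}
    (h : ∀ v, β v = β' v + c * σ v) :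
    pairing f β = pairing f β' + (c : ℝ) * pairing f σ := by
  unfold pairing
  rw [Finset.mul_sum, ← Finset.sum_add_distrib]
  refine Finset.sum_congr rfl (fun v _ => ?_)
  rw [h v]
  push_cast
  ring

lemma pairing_smul_toR (f : V → ℝ) {γ δ : V → ℤ} {u : ℝ} (h : toR γ = u • toR δ) :
    pairing f γ = u * pairing f δ := by
  unfold pairing
  rw [Finset.mul_sum]
  refine Finset.sum_congr rfl (fun v _ => ?_)
  have := congrFun h v
  simp only [toR, Pi.smul_apply, smul_eq_mul] at this
  rw [show ((γ v : ℤ) : ℝ) = u * ((δ v : ℤ) : ℝ) from this]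
  ring

lemma sRef_posRoot (hA : IsCartan A) {γ : V → ℤ} (hγ : γ ∈ PosRoots A) (i : V)
    (hpar : ¬ RootParallel γ (simpleRoot i)) : sRef A i γ ∈ PosRoots A := by
  obtain ⟨hroot, hpos⟩ := hγ
  have hr : IsRoot A (sRef A i γ) := IsRoot.reflect i hroot
  rcases isRoot_nonneg_or_nonpos A hA hr with h | h
  · exact ⟨hr, h⟩
  · exfalso
    apply hpar
    refine ⟨(γ i : ℝ), ?_⟩
    funext v
    by_cases hv : v = i
    · subst hv; simp [toR, simpleRoot]
    · have h1 := h v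
      rw [sRef_apply_ne A hv] at h1
      have h2 := hpos v
      have h3 : γ v = 0 := le_antisymm h1 h2
      simp [toR, simpleRoot, hv, h3]

lemma toR_sRef (i : V) (γ : V → ℤ) :
    toR (sRef A i γ) = toR γ - (∑ z, (A i z : ℝ) * (γ z : ℝ)) • toR (simpleRoot i) := by
  funext v
  by_cases hv : v = i
  · subst hv
    have h1 : simpleRoot v v = 1 := by simp [simpleRoot]
    simp only [toR, sRef_apply_self, Pi.sub_apply, Pi.smul_apply, smul_eq_mul, h1]
    push_cast
    ring
  · have h0 : simpleRoot i v = 0 := by simp [simpleRoot, hv]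
    simp only [toR, sRef_apply_ne A hv, Pi.sub_apply, Pi.smul_apply, smul_eq_mul, h0]
    push_cast
    ring

lemma span_sRef (hA : IsCartan A) (i : V) {γ β δ : V → ℤ}
    (h : toR δ ∈ Submodule.span ℝ {toR γ, toR β}) :
    toR (sRef A i δ) ∈ Submodule.span ℝ {toR (sRef A i γ), toR (sRef A i β)} := by
  obtain ⟨c, d, hcd⟩ := Submodule.mem_span_pair.mp h
  apply Submodule.mem_span_pair.mpr
  refine ⟨c, d, ?_⟩
  rw [toR_sRef, toR_sRef, toR_sRef]
  have hsum : (∑ z, (A i z : ℝ) * (δ z : ℝ))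
      = c * (∑ z, (A i z : ℝ) * (γ z : ℝ)) + d * (∑ z, (A i z : ℝ) * (β z : ℝ)) := by
    rw [Finset.mul_sum, Finset.mul_sum, ← Finset.sum_add_distrib]
    refine Finset.sum_congr rfl (fun z _ => ?_)
    have := congrFun hcd z
    simp only [toR, Pi.add_apply, Pi.smul_apply, smul_eq_mul] at this
    rw [show ((δ z : ℤ) : ℝ) = c * ((γ z : ℤ) : ℝ) + d * ((β z : ℤ) : ℝ) from this.symm]
    ring
  rw [hsum, ← hcd]
  funext v
  simp only [Pi.add_apply, Pi.sub_apply, Pi.smul_apply, smul_eq_mul]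
  ring

lemma toR_sRef_simpleRoot (hA : IsCartan A) (i : V) :
    toR (sRef A i (simpleRoot i)) = -(toR (simpleRoot i)) := by
  rw [sRef_simpleRoot_self A hA]
  funext v
  simp [toR]

lemma alpha_span_transfer (hA : IsCartan A) (i : V) {γ β : V → ℤ}
    (h : toR (simpleRoot i) ∈ Submodule.span ℝ {toR (sRef A i γ), toR (sRef A i β)}) :
    toR (simpleRoot i) ∈ Submodule.span ℝ {toR γ, toR β} := by
  have h2 := span_sRef A hA i (δ := simpleRoot i) h
  rw [sRef_sRef A hA, sRef_sRef A hA, toR_sRef_simpleRoot A hA] at h2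
  have := Submodule.neg_mem _ h2
  rwa [neg_neg] at this

lemma parallel_sRef (hA : IsCartan A) (i : V) {δ γ : V → ℤ}
    (h : RootParallel δ γ) : RootParallel (sRef A i δ) (sRef A i γ) := by
  obtain ⟨u, hu⟩ := h
  refine ⟨u, ?_⟩
  rw [toR_sRef, toR_sRef, hu]
  have hsum : (∑ z, (A i z : ℝ) * (δ z : ℝ)) = u * (∑ z, (A i z : ℝ) * (γ z : ℝ)) := by
    rw [Finset.mul_sum]
    refine Finset.sum_congr rfl (fun z _ => ?_)
    have := congrFun hu z
    simp only [toR, Pi.smul_apply, smul_eq_mul] at this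
    rw [show ((δ z : ℤ) : ℝ) = u * ((γ z : ℤ) : ℝ) from this]
    ring
  rw [hsum]
  funext v
  simp only [Pi.sub_apply, Pi.smul_apply, smul_eq_mul]
  ring

lemma parallel_sRef_rev (hA : IsCartan A) (i : V) {δ γ : V → ℤ}
    (h : RootParallel (sRef A i δ) (sRef A i γ)) : RootParallel δ γ := by
  have := parallel_sRef A hA i h
  rwa [sRef_sRef A hA, sRef_sRef A hA] at this

lemma rank2Sub_mem_iff {γ β ρ : V → ℤ} :
    ρ ∈ rank2Sub A γ β ↔ ρ ∈ PosRoots A ∧ toR ρ ∈ Submodule.span ℝ {toR γ, toR β} :=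
  Iff.rfl

lemma rank2Sub_sRef (hA : IsCartan A) (i : V) {γ β : V → ℤ}
    (hU : toR (simpleRoot i) ∉ Submodule.span ℝ {toR γ, toR β}) :
    ∀ δ, δ ∈ rank2Sub A γ β → sRef A i δ ∈ rank2Sub A (sRef A i γ) (sRef A i β) := by
  rintro δ ⟨hδpos, hδspan⟩
  refine ⟨?_, span_sRef A hA i hδspan⟩
  apply sRef_posRoot A hA hδpos i
  rintro ⟨u, hu⟩
  apply hU
  have hune : u ≠ 0 := by
    intro h0; rw [h0, zero_smul] at hu
    exact posRoot_toR_ne A hA hδpos hu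
  have : toR (simpleRoot i) = u⁻¹ • toR δ := by
    rw [hu, smul_smul, inv_mul_cancel₀ hune, one_smul]
  rw [this]
  exact Submodule.smul_mem _ _ hδspan

lemma isBasicIn_sRef (hA : IsCartan A) (i : V) {γ β ρ : V → ℤ}
    (hU : toR (simpleRoot i) ∉ Submodule.span ℝ {toR γ, toR β})
    (h : IsBasicIn (rank2Sub A γ β) ρ) :
    IsBasicIn (rank2Sub A (sRef A i γ) (sRef A i β)) (sRef A i ρ) := by
  obtain ⟨hmem, f, hf0, hfpos⟩ := h
  have hU' : toR (simpleRoot i)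
      ∉ Submodule.span ℝ {toR (sRef A i γ), toR (sRef A i β)} := by
    intro hc; exact hU (alpha_span_transfer A hA i hc)
  refine ⟨rank2Sub_sRef A hA i hU ρ hmem, coRef A i f, ?_, ?_⟩
  · rw [pairing_coRef, sRef_sRef A hA]
    exact hf0
  · intro δ' hδ' hpar'
    have hδ : sRef A i δ' ∈ rank2Sub A γ β := by
      have := rank2Sub_sRef A hA i hU' δ' hδ'
      rwa [sRef_sRef A hA, sRef_sRef A hA] at this
    have hparδ : ¬ RootParallel (sRef A i δ') ρ := by
      intro hp
      apply hpar'
      have := parallel_sRef A hA i hp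
      rwa [sRef_sRef A hA] at this
    have := hfpos (sRef A i δ') hδ hparδ
    rwa [pairing_coRef]

lemma cuts_sRef (hA : IsCartan A) (i : V) {γ β : V → ℤ}
    (hU : toR (simpleRoot i) ∉ Submodule.span ℝ {toR γ, toR β})
    (h : Cuts A γ β) : Cuts A (sRef A i γ) (sRef A i β) := by
  obtain ⟨hb, hnb⟩ := h
  have hU' : toR (simpleRoot i)
      ∉ Submodule.span ℝ {toR (sRef A i γ), toR (sRef A i β)} := by
    intro hc; exact hU (alpha_span_transfer A hA i hc)
  refine ⟨isBasicIn_sRef A hA i hU hb, ?_⟩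
  intro hb'
  apply hnb
  have := isBasicIn_sRef A hA i hU' hb'
  rwa [sRef_sRef A hA, sRef_sRef A hA] at this

lemma image_coRef_eq (hA : IsCartan A) (i : V) {F G : Set (V → ℝ)}
    (h : ∀ f, f ∈ G ↔ coRef A i f ∈ F) : coRef A i '' F = G := by
  ext g
  constructor
  · rintro ⟨f, hf, rfl⟩
    rw [h, coRef_coRef A hA]
    exact hf
  · intro hg
    exact ⟨coRef A i g, (h g).mp hg, coRef_coRef A hA i g⟩

lemma coRef_image_perp (hA : IsCartan A) (i : V) (γ' β' : V → ℤ) :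
    coRef A i '' (perp γ' ∩ perp β')
      = perp (sRef A i γ') ∩ perp (sRef A i β') := by
  apply image_coRef_eq A hA i
  intro f
  simp only [Set.mem_inter_iff, perp, Set.mem_setOf_eq]
  rw [pairing_coRef, pairing_coRef]

lemma mem_span_pair_left (x y : V → ℝ) : x ∈ Submodule.span ℝ {x, y} :=
  Submodule.subset_span (Set.mem_insert x {y})

lemma mem_span_pair_right (x y : V → ℝ) : y ∈ Submodule.span ℝ {x, y} :=
  Submodule.subset_span (Set.mem_insert_of_mem x rfl)

lemma perp_eq_of_span (i : V) {γ β : V → ℤ} {c d : ℝ} (hc : c ≠ 0)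
    (hcomb : c • toR γ + d • toR β = toR (simpleRoot i)) :
    perp γ ∩ perp β = perp (simpleRoot i) ∩ perp β := by
  have key : ∀ f : V → ℝ, pairing f (simpleRoot i)
      = c * pairing f γ + d * pairing f β := by
    intro f
    unfold pairing
    rw [Finset.mul_sum, Finset.mul_sum, ← Finset.sum_add_distrib]
    refine Finset.sum_congr rfl (fun v _ => ?_)
    have := congrFun hcomb v
    simp only [toR, Pi.add_apply, Pi.smul_apply, smul_eq_mul] at this
    rw [show ((simpleRoot i v : ℤ) : ℝ)
      = c * ((γ v : ℤ) : ℝ) + d * ((β v : ℤ) : ℝ) from this.symm]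
    ring
  ext f
  simp only [Set.mem_inter_iff, perp, Set.mem_setOf_eq]
  constructor
  · rintro ⟨h1, h2⟩
    refine ⟨?_, h2⟩
    rw [key, h1, h2]; ring
  · rintro ⟨h1, h2⟩
    refine ⟨?_, h2⟩
    have := key f
    rw [h1, h2] at this
    have hcγ : c * pairing f γ = 0 := by linarith
    exact (mul_eq_zero.mp hcγ).resolve_left hc |>.symm ▸ rfl

lemma cuts_not_parallel (hA : IsCartan A) {γ β : V → ℤ} (h : Cuts A γ β)
    (hγpos : γ ∈ PosRoots A) (hβpos : β ∈ PosRoots A) : ¬ RootParallel γ β := by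
  rintro ⟨u, hu⟩
  obtain ⟨hmem, f, hf0, hfpos⟩ := h.1
  apply h.2
  have hune : u ≠ 0 := by
    intro h0; rw [h0, zero_smul] at hu
    exact posRoot_toR_ne A hA hγpos hu
  refine ⟨⟨hβpos, mem_span_pair_right _ _⟩, f, ?_, ?_⟩
  · have := pairing_smul_toR f hu
    rw [hf0] at this
    have := this.symm
    rcases mul_eq_zero.mp this with h | h
    · exact absurd h hune
    · exact h
  · intro δ hδ hpar
    apply hfpos δ hδ
    rintro ⟨w, hw⟩
    apply hpar
    exact ⟨w * u, by rw [hw, hu, smul_smul]⟩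


/-! ### Lemmas specific to the covering pair β = sᵢ β' -/

variable {i : V} {β β' : V → ℤ}

lemma beta_comb (h1 : β = sRef A i β') :
    ∀ v, β v = β' v + (β i - β' i) * simpleRoot i v := by
  intro v
  by_cases hv : v = i
  · subst hv; simp [simpleRoot]
  · rw [h1, sRef_apply_ne A hv]
    simp [simpleRoot, hv]

lemma beta_npar_alpha (hA : IsCartan A) (hβ' : β' ∈ PosRoots A)
    (h1 : β = sRef A i β') (h2 : β' i < β i) :
    ¬ RootParallel β (simpleRoot i) := by
  rintro ⟨u, hu⟩
  have hoff : ∀ v, v ≠ i → β v = 0 := by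
    intro v hv
    have := congrFun hu v
    simp only [toR, Pi.smul_apply, simpleRoot, if_neg hv, smul_eq_mul] at this
    exact_mod_cast by simpa using this
  have hoff' : ∀ v, v ≠ i → β' v = 0 := by
    intro v hv
    have hc := beta_comb A h1 v
    simp only [simpleRoot, if_neg hv, mul_zero, add_zero] at hc
    rw [← hc]; exact hoff v hv
  have hsum : ∑ z, A i z * β' z = A i i * β' i := by
    rw [Finset.sum_eq_single i]
    · intro z _ hz; rw [hoff' z hz]; ring
    · intro h; exact absurd (Finset.mem_univ i) h
  have hbi : β i = -β' i := by
    have := congrFun h1 i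
    rw [sRef_apply_self, hsum, hA.diag] at this
    omega
  have := hβ'.2 i
  omega

lemma beta'_npar_alpha (hA : IsCartan A) (hβ' : β' ∈ PosRoots A)
    (h1 : β = sRef A i β') (h2 : β' i < β i) :
    ¬ RootParallel β' (simpleRoot i) := by
  rintro ⟨u, hu⟩
  have hoff' : ∀ v, v ≠ i → β' v = 0 := by
    intro v hv
    have := congrFun hu v
    simp only [toR, Pi.smul_apply, simpleRoot, if_neg hv, smul_eq_mul] at this
    exact_mod_cast by simpa using this
  apply beta_npar_alpha A hA hβ' h1 h2
  refine ⟨(β i : ℝ), funext fun v => ?_⟩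
  by_cases hv : v = i
  · subst hv; simp [toR, simpleRoot]
  · have hc := beta_comb A h1 v
    simp only [simpleRoot, if_neg hv, mul_zero, add_zero] at hc
    have hβv : β v = 0 := by rw [hc]; exact hoff' v hv
    rw [show toR β v = ((β v : ℤ) : ℝ) from rfl, hβv]
    simp [toR, simpleRoot, hv]

lemma beta'_npar_beta (hA : IsCartan A) (hβ' : β' ∈ PosRoots A)
    (h1 : β = sRef A i β') (h2 : β' i < β i) :
    ¬ RootParallel β' β := by
  rintro ⟨u, hu⟩
  by_cases hu1 : u = 1
  · subst hu1
    have hpt := congrFun hu i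
    simp only [toR, Pi.smul_apply, smul_eq_mul, one_mul] at hpt
    have : β' i = β i := by exact_mod_cast hpt
    omega
  · apply beta_npar_alpha A hA hβ' h1 h2
    have hoff : ∀ v, v ≠ i → β v = 0 := by
      intro v hv
      have hpt := congrFun hu v
      simp only [toR, Pi.smul_apply, smul_eq_mul] at hpt
      have hc := beta_comb A h1 v
      simp only [simpleRoot, if_neg hv, mul_zero, add_zero] at hc
      rw [← hc] at hpt
      have hz : ((β v : ℤ) : ℝ) * (1 - u) = 0 := by linarith
      rcases mul_eq_zero.mp hz with h | h
      · exact_mod_cast h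
      · exfalso; apply hu1; linarith
    refine ⟨(β i : ℝ), funext fun v => ?_⟩
    by_cases hv : v = i
    · subst hv; simp [toR, simpleRoot]
    · rw [show toR β v = ((β v : ℤ) : ℝ) from rfl, hoff v hv]
      simp [toR, simpleRoot, hv]

lemma alpha_posroot (i : V) : simpleRoot i ∈ PosRoots A :=
  ⟨IsRoot.simple i, fun v => by by_cases h : v = i <;> simp [simpleRoot, h]⟩

lemma alpha_npar_beta (hA : IsCartan A) (hβ' : β' ∈ PosRoots A)
    (h1 : β = sRef A i β') (h2 : β' i < β i) :
    ¬ RootParallel (simpleRoot i) β := fun hp =>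
  beta_npar_alpha A hA hβ' h1 h2
    (rootParallel_symm (posRoot_toR_ne A hA (alpha_posroot A i)) hp)

lemma alpha_npar_beta' (hA : IsCartan A) (hβ' : β' ∈ PosRoots A)
    (h1 : β = sRef A i β') (h2 : β' i < β i) :
    ¬ RootParallel (simpleRoot i) β' := fun hp =>
  beta'_npar_alpha A hA hβ' h1 h2
    (rootParallel_symm (posRoot_toR_ne A hA (alpha_posroot A i)) hp)

lemma span_beta' (h1 : β = sRef A i β') :
    toR β' ∈ Submodule.span ℝ {toR (simpleRoot i), toR β} := by
  apply Submodule.mem_span_pair.mpr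
  refine ⟨-((β i - β' i : ℤ) : ℝ), 1, funext fun v => ?_⟩
  have hc := beta_comb A h1 v
  simp only [Pi.add_apply, Pi.smul_apply, smul_eq_mul, one_mul, toR]
  rw [show ((β v : ℤ) : ℝ) = ((β' v + (β i - β' i) * simpleRoot i v : ℤ) : ℝ) from
    congrArg (fun n : ℤ => (n : ℝ)) hc]
  push_cast
  ring

lemma alpha_cuts (hA : IsCartan A) (hβ' : β' ∈ PosRoots A)
    (h1 : β = sRef A i β') (h2 : β' i < β i) : Cuts A (simpleRoot i) β := by
  constructor
  · refine ⟨⟨alpha_posroot A i, mem_span_pair_left _ _⟩,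
      (fun v => if v = i then 0 else 1), ?_, ?_⟩
    · unfold pairing
      rw [Finset.sum_eq_single i]
      · simp
      · intro z _ hz; simp [simpleRoot, hz]
      · intro h; exact absurd (Finset.mem_univ i) h
    · intro δ hδ hpar
      obtain ⟨⟨hδr, hδnn⟩, hδspan⟩ := hδ
      have hterm : ∀ v, (if v = i then (0:ℝ) else 1) * ((δ v : ℤ) : ℝ)
          = if v = i then 0 else ((δ v : ℤ) : ℝ) := by
        intro v; by_cases h : v = i <;> simp [h]
      unfold pairing
      rw [Finset.sum_congr rfl (fun v _ => hterm v)]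
      rw [← Finset.sum_erase (f := fun v => if v = i then (0:ℝ) else ((δ v : ℤ) : ℝ))
        (a := i) Finset.univ (by simp)]
      rw [Finset.sum_congr rfl
        (fun v hv => if_neg (Finset.ne_of_mem_erase hv))]
      have hnn : ∀ v ∈ Finset.univ.erase i, (0:ℝ) ≤ ((δ v : ℤ) : ℝ) := by
        intro v _; exact_mod_cast hδnn v
      have hle := Finset.sum_nonneg hnn
      rcases eq_or_lt_of_le hle with heq | hlt
      · exfalso
        have hall := (Finset.sum_eq_zero_iff_of_nonneg hnn).mp heq.symm
        apply hpar
        refine ⟨((δ i : ℤ) : ℝ), funext fun v => ?_⟩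
        by_cases hv : v = i
        · subst hv; simp [toR, simpleRoot]
        · have h0 : ((δ v : ℤ) : ℝ) = 0 :=
            hall v (Finset.mem_erase.mpr ⟨hv, Finset.mem_univ v⟩)
          rw [show toR δ v = ((δ v : ℤ) : ℝ) from rfl, h0]
          simp [toR, simpleRoot, hv]
      · exact hlt
  · rintro ⟨hmemβ, f, hf0, hfpos⟩
    have hβ'mem : β' ∈ rank2Sub A (simpleRoot i) β :=
      ⟨hβ', span_beta' A h1⟩
    have hαmem : simpleRoot i ∈ rank2Sub A (simpleRoot i) β :=
      ⟨alpha_posroot A i, mem_span_pair_left _ _⟩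
    have p1 : 0 < pairing f β' :=
      hfpos β' hβ'mem (beta'_npar_beta A hA hβ' h1 h2)
    have p2 : 0 < pairing f (simpleRoot i) :=
      hfpos _ hαmem (alpha_npar_beta A hA hβ' h1 h2)
    have hcomb := pairing_comb f (beta_comb A h1)
    rw [hf0] at hcomb
    have hcpos : (0:ℝ) < ((β i - β' i : ℤ) : ℝ) := by exact_mod_cast by omega
    nlinarith

lemma perp_sRef_simpleRoot (hA : IsCartan A) (i : V) :
    perp (sRef A i (simpleRoot i)) = perp (simpleRoot i) := by
  ext f
  simp only [perp, Set.mem_setOf_eq]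
  have hp : pairing f (sRef A i (simpleRoot i)) = (-1) * pairing f (simpleRoot i) := by
    apply pairing_smul_toR
    rw [toR_sRef_simpleRoot A hA]
    funext v; simp
  rw [hp]
  constructor
  · intro h; linarith
  · intro h; rw [h]; ring

end FrShard


open FrShard

/-- if `β = sᵢ β'` with `β - β'` a positive multiple of `αᵢ`, then the
fractures of `β^⊥` are `αᵢ^⊥ ∩ β^⊥` together with the images under `sᵢ` of the
fractures of `(β')^⊥`. -/
theorem fracture_induction_step {V : Type*} [Fintype V] [DecidableEq V]
    (A : V → V → ℤ) (hA : IsCartan A) (i : V) (β β' : V → ℤ)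
    (hβ' : β' ∈ PosRoots A) (hβ : β ∈ PosRoots A)
    (h1 : β = sRef A i β') (h2 : β' i < β i) :
    {F | IsFracture A β F} =
      insert (perp (simpleRoot i) ∩ perp β)
        ((fun F => coRef A i '' F) '' {F | IsFracture A β' F}) := by
  have hsβ : sRef A i β = β' := by rw [h1, sRef_sRef A hA]
  ext F
  simp only [Set.mem_setOf_eq, Set.mem_insert_iff, Set.mem_image]
  constructor
  · rintro ⟨γ, hγpos, hcuts, rfl⟩
    by_cases hU : toR (simpleRoot i) ∈ Submodule.span ℝ {toR γ, toR β}
    · left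
      obtain ⟨cc, dd, hcd⟩ := Submodule.mem_span_pair.mp hU
      have hccne : cc ≠ 0 := by
        intro h0
        rw [h0, zero_smul, zero_add] at hcd
        exact alpha_npar_beta A hA hβ' h1 h2 ⟨dd, hcd.symm⟩
      exact perp_eq_of_span i hccne hcd
    · right
      have hγnpar : ¬ RootParallel γ (simpleRoot i) := by
        rintro ⟨u, hu⟩
        apply hU
        have hune : u ≠ 0 := by
          intro h0; rw [h0, zero_smul] at hu
          exact posRoot_toR_ne A hA hγpos hu
        have he : toR (simpleRoot i) = u⁻¹ • toR γ := by
          rw [hu, smul_smul, inv_mul_cancel₀ hune, one_smul]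
        rw [he]
        exact Submodule.smul_mem _ _ (mem_span_pair_left _ _)
      refine ⟨perp (sRef A i γ) ∩ perp β',
        ⟨sRef A i γ, sRef_posRoot A hA hγpos i hγnpar, ?_, rfl⟩, ?_⟩
      · have hc := cuts_sRef A hA i hU hcuts
        rwa [hsβ] at hc
      · show coRef A i '' (perp (sRef A i γ) ∩ perp β') = perp γ ∩ perp β
        rw [coRef_image_perp A hA i (sRef A i γ) β', sRef_sRef A hA, ← h1]
  · rintro (rfl | ⟨F', ⟨γ', hγ'pos, hγ'cuts, rfl⟩, rfl⟩)
    · exact ⟨simpleRoot i, alpha_posroot A i, alpha_cuts A hA hβ' h1 h2, rfl⟩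
    · show IsFracture A β (coRef A i '' (perp γ' ∩ perp β'))
      by_cases hU' : toR (simpleRoot i) ∈ Submodule.span ℝ {toR γ', toR β'}
      · obtain ⟨cc, dd, hcd⟩ := Submodule.mem_span_pair.mp hU'
        have hccne : cc ≠ 0 := by
          intro h0
          rw [h0, zero_smul, zero_add] at hcd
          exact alpha_npar_beta' A hA hβ' h1 h2 ⟨dd, hcd.symm⟩
        have hFeq : perp γ' ∩ perp β' = perp (simpleRoot i) ∩ perp β' :=
          perp_eq_of_span i hccne hcd
        rw [hFeq, coRef_image_perp A hA i (simpleRoot i) β',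
          perp_sRef_simpleRoot A hA i, ← h1]
        exact ⟨simpleRoot i, alpha_posroot A i, alpha_cuts A hA hβ' h1 h2, rfl⟩
      · have hγ'npar : ¬ RootParallel γ' (simpleRoot i) := by
          rintro ⟨u, hu⟩
          apply hU'
          have hune : u ≠ 0 := by
            intro h0; rw [h0, zero_smul] at hu
            exact posRoot_toR_ne A hA hγ'pos hu
          have he : toR (simpleRoot i) = u⁻¹ • toR γ' := by
            rw [hu, smul_smul, inv_mul_cancel₀ hune, one_smul]
          rw [he]
          exact Submodule.smul_mem _ _ (mem_span_pair_left _ _)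
        refine ⟨sRef A i γ', sRef_posRoot A hA hγ'pos i hγ'npar, ?_, ?_⟩
        · have hc := cuts_sRef A hA i hU' hγ'cuts
          rwa [← h1] at hc
        · rw [coRef_image_perp A hA i γ' β', ← h1]
end
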